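/- arXiv:1410.4361 — 13 statements merged into one kernel-verified Lean document; each statement's English description precedes it below -/
import Mathlib

section
/- For all integers k and t with 2 ≤ k ≤ t, the maximum number of edges among the bicliques (complete bipartite subgraphs) of the bi-intersection graph I_{2t}(k,k) equals C(t,k)², i.e., B(I_{2t}(k,k)) = C(t,k)². -/
-- step lemma: moving towards the middle increases the product
lemma step_lemma (k s u : ℕ) (h : s + 1 ≤ u) :
    Nat.choose s k * Nat.choose u k ≤ Nat.choose (s+1) k * Nat.choose (u-1) k := by
  rcases lt_or_ge s k with hs | hs
  · simp [Nat.choose_eq_zero_of_lt hs]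
  · have hu : 0 < u := lt_of_le_of_lt (Nat.zero_le s) h
    have hPpos : 0 < (s + 1 - k) * u := by
      apply Nat.mul_pos <;> omega
    apply Nat.le_of_mul_le_mul_right _ hPpos
    have h1 : Nat.choose s k * (s + 1) = Nat.choose (s+1) k * (s + 1 - k) :=
      Nat.choose_mul_succ_eq s k
    have h2 : Nat.choose (u-1) k * u = Nat.choose u k * (u - k) := by
      have := Nat.choose_mul_succ_eq (u-1) k
      rw [Nat.sub_add_cancel hu] at this
      rw [this]
    have key : (s + 1 - k) * u ≤ (s + 1) * (u - k) := by
      have e1 : (s + 1 - k) * u = (s+1) * u - k * u := by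
        rw [Nat.sub_mul]
      have e2 : (s + 1) * (u - k) = (s+1) * u - (s+1) * k := by
        rw [Nat.mul_sub]
      rw [e1, e2]
      have : (s+1) * k ≤ k * u := by
        rw [mul_comm (s+1) k]
        exact Nat.mul_le_mul_left k h
      omega
    calc Nat.choose s k * Nat.choose u k * ((s + 1 - k) * u)
        ≤ Nat.choose s k * Nat.choose u k * ((s + 1) * (u - k)) :=
          Nat.mul_le_mul_left _ key
      _ = (Nat.choose s k * (s+1)) * (Nat.choose u k * (u - k)) := by ring
      _ = (Nat.choose (s+1) k * (s + 1 - k)) * (Nat.choose (u-1) k * u) := by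
          rw [h1, h2]
      _ = Nat.choose (s+1) k * Nat.choose (u-1) k * ((s + 1 - k) * u) := by ring

lemma mono_lemma (k t : ℕ) : ∀ d s, s + d = t →
    Nat.choose s k * Nat.choose (2*t - s) k ≤ Nat.choose t k ^ 2 := by
  intro d
  induction d with
  | zero =>
      intro s hs
      have hst : s = t := by omega
      rw [hst, show 2 * t - t = t from by omega, sq]
  | succ d ih =>
      intro s hs
      have h1 : s + 1 ≤ 2 * t - s := by omega
      calc Nat.choose s k * Nat.choose (2*t - s) k
          ≤ Nat.choose (s+1) k * Nat.choose (2*t - s - 1) k := step_lemma k s _ h1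
        _ = Nat.choose (s+1) k * Nat.choose (2*t - (s+1)) k := by
            rw [Nat.sub_sub]
        _ ≤ Nat.choose t k ^ 2 := ih (s+1) (by omega)

lemma product_bound (k t s : ℕ) (hs : s ≤ 2 * t) :
    Nat.choose s k * Nat.choose (2*t - s) k ≤ Nat.choose t k ^ 2 := by
  rcases le_or_gt s t with h | h
  · exact mono_lemma k t (t - s) s (by omega)
  · have h2 : 2 * t - (2*t - s) = s := by omega
    have := mono_lemma k t (t - (2*t - s)) (2*t - s) (by omega)
    rw [h2] at this
    rwa [mul_comm]

theorem stmt_0 (k t : ℕ) (hk : 2 ≤ k) (hkt : k ≤ t) :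
    IsGreatest
      {m : ℕ | ∃ X Y : Finset {A : Finset (Fin (2 * t)) // A.card = k},
        (∀ a ∈ X, ∀ b ∈ Y, Disjoint a.1 b.1) ∧ m = X.card * Y.card}
      (Nat.choose t k ^ 2) := by
  constructor
  · -- membership: take all k-subsets of the lower half and of the upper half
    classical
    set S : Finset (Fin (2 * t)) := Finset.univ.filter (fun i => (i : ℕ) < t) with hS
    have hScard : S.card = t := by
      have himg : S = Finset.image (fun i : Fin t => Fin.castLE (by omega) i) Finset.univ := by
        ext i
        simp only [hS, Finset.mem_filter, Finset.mem_univ, true_and, Finset.mem_image]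
        constructor
        · intro hi
          exact ⟨⟨(i : ℕ), hi⟩, by simp [Fin.ext_iff]⟩
        · rintro ⟨j, rfl⟩
          exact j.2
      rw [himg, Finset.card_image_of_injective _ (Fin.castLE_injective _), Finset.card_univ,
        Fintype.card_fin]
    have hSccard : Sᶜ.card = t := by
      rw [Finset.card_compl, Fintype.card_fin, hScard]
      omega
    refine ⟨Finset.univ.filter (fun a => a.1 ⊆ S),
           Finset.univ.filter (fun b => b.1 ⊆ Sᶜ), ?_, ?_⟩
    · intro a ha b hb
      simp only [Finset.mem_filter, Finset.mem_univ, true_and] at ha hb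
      exact Finset.disjoint_left.2 fun x hxa hxb => by
        have := ha hxa
        have := hb hxb
        simp_all [Finset.mem_compl]
        omega
    · have cardX : ∀ (T : Finset (Fin (2*t))), T.card = t →
          (Finset.univ.filter
            (fun a : {A : Finset (Fin (2 * t)) // A.card = k} => a.1 ⊆ T)).card
            = Nat.choose t k := by
        intro T hT
        have hpc := Finset.card_powersetCard k T
        rw [hT] at hpc
        rw [← hpc]
        apply Finset.card_bij (fun a _ => a.1)
        · intro a ha
          simp only [Finset.mem_filter, Finset.mem_univ, true_and] at ha
          rw [Finset.mem_powersetCard]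
          exact ⟨ha, a.2⟩
        · intro a _ b _ h
          exact Subtype.ext h
        · intro A hA
          rw [Finset.mem_powersetCard] at hA
          exact ⟨⟨A, hA.2⟩, by simp [hA.1], rfl⟩
      rw [cardX S hScard, cardX Sᶜ hSccard, sq]
  · -- upper bound
    rintro m ⟨X, Y, hXY, rfl⟩
    classical
    rcases Finset.eq_empty_or_nonempty X with rfl | hXne
    · simp
    rcases Finset.eq_empty_or_nonempty Y with rfl | hYne
    · simp
    set U : Finset (Fin (2 * t)) := X.biUnion (fun a => a.1) with hU
    have hXsub : ∀ a ∈ X, a.1 ⊆ U := fun a ha => Finset.subset_biUnion_of_mem _ ha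
    have hYsub : ∀ b ∈ Y, b.1 ⊆ Uᶜ := by
      intro b hb
      intro x hx
      rw [Finset.mem_compl]
      intro hxU
      rw [hU, Finset.mem_biUnion] at hxU
      obtain ⟨a, ha, hxa⟩ := hxU
      exact Finset.disjoint_left.1 (hXY a ha b hb) hxa hx
    have hXcard : X.card ≤ Nat.choose U.card k := by
      rw [← Finset.card_powersetCard k U]
      apply Finset.card_le_card_of_injOn (fun a => a.1)
      · intro a ha
        rw [Finset.mem_coe, Finset.mem_powersetCard]
        exact ⟨hXsub a ha, a.2⟩
      · intro a _ b _ h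
        exact Subtype.ext h
    have hYcard : Y.card ≤ Nat.choose (2 * t - U.card) k := by
      have : Uᶜ.card = 2 * t - U.card := by
        rw [Finset.card_compl, Fintype.card_fin]
      rw [← this, ← Finset.card_powersetCard k Uᶜ]
      apply Finset.card_le_card_of_injOn (fun b => b.1)
      · intro b hb
        rw [Finset.mem_coe, Finset.mem_powersetCard]
        exact ⟨hYsub b hb, b.2⟩
      · intro a _ b _ h
        exact Subtype.ext h
    calc X.card * Y.card ≤ Nat.choose U.card k * Nat.choose (2 * t - U.card) k :=
          Nat.mul_le_mul hXcard hYcard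
      _ ≤ Nat.choose t k ^ 2 := by
          apply product_bound
          simpa using Finset.card_le_univ U
end

section
/- For all integers k and t with 2 ≤ k ≤ t, the maximum number of edges among the bicliques (complete bipartite subgraphs) of the Kneser graph KG(2t,k) equals C(t,k)², i.e., B(KG(2t,k)) = C(t,k)². -/
/-!
STATEMENT 1: For all integers k and t with 2 ≤ k ≤ t, the maximum number of
edges among the bicliques (complete bipartite subgraphs) of the Kneser graph
KG(2t,k) equals C(t,k)².

The Kneser graph `KG(2t,k)` has as vertices all k-subsets of {1,…,2t}, two of
them being adjacent iff they are disjoint.  A biclique (complete bipartite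
subgraph) is given by two disjoint sets `X`, `Y` of vertices such that every
vertex of `X` is adjacent to every vertex of `Y`; its number of edges is
`|X| * |Y|`.
-/

-- (n+1) * C(n,k) = C(n+1,k) * (n+1-k)
lemma aux_succ_choose (n k : ℕ) : (n+1) * Nat.choose n k = Nat.choose (n+1) k * (n+1-k) := by
  have h1 := Nat.add_one_mul_choose_eq n k
  have h2 := Nat.choose_succ_right_eq (n+1) k
  exact h1.trans h2

lemma aux_step (k a b : ℕ) (h : a ≤ b) :
    Nat.choose a k * Nat.choose (b+1) k ≤ Nat.choose (a+1) k * Nat.choose b k := by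
  rcases le_or_gt k a with hka | hka
  · have hkb : k ≤ b := hka.trans h
    have hpos : 0 < (a+1) * (b+1-k) := by
      have : 0 < b + 1 - k := by omega
      positivity
    apply Nat.le_of_mul_le_mul_right _ hpos
    have e1 : Nat.choose a k * Nat.choose (b+1) k * ((a+1) * (b+1-k))
        = ((a+1) * Nat.choose a k) * (Nat.choose (b+1) k * (b+1-k)) := by ring
    have e2 : (a+1) * Nat.choose a k = Nat.choose (a+1) k * (a+1-k) := aux_succ_choose a k
    have e3 : (b+1) * Nat.choose b k = Nat.choose (b+1) k * (b+1-k) := aux_succ_choose b k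
    rw [e1, e2, ← e3]
    have e4 : Nat.choose (a+1) k * (a+1-k) * ((b+1) * Nat.choose b k)
        = Nat.choose (a+1) k * Nat.choose b k * ((a+1-k) * (b+1)) := by ring
    have e5 : Nat.choose (a+1) k * Nat.choose b k * ((a+1) * (b+1-k))
        = Nat.choose (a+1) k * Nat.choose b k * ((a+1) * (b+1-k)) := rfl
    rw [e4]
    apply Nat.mul_le_mul_left
    have : (a+1-k) * (b+1) + k*(b+1) = (a+1)*(b+1) := by
      have : a+1-k+k = a+1 := by omega
      calc (a+1-k) * (b+1) + k*(b+1) = (a+1-k+k)*(b+1) := by ring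
        _ = (a+1)*(b+1) := by rw [this]
    have h2 : (a+1) * (b+1-k) + (a+1)*k = (a+1)*(b+1) := by
      have hh : b+1-k+k = b+1 := by omega
      calc (a+1) * (b+1-k) + (a+1)*k = (a+1)*(b+1-k+k) := by ring
        _ = (a+1)*(b+1) := by rw [hh]
    nlinarith [Nat.mul_le_mul_right (b+1) (show k*(a+1) ≤ k*(b+1) from Nat.mul_le_mul_left k (by omega))]
  · have : Nat.choose a k = 0 := Nat.choose_eq_zero_of_lt hka
    simp [this]

lemma aux_ineq (k t : ℕ) : ∀ d a, a + d = t → a ≤ t →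
    Nat.choose a k * Nat.choose (2*t - a) k ≤ Nat.choose t k ^ 2 := by
  intro d
  induction d with
  | zero =>
    intro a ha _
    have : a = t := by omega
    subst this
    have : 2*a - a = a := by omega
    rw [this, sq]
  | succ d ih =>
    intro a ha hat
    have h1 : 2*t - a = (2*t - a - 1) + 1 := by omega
    rw [h1]
    calc Nat.choose a k * Nat.choose ((2*t-a-1)+1) k
        ≤ Nat.choose (a+1) k * Nat.choose (2*t-a-1) k :=
          aux_step k a (2*t-a-1) (by omega)
      _ = Nat.choose (a+1) k * Nat.choose (2*t-(a+1)) k := by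
          rw [show 2*t-a-1 = 2*t-(a+1) by omega]
      _ ≤ Nat.choose t k ^ 2 := ih (a+1) (by omega) (by omega)

lemma aux_main_ineq (k t a b : ℕ) (hab : a + b ≤ 2*t) :
    Nat.choose a k * Nat.choose b k ≤ Nat.choose t k ^ 2 := by
  rcases le_total a t with h | h
  · calc Nat.choose a k * Nat.choose b k
        ≤ Nat.choose a k * Nat.choose (2*t - a) k :=
          Nat.mul_le_mul_left _ (Nat.choose_le_choose k (by omega))
      _ ≤ Nat.choose t k ^ 2 := aux_ineq k t (t - a) a (by omega) h
  · have hb : b ≤ t := by omega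
    calc Nat.choose a k * Nat.choose b k
        = Nat.choose b k * Nat.choose a k := mul_comm _ _
      _ ≤ Nat.choose b k * Nat.choose (2*t - b) k :=
          Nat.mul_le_mul_left _ (Nat.choose_le_choose k (by omega))
      _ ≤ Nat.choose t k ^ 2 := aux_ineq k t (t - b) b (by omega) hb

theorem stmt_1 (k t : ℕ) (hk : 2 ≤ k) (hkt : k ≤ t) :
    IsGreatest
      {m : ℕ | ∃ X Y : Finset {A : Finset (Fin (2 * t)) // A.card = k},
        Disjoint X Y ∧ (∀ a ∈ X, ∀ b ∈ Y, Disjoint a.1 b.1) ∧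
        m = X.card * Y.card}
      (Nat.choose t k ^ 2) := by
  constructor
  · -- membership: the construction
    set L : Finset (Fin (2*t)) := Finset.univ.filter (fun i => i.1 < t) with hL
    set R : Finset (Fin (2*t)) := Finset.univ.filter (fun i => t ≤ i.1) with hR
    have hLR : Disjoint L R := by
      rw [Finset.disjoint_left]
      intro x hx hx'
      simp [hL, hR] at hx hx'
      omega
    have hLcard : L.card = t := by
      have : L = Finset.Iio (⟨t, by omega⟩ : Fin (2*t)) := by
        ext x; simp [hL, Fin.lt_def]
      rw [this, Fin.card_Iio]
    have hRcard : R.card = t := by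
      have huniv : L ∪ R = Finset.univ := by
        ext x; simp [hL, hR]; omega
      have : L.card + R.card = 2*t := by
        rw [← Finset.card_union_of_disjoint hLR, huniv]
        simp
      omega
    refine ⟨Finset.univ.filter (fun A => A.1 ⊆ L), Finset.univ.filter (fun A => A.1 ⊆ R), ?_, ?_, ?_⟩
    · rw [Finset.disjoint_left]
      intro A hA hA'
      simp at hA hA'
      have : A.1 ⊆ L ∩ R := Finset.subset_inter hA hA'
      rw [Finset.disjoint_iff_inter_eq_empty.mp hLR] at this
      have := Finset.card_le_card this
      simp [A.2] at this
      omega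
    · intro a ha b hb
      simp at ha hb
      exact Finset.disjoint_of_subset_left ha (Finset.disjoint_of_subset_right hb hLR)
    · have key : ∀ (S : Finset (Fin (2*t))),
          (Finset.univ.filter (fun A : {A : Finset (Fin (2*t)) // A.card = k} => A.1 ⊆ S)).card
            = (S.powersetCard k).card := by
        intro S
        apply Finset.card_bij (fun A _ => A.1)
        · intro A hA
          simp at hA
          rw [Finset.mem_powersetCard]
          exact ⟨hA, A.2⟩
        · intro A₁ _ A₂ _ h
          exact Subtype.ext h
        · intro B hB
          rw [Finset.mem_powersetCard] at hB
          exact ⟨⟨B, hB.2⟩, by simp [hB.1], rfl⟩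
      rw [key L, key R, Finset.card_powersetCard, Finset.card_powersetCard, hLcard, hRcard, sq]
  · -- upper bound
    rintro m ⟨X, Y, hXY, hcross, rfl⟩
    rcases Finset.eq_empty_or_nonempty X with hXe | hXne
    · simp [hXe]
    rcases Finset.eq_empty_or_nonempty Y with hYe | hYne
    · simp [hYe]
    set S : Finset (Fin (2*t)) := X.sup (fun a => a.1) with hS
    set T : Finset (Fin (2*t)) := Y.sup (fun b => b.1) with hT
    have hST : Disjoint S T := by
      rw [Finset.disjoint_left]
      intro x hx hx'
      rw [hS, Finset.mem_sup] at hx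
      rw [hT, Finset.mem_sup] at hx'
      obtain ⟨a, ha, hxa⟩ := hx
      obtain ⟨b, hb, hxb⟩ := hx'
      exact Finset.disjoint_left.mp (hcross a ha b hb) hxa hxb
    have hXc : X.card ≤ Nat.choose S.card k := by
      rw [← Finset.card_powersetCard]
      calc X.card = (X.image (fun a => a.1)).card :=
            (Finset.card_image_of_injective X Subtype.val_injective).symm
        _ ≤ (S.powersetCard k).card := by
            apply Finset.card_le_card
            intro B hB
            simp only [Finset.mem_image] at hB
            obtain ⟨a, ha, rfl⟩ := hB
            rw [Finset.mem_powersetCard]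
            exact ⟨Finset.le_sup ha, a.2⟩
    have hYc : Y.card ≤ Nat.choose T.card k := by
      rw [← Finset.card_powersetCard]
      calc Y.card = (Y.image (fun b => b.1)).card :=
            (Finset.card_image_of_injective Y Subtype.val_injective).symm
        _ ≤ (T.powersetCard k).card := by
            apply Finset.card_le_card
            intro B hB
            simp only [Finset.mem_image] at hB
            obtain ⟨b, hb, rfl⟩ := hB
            rw [Finset.mem_powersetCard]
            exact ⟨Finset.le_sup hb, b.2⟩
    have hsum : S.card + T.card ≤ 2*t := by
      rw [← Finset.card_union_of_disjoint hST]
      calc (S ∪ T).card ≤ Fintype.card (Fin (2*t)) := Finset.card_le_univ _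
        _ = 2*t := Fintype.card_fin _
    calc X.card * Y.card ≤ Nat.choose S.card k * Nat.choose T.card k :=
          Nat.mul_le_mul hXc hYc
      _ ≤ Nat.choose t k ^ 2 := aux_main_ineq k t S.card T.card hsum
end

section
/- Let 1 ≤ k ≤ t be integers and d = C(2t−2k, t−k). Then the minimum number of points of a (k,k;d)-cover-free family having 2t blocks equals C(2t,t), i.e., N((k,k;d), 2t) = C(2t,t). -/
/-- There exists an `(r,w;d)`-cover-free family with `n` points and `t` blocks:
a family `B` of `t` subsets of an `n`-point set such that for any disjoint
index sets `L`, `M` with `|L| = r` and `|M| = w`,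
`|(⋂_{l∈L} B_l) \ (⋃_{m∈M} B_m)| ≥ d`. -/
def ExistsCFF (r w d n t : ℕ) : Prop :=
  ∃ B : Fin t → Finset (Fin n),
    ∀ L M : Finset (Fin t), Disjoint L M → L.card = r → M.card = w →
      d ≤ ((L.inf B) \ (M.sup B)).card

/-- `N((r,w;d),t)`: the minimum number of points of an `(r,w;d)`-CFF with `t`
blocks. -/
noncomputable def NCFF (r w d t : ℕ) : ℕ :=
  sInf {n : ℕ | ExistsCFF r w d n t}

/-!
STATEMENT 2: Let 1 ≤ k ≤ t be integers and d = C(2t−2k, t−k).  Then the minimum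
number of points of a (k,k;d)-cover-free family having 2t blocks equals
C(2t,t), i.e. N((k,k;d), 2t) = C(2t,t).
-/


-- trinomial-type identities
lemma choose_pair (n a b : ℕ) (h : a + b ≤ n) :
    n.choose a * (n - a).choose b = n.choose b * (n - b).choose a := by
  have ha : a ≤ n := le_trans (Nat.le_add_right _ _) h
  have hb : b ≤ n := le_trans (Nat.le_add_left _ _) h
  have hba : b ≤ n - a := Nat.le_sub_of_add_le (by omega)
  have hab : a ≤ n - b := Nat.le_sub_of_add_le (by omega)
  have key1 : n.choose a * (n - a).choose b * (a.factorial * b.factorial * (n - a - b).factorial)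
      = n.factorial := by
    have h1 := Nat.choose_mul_factorial_mul_factorial ha
    have h2 := Nat.choose_mul_factorial_mul_factorial hba
    calc n.choose a * (n - a).choose b * (a.factorial * b.factorial * (n - a - b).factorial)
        = n.choose a * a.factorial * ((n - a).choose b * b.factorial * ((n - a) - b).factorial) := by
          ring
      _ = n.choose a * a.factorial * (n - a).factorial := by rw [h2]
      _ = n.factorial := h1
  have key2 : n.choose b * (n - b).choose a * (a.factorial * b.factorial * (n - a - b).factorial)
      = n.factorial := by
    have h1 := Nat.choose_mul_factorial_mul_factorial hb
    have h2 := Nat.choose_mul_factorial_mul_factorial hab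
    have e : n - b - a = n - a - b := by omega
    calc n.choose b * (n - b).choose a * (a.factorial * b.factorial * (n - a - b).factorial)
        = n.choose b * b.factorial * ((n - b).choose a * a.factorial * ((n - b) - a).factorial) := by
          rw [e]; ring
      _ = n.choose b * b.factorial * (n - b).factorial := by rw [h2]
      _ = n.factorial := h1
  have hpos : 0 < a.factorial * b.factorial * (n - a - b).factorial := by positivity
  exact Nat.eq_of_mul_eq_mul_right hpos (key1.trans key2.symm)

lemma choose_nested (n m k : ℕ) (hk : k ≤ m) (hm : m ≤ n) :
    n.choose m * m.choose k = n.choose k * (n - k).choose (m - k) := by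
  have hkn : k ≤ n := hk.trans hm
  have hmk : m - k ≤ n - k := by omega
  have key1 : n.choose m * m.choose k * (k.factorial * (m - k).factorial * (n - m).factorial)
      = n.factorial := by
    have h1 := Nat.choose_mul_factorial_mul_factorial hm
    have h2 := Nat.choose_mul_factorial_mul_factorial hk
    calc n.choose m * m.choose k * (k.factorial * (m - k).factorial * (n - m).factorial)
        = (m.choose k * k.factorial * (m - k).factorial) * n.choose m * (n - m).factorial := by
          ring
      _ = m.factorial * n.choose m * (n - m).factorial := by rw [h2]
      _ = n.factorial := by rw [← h1]; ring
  have key2 : n.choose k * (n - k).choose (m - k) * (k.factorial * (m - k).factorial * (n - m).factorial)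
      = n.factorial := by
    have h1 := Nat.choose_mul_factorial_mul_factorial hkn
    have h2 := Nat.choose_mul_factorial_mul_factorial hmk
    have e : n - k - (m - k) = n - m := by omega
    calc n.choose k * (n - k).choose (m - k) * (k.factorial * (m - k).factorial * (n - m).factorial)
        = n.choose k * k.factorial * ((n - k).choose (m - k) * (m - k).factorial * ((n - k) - (m - k)).factorial) := by
          rw [e]; ring
      _ = n.choose k * k.factorial * (n - k).factorial := by rw [h2]
      _ = n.factorial := h1
  have hpos : 0 < k.factorial * (m - k).factorial * (n - m).factorial := by positivity
  exact Nat.eq_of_mul_eq_mul_right hpos (key1.trans key2.symm)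

-- the key identity
lemma main_identity (k t : ℕ) (hkt : k ≤ t) :
    (2 * t).choose t * (t.choose k * t.choose k)
      = (2 * t - 2 * k).choose (t - k) * ((2 * t).choose k * (2 * t - k).choose k) := by
  have h1 : (2 * t).choose t * t.choose k = (2 * t).choose k * (2 * t - k).choose (t - k) :=
    choose_nested (2 * t) t k hkt (by omega)
  have h2 : (2 * t - k).choose (t - k) * ((2 * t - k) - (t - k)).choose k
      = (2 * t - k).choose k * ((2 * t - k) - k).choose (t - k) :=
    choose_pair (2 * t - k) (t - k) k (by omega)
  have e1 : (2 * t - k) - (t - k) = t := by omega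
  have e2 : (2 * t - k) - k = 2 * t - 2 * k := by omega
  rw [e1, e2] at h2
  calc (2 * t).choose t * (t.choose k * t.choose k)
      = ((2 * t).choose t * t.choose k) * t.choose k := by ring
    _ = ((2 * t).choose k * (2 * t - k).choose (t - k)) * t.choose k := by rw [h1]
    _ = (2 * t).choose k * ((2 * t - k).choose (t - k) * t.choose k) := by ring
    _ = (2 * t).choose k * ((2 * t - k).choose k * (2 * t - 2 * k).choose (t - k)) := by rw [h2]
    _ = (2 * t - 2 * k).choose (t - k) * ((2 * t).choose k * (2 * t - k).choose k) := by ring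

lemma unimodal_step (k a b : ℕ) (hab : a + 1 ≤ b) :
    a.choose k * b.choose k ≤ (a + 1).choose k * (b - 1).choose k := by
  rcases Nat.lt_or_ge a k with hak | hak
  · rw [Nat.choose_eq_zero_of_lt hak]; simp
  · obtain ⟨c, rfl⟩ : ∃ c, b = c + 1 := ⟨b - 1, by omega⟩
    have hac : a ≤ c := by omega
    simp only [Nat.add_sub_cancel]
    -- key identities
    have h1 := Nat.choose_mul_succ_eq a k     -- a.choose k * (a+1) = (a+1).choose k * (a+1-k)
    have h2 := Nat.choose_mul_succ_eq c k     -- c.choose k * (c+1) = (c+1).choose k * (c+1-k)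
    have hD : 0 < (a + 1) * (c + 1 - k) := by
      have : k ≤ c := hak.trans hac
      have h : 0 < c + 1 - k := by omega
      exact Nat.mul_pos (Nat.succ_pos a) h
    have key : a.choose k * (c + 1).choose k * ((a + 1) * (c + 1 - k))
        = (a + 1).choose k * c.choose k * ((a + 1 - k) * (c + 1)) := by
      calc a.choose k * (c + 1).choose k * ((a + 1) * (c + 1 - k))
          = (a.choose k * (a + 1)) * ((c + 1).choose k * (c + 1 - k)) := by ring
        _ = ((a + 1).choose k * (a + 1 - k)) * ((c + 1).choose k * (c + 1 - k)) := by rw [h1]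
        _ = (a + 1).choose k * c.choose k * ((a + 1 - k) * (c + 1)) := by
            rw [show (c + 1).choose k * (c + 1 - k) = c.choose k * (c + 1) from h2.symm]; ring
    have hle : (a + 1 - k) * (c + 1) ≤ (a + 1) * (c + 1 - k) := by
      have hk1 : k ≤ a + 1 := by omega
      have hk2 : k ≤ c + 1 := by omega
      zify [hk1, hk2]
      nlinarith [hab]
    have : a.choose k * (c + 1).choose k * ((a + 1) * (c + 1 - k))
        ≤ (a + 1).choose k * c.choose k * ((a + 1) * (c + 1 - k)) := by
      rw [key]
      exact Nat.mul_le_mul_left _ hle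
    exact Nat.le_of_mul_le_mul_right this hD

lemma unimodal_aux (k t : ℕ) : ∀ j s, s + j = t →
    s.choose k * (2 * t - s).choose k ≤ t.choose k * t.choose k := by
  intro j
  induction j with
  | zero => intro s hs; subst hs; simp only [Nat.add_zero]
            rw [show 2 * s - s = s by omega]
  | succ j ih =>
    intro s hs
    have h1 : s + 1 ≤ 2 * t - s := by omega
    calc s.choose k * (2 * t - s).choose k
        ≤ (s + 1).choose k * ((2 * t - s) - 1).choose k := unimodal_step k s (2 * t - s) h1
      _ = (s + 1).choose k * (2 * t - (s + 1)).choose k := by rw [show 2*t - s - 1 = 2*t - (s+1) by omega]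
      _ ≤ t.choose k * t.choose k := ih (s + 1) (by omega)

lemma unimodal (k t s : ℕ) (hs : s ≤ 2 * t) :
    s.choose k * (2 * t - s).choose k ≤ t.choose k * t.choose k := by
  rcases le_or_gt s t with h | h
  · exact unimodal_aux k t (t - s) s (by omega)
  · have := unimodal_aux k t (t - (2 * t - s)) (2 * t - s) (by omega)
    rw [show 2 * t - (2 * t - s) = s by omega] at this
    linarith [this, Nat.mul_comm (s.choose k) ((2 * t - s).choose k)]


lemma mem_inf_of_nonempty {ι α : Type*} [DecidableEq α] [Fintype α] {L : Finset ι} (h : L.Nonempty)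
    (B : ι → Finset α) (x : α) : x ∈ L.inf B ↔ ∀ i ∈ L, x ∈ B i := by
  rw [← Finset.inf'_eq_inf h]
  exact Finset.mem_inf' h

lemma cff_lower (k t n : ℕ) (hk : 1 ≤ k) (hkt : k ≤ t)
    (h : ExistsCFF k k ((2 * t - 2 * k).choose (t - k)) n (2 * t)) :
    (2 * t).choose t ≤ n := by
  classical
  obtain ⟨B, hB⟩ := h
  set d := (2 * t - 2 * k).choose (t - k) with hd
  set f : Fin n → Finset (Fin (2 * t)) := fun x => Finset.univ.filter (fun i => x ∈ B i) with hf
  set Pk : Finset (Finset (Fin (2 * t))) := Finset.univ.powersetCard k with hPk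
  have hPkcard : Pk.card = (2 * t).choose k := by
    rw [hPk, Finset.card_powersetCard, Finset.card_univ, Fintype.card_fin]
  -- membership characterization
  have hmem : ∀ L M : Finset (Fin (2 * t)), L.Nonempty → ∀ x : Fin n,
      (x ∈ L.inf B \ M.sup B ↔ L ⊆ f x ∧ Disjoint M (f x)) := by
    intro L M hL x
    rw [Finset.mem_sdiff, mem_inf_of_nonempty hL, Finset.mem_sup]
    constructor
    · rintro ⟨h1, h2⟩
      refine ⟨fun i hi => ?_, Finset.disjoint_left.mpr fun i hiM hif => ?_⟩
      · simp only [hf, Finset.mem_filter, Finset.mem_univ, true_and]; exact h1 i hi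
      · simp only [hf, Finset.mem_filter, Finset.mem_univ, true_and] at hif
        exact h2 ⟨i, hiM, hif⟩
    · rintro ⟨h1, h2⟩
      refine ⟨fun i hi => ?_, ?_⟩
      · have := h1 hi; simpa [hf] using this
      · rintro ⟨i, hiM, hix⟩
        exact (Finset.disjoint_left.mp h2 hiM) (by simp [hf, hix])
  -- the double-counted quantity
  set N : ℕ := ∑ L ∈ Pk, ∑ M ∈ Lᶜ.powersetCard k, (L.inf B \ M.sup B).card with hN
  -- lower bound on N
  have hNlow : d * ((2 * t).choose k * (2 * t - k).choose k) ≤ N := by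
    have : ∀ L ∈ Pk, (2 * t - k).choose k * d ≤ ∑ M ∈ Lᶜ.powersetCard k, (L.inf B \ M.sup B).card := by
      intro L hL
      simp only [hPk, Finset.mem_powersetCard] at hL
      have hcompl : (Lᶜ.powersetCard k).card = (2 * t - k).choose k := by
        rw [Finset.card_powersetCard, Finset.card_compl, Fintype.card_fin, hL.2]
      calc (2 * t - k).choose k * d = ∑ _M ∈ Lᶜ.powersetCard k, d := by
            rw [Finset.sum_const, smul_eq_mul, hcompl]
        _ ≤ ∑ M ∈ Lᶜ.powersetCard k, (L.inf B \ M.sup B).card := by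
            apply Finset.sum_le_sum
            intro M hM
            simp only [Finset.mem_powersetCard] at hM
            apply hB L M ?_ hL.2 hM.2
            exact Finset.disjoint_left.mpr fun a haL haM => by
              have := hM.1 haM; simp only [Finset.mem_compl] at this; exact this haL
    calc d * ((2 * t).choose k * (2 * t - k).choose k)
        = Pk.card * ((2 * t - k).choose k * d) := by rw [hPkcard]; ring
      _ = ∑ _L ∈ Pk, (2 * t - k).choose k * d := by rw [Finset.sum_const, smul_eq_mul]
      _ ≤ N := Finset.sum_le_sum this
  -- upper bound on N
  have hNup : N ≤ n * (t.choose k * t.choose k) := by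
    have hswap : N = ∑ x : Fin n, ∑ L ∈ Pk, ∑ M ∈ Lᶜ.powersetCard k,
        (if L ⊆ f x ∧ Disjoint M (f x) then 1 else 0) := by
      rw [hN]
      rw [Finset.sum_comm]
      apply Finset.sum_congr rfl
      intro L hL
      rw [Finset.sum_comm]
      apply Finset.sum_congr rfl
      intro M hM
      have hLne : L.Nonempty := by
        apply Finset.card_pos.mp
        simp only [hPk, Finset.mem_powersetCard] at hL
        omega
      have : L.inf B \ M.sup B = Finset.univ.filter (fun x => L ⊆ f x ∧ Disjoint M (f x)) := by
        ext x
        simp only [Finset.mem_filter, Finset.mem_univ, true_and]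
        exact hmem L M hLne x
      rw [this, Finset.card_filter]
    rw [hswap]
    have hx : ∀ x : Fin n, (∑ L ∈ Pk, ∑ M ∈ Lᶜ.powersetCard k,
        (if L ⊆ f x ∧ Disjoint M (f x) then 1 else 0)) ≤ t.choose k * t.choose k := by
      intro x
      set s := (f x).card with hs
      have hs2t : s ≤ 2 * t := by
        rw [hs]
        calc (f x).card ≤ Finset.univ.card := Finset.card_le_card (Finset.subset_univ _)
          _ = 2 * t := by rw [Finset.card_univ, Fintype.card_fin]
      have inner : ∀ L ∈ Pk, (∑ M ∈ Lᶜ.powersetCard k,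
          (if L ⊆ f x ∧ Disjoint M (f x) then 1 else 0)) ≤
            (if L ⊆ f x then (2 * t - s).choose k else 0) := by
        intro L hL
        by_cases hLf : L ⊆ f x
        · simp only [hLf, if_true, true_and]
          calc (∑ M ∈ Lᶜ.powersetCard k, if Disjoint M (f x) then 1 else 0)
              = ((Lᶜ.powersetCard k).filter (fun M => Disjoint M (f x))).card := by
                rw [Finset.card_filter]
            _ ≤ ((f x)ᶜ.powersetCard k).card := by
                apply Finset.card_le_card
                intro M hM
                simp only [Finset.mem_filter, Finset.mem_powersetCard] at hM ⊢
                exact ⟨fun a haM => Finset.mem_compl.mpr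
                  (fun haf => (Finset.disjoint_left.mp hM.2 haM) haf), hM.1.2⟩
            _ = (2 * t - s).choose k := by
                rw [Finset.card_powersetCard, Finset.card_compl, Fintype.card_fin, hs]
        · simp only [hLf, if_false, false_and]
          simp
      calc (∑ L ∈ Pk, ∑ M ∈ Lᶜ.powersetCard k,
            (if L ⊆ f x ∧ Disjoint M (f x) then 1 else 0))
          ≤ ∑ L ∈ Pk, (if L ⊆ f x then (2 * t - s).choose k else 0) :=
            Finset.sum_le_sum inner
        _ = ∑ L ∈ Pk.filter (· ⊆ f x), (2 * t - s).choose k := by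
            rw [Finset.sum_filter]
        _ = (Pk.filter (· ⊆ f x)).card * (2 * t - s).choose k := by
            rw [Finset.sum_const, smul_eq_mul]
        _ = s.choose k * (2 * t - s).choose k := by
            congr 1
            have : Pk.filter (· ⊆ f x) = (f x).powersetCard k := by
              ext L
              simp only [hPk, Finset.mem_filter, Finset.mem_powersetCard]
              constructor
              · rintro ⟨⟨_, h2⟩, h3⟩; exact ⟨h3, h2⟩
              · rintro ⟨h1, h2⟩; exact ⟨⟨Finset.subset_univ _, h2⟩, h1⟩
            rw [this, Finset.card_powersetCard, hs]
        _ ≤ t.choose k * t.choose k := unimodal k t s hs2t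
    calc (∑ x : Fin n, ∑ L ∈ Pk, ∑ M ∈ Lᶜ.powersetCard k,
          (if L ⊆ f x ∧ Disjoint M (f x) then 1 else 0))
        ≤ ∑ _x : Fin n, t.choose k * t.choose k := Finset.sum_le_sum (fun x _ => hx x)
      _ = n * (t.choose k * t.choose k) := by
          rw [Finset.sum_const, smul_eq_mul, Finset.card_univ, Fintype.card_fin]
  -- combine
  have hcomb : (2 * t).choose t * (t.choose k * t.choose k) ≤ n * (t.choose k * t.choose k) := by
    rw [main_identity k t hkt]
    calc (2 * t - 2 * k).choose (t - k) * ((2 * t).choose k * (2 * t - k).choose k)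
        ≤ N := hNlow
      _ ≤ n * (t.choose k * t.choose k) := hNup
  have hpos : 0 < t.choose k * t.choose k :=
    Nat.mul_pos (Nat.choose_pos hkt) (Nat.choose_pos hkt)
  exact Nat.le_of_mul_le_mul_right hcomb hpos
lemma cff_upper (k t : ℕ) (hk : 1 ≤ k) (hkt : k ≤ t) :
    ExistsCFF k k ((2 * t - 2 * k).choose (t - k)) ((2 * t).choose t) (2 * t) := by
  classical
  set m := (2 * t).choose t with hm
  set P : Finset (Finset (Fin (2 * t))) := Finset.univ.powersetCard t with hP
  have hPcard : P.card = m := by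
    rw [hP, Finset.card_powersetCard, Finset.card_univ, Fintype.card_fin, hm]
  set g : Fin m → Finset (Fin (2 * t)) :=
    fun x => (P.equivFin.symm (Fin.cast hPcard.symm x) : Finset (Fin (2 * t))) with hg
  have hgP : ∀ x, g x ∈ P := fun x => (P.equivFin.symm (Fin.cast hPcard.symm x)).2
  have hginj : Function.Injective g := by
    intro x y hxy
    have h1 : P.equivFin.symm (Fin.cast hPcard.symm x) = P.equivFin.symm (Fin.cast hPcard.symm y) :=
      Subtype.ext hxy
    have h2 := P.equivFin.symm.injective h1
    exact (Fin.cast_injective hPcard.symm) h2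
  have hgsurj : ∀ S ∈ P, ∃ x, g x = S := by
    intro S hS
    refine ⟨Fin.cast hPcard (P.equivFin ⟨S, hS⟩), ?_⟩
    simp only [hg]
    have : Fin.cast hPcard.symm (Fin.cast hPcard (P.equivFin ⟨S, hS⟩)) = P.equivFin ⟨S, hS⟩ := by
      ext; simp
    rw [this, Equiv.symm_apply_apply]
  refine ⟨fun i => Finset.univ.filter (fun x => i ∈ g x), ?_⟩
  intro L M hdisj hL hM
  have hLne : L.Nonempty := Finset.card_pos.mp (by omega)
  set B : Fin (2 * t) → Finset (Fin m) := fun i => Finset.univ.filter (fun x => i ∈ g x) with hBdef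
  -- membership characterization
  have hmem : ∀ x : Fin m, x ∈ L.inf B \ M.sup B ↔ L ⊆ g x ∧ Disjoint M (g x) := by
    intro x
    rw [Finset.mem_sdiff, mem_inf_of_nonempty hLne, Finset.mem_sup]
    simp only [hBdef, Finset.mem_filter, Finset.mem_univ, true_and]
    constructor
    · rintro ⟨h1, h2⟩
      exact ⟨fun i hi => h1 i hi, Finset.disjoint_left.mpr fun i hiM hig => h2 ⟨i, hiM, hig⟩⟩
    · rintro ⟨h1, h2⟩
      exact ⟨fun i hi => h1 hi, fun ⟨i, hiM, hig⟩ => (Finset.disjoint_left.mp h2 hiM) hig⟩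
  -- target as image
  set Tgt := L.inf B \ M.sup B with hTgt
  set PS := P.filter (fun S => L ⊆ S ∧ Disjoint M S) with hPS
  have himage : Tgt.image g = PS := by
    ext S
    simp only [Finset.mem_image, hPS, Finset.mem_filter]
    constructor
    · rintro ⟨x, hx, rfl⟩
      have := (hmem x).mp hx
      exact ⟨hgP x, this.1, this.2⟩
    · rintro ⟨hSP, h1, h2⟩
      obtain ⟨x, rfl⟩ := hgsurj S hSP
      exact ⟨x, (hmem x).mpr ⟨h1, h2⟩, rfl⟩
  have hcardeq : Tgt.card = PS.card := by
    rw [← himage, Finset.card_image_of_injective _ hginj]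
  -- injection from (t-k)-subsets of (L ∪ M)ᶜ into PS
  have hLM : (L ∪ M).card = 2 * k := by
    rw [Finset.card_union_of_disjoint hdisj, hL, hM]; omega
  have hLMc : ((L ∪ M)ᶜ : Finset (Fin (2 * t))).card = 2 * t - 2 * k := by
    rw [Finset.card_compl, Fintype.card_fin, hLM]
  have hinj : ((L ∪ M)ᶜ.powersetCard (t - k)).card ≤ PS.card := by
    apply Finset.card_le_card_of_injOn (fun T => T ∪ L)
    · intro T hT
      simp only [Finset.mem_coe, Finset.mem_powersetCard] at hT
      have hTL : Disjoint T L := by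
        apply Finset.disjoint_left.mpr
        intro a haT haL
        have := hT.1 haT
        simp only [Finset.mem_compl, Finset.mem_union] at this
        exact this (Or.inl haL)
      have hTM : Disjoint T M := by
        apply Finset.disjoint_left.mpr
        intro a haT haM
        have := hT.1 haT
        simp only [Finset.mem_compl, Finset.mem_union] at this
        exact this (Or.inr haM)
      simp only [Finset.mem_coe, hPS, Finset.mem_filter, hP, Finset.mem_powersetCard]
      refine ⟨⟨Finset.subset_univ _, ?_⟩, Finset.subset_union_right, ?_⟩
      · rw [Finset.card_union_of_disjoint hTL, hT.2, hL]; omega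
      · exact Finset.disjoint_union_right.mpr ⟨hTM.symm, hdisj.symm⟩
    · intro T1 h1 T2 h2 heq
      simp only [Finset.mem_coe, Finset.mem_powersetCard] at h1 h2
      have d1 : Disjoint T1 L := by
        apply Finset.disjoint_left.mpr
        intro a haT haL
        have := h1.1 haT
        simp only [Finset.mem_compl, Finset.mem_union] at this
        exact this (Or.inl haL)
      have d2 : Disjoint T2 L := by
        apply Finset.disjoint_left.mpr
        intro a haT haL
        have := h2.1 haT
        simp only [Finset.mem_compl, Finset.mem_union] at this
        exact this (Or.inl haL)
      have e1 : T1 = (T1 ∪ L) \ L := by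
        rw [Finset.union_sdiff_right, Finset.sdiff_eq_self_of_disjoint d1]
      have e2 : T2 = (T2 ∪ L) \ L := by
        rw [Finset.union_sdiff_right, Finset.sdiff_eq_self_of_disjoint d2]
      simp only [] at heq
      rw [e1, e2, heq]
  calc (2 * t - 2 * k).choose (t - k)
      = ((L ∪ M)ᶜ.powersetCard (t - k)).card := by
        rw [Finset.card_powersetCard, hLMc]
    _ ≤ PS.card := hinj
    _ = Tgt.card := hcardeq.symm

theorem stmt_2 (k t : ℕ) (hk : 1 ≤ k) (hkt : k ≤ t) :
    NCFF k k (Nat.choose (2 * t - 2 * k) (t - k)) (2 * t) = Nat.choose (2 * t) t := by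
  have hub : ((2 * t).choose t) ∈ {n : ℕ | ExistsCFF k k ((2 * t - 2 * k).choose (t - k)) n (2 * t)} :=
    cff_upper k t hk hkt
  have hne : {n : ℕ | ExistsCFF k k ((2 * t - 2 * k).choose (t - k)) n (2 * t)}.Nonempty := ⟨_, hub⟩
  refine le_antisymm (Nat.sInf_le hub) ?_
  exact cff_lower k t _ hk hkt (Nat.sInf_mem hne)
end

section
/- Let 1 ≤ k ≤ t be integers and d = C(2t−2k, t−k). Then the d-biclique covering number and the d-biclique partition number of the bi-intersection graph I_{2t}(k,k) both equal C(2t,t), i.e., bc_d(I_{2t}(k,k)) = bp_d(I_{2t}(k,k)) = C(2t,t). -/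
open Finset

/-- The vertex set of one side of the bi-intersection graph `I_n(k,k)`:
all `k`-subsets of `{1,…,n}`. -/
abbrev KSubset (n k : ℕ) := {A : Finset (Fin n) // A.card = k}

/-- A family of `c` bicliques of the bi-intersection graph `I_n(k,k)` (whose
two sides are two disjoint copies of the `k`-subsets of an `n`-set, a left
`k`-subset being adjacent to a right `k`-subset iff they are disjoint):
each biclique is given by a set `X i` of left vertices and a set `Y i` of
right vertices, all cross pairs being adjacent (i.e. disjoint as sets). -/
def IsBicliqueFamily (n k c : ℕ) (X Y : Fin c → Finset (KSubset n k)) : Prop :=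
  ∀ i : Fin c, ∀ a ∈ X i, ∀ b ∈ Y i, Disjoint a.1 b.1

/-- `bc_d(I_n(k,k))`: the minimum number of bicliques of the bi-intersection
graph `I_n(k,k)` such that every edge (i.e. every disjoint pair consisting of
a left `k`-subset and a right `k`-subset) lies in at least `d` of them. -/
noncomputable def bcBiIntersection (n k d : ℕ) : ℕ :=
  sInf {c : ℕ | ∃ X Y : Fin c → Finset (KSubset n k),
    IsBicliqueFamily n k c X Y ∧
    ∀ a b : KSubset n k, Disjoint a.1 b.1 →
      d ≤ (Finset.univ.filter (fun i => a ∈ X i ∧ b ∈ Y i)).card}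

/-- `bp_d(I_n(k,k))`: the minimum number of bicliques of the bi-intersection
graph `I_n(k,k)` such that every edge lies in exactly `d` of them. -/
noncomputable def bpBiIntersection (n k d : ℕ) : ℕ :=
  sInf {c : ℕ | ∃ X Y : Fin c → Finset (KSubset n k),
    IsBicliqueFamily n k c X Y ∧
    ∀ a b : KSubset n k, Disjoint a.1 b.1 →
      (Finset.univ.filter (fun i => a ∈ X i ∧ b ∈ Y i)).card = d}

/-!
STATEMENT 3: Let 1 ≤ k ≤ t be integers and d = C(2t−2k, t−k).  Then the
d-biclique covering number and the d-biclique partition number of the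
bi-intersection graph I_{2t}(k,k) both equal C(2t,t), i.e.
bc_d(I_{2t}(k,k)) = bp_d(I_{2t}(k,k)) = C(2t,t).
-/

private lemma card_ksubset_subset (n k : ℕ) (s : Finset (Fin n)) :
    (univ.filter (fun a : KSubset n k => a.1 ⊆ s)).card = s.card.choose k := by
  rw [← Finset.card_powersetCard]
  apply Finset.card_bij (fun a _ => a.1)
  · intro a ha
    simp only [mem_filter, mem_univ, true_and] at ha
    exact Finset.mem_powersetCard.2 ⟨ha, a.2⟩
  · intro a _ b _ h; exact Subtype.ext h
  · intro T hT
    obtain ⟨hTs, hTc⟩ := Finset.mem_powersetCard.1 hT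
    exact ⟨⟨T, hTc⟩, by simp [hTs], rfl⟩

private lemma choose_step (k u w : ℕ) (huw : u ≤ w) :
    u.choose k * (w + 1).choose k ≤ (u + 1).choose k * w.choose k := by
  rcases Nat.lt_or_ge u k with h | h
  · rw [Nat.choose_eq_zero_of_lt h]; simp
  · have h1 := Nat.choose_mul_succ_eq u k
    have h2 := Nat.choose_mul_succ_eq w k
    have key : (u + 1 - k) * (w + 1) ≤ (u + 1) * (w + 1 - k) := by
      have h3 : k ≤ u + 1 := by omega
      have h4 : k ≤ w + 1 := by omega
      zify [h3, h4]
      nlinarith [huw, h]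
    have hmul : (u.choose k * (w + 1).choose k) * ((u + 1) * (w + 1)) ≤
        ((u + 1).choose k * w.choose k) * ((u + 1) * (w + 1)) := by
      calc (u.choose k * (w + 1).choose k) * ((u + 1) * (w + 1))
          = (u.choose k * (u + 1)) * ((w + 1).choose k * (w + 1)) := by ring
        _ = ((u + 1).choose k * (w + 1).choose k) * ((u + 1 - k) * (w + 1)) := by
            rw [h1]; ring
        _ ≤ ((u + 1).choose k * (w + 1).choose k) * ((u + 1) * (w + 1 - k)) :=
            Nat.mul_le_mul_left _ key
        _ = ((u + 1).choose k * (u + 1)) * ((w + 1).choose k * (w + 1 - k)) := by ring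
        _ = ((u + 1).choose k * (u + 1)) * (w.choose k * (w + 1)) := by rw [h2]
        _ = ((u + 1).choose k * w.choose k) * ((u + 1) * (w + 1)) := by ring
    exact Nat.le_of_mul_le_mul_right hmul (by positivity)

private lemma choose_unimodal (k t : ℕ) (hk : 1 ≤ k) :
    ∀ j, (t - j).choose k * (t + j).choose k ≤ t.choose k ^ 2
  | 0 => by simp [sq]
  | (j + 1) => by
    rcases le_or_gt (j + 1) t with h | h
    · have e1 : t - (j + 1) + 1 = t - j := by omega
      have e2 : t + (j + 1) = (t + j) + 1 := by omega
      calc (t - (j + 1)).choose k * (t + (j + 1)).choose k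
          ≤ ((t - (j + 1)) + 1).choose k * (t + j).choose k := by
            rw [e2]; exact choose_step k _ _ (by omega)
        _ = (t - j).choose k * (t + j).choose k := by rw [e1]
        _ ≤ _ := choose_unimodal k t hk j
    · have e : t - (j + 1) = 0 := by omega
      rw [e, Nat.choose_eq_zero_of_lt hk]
      simp

private lemma choose_mul_choose_le (k t u v : ℕ) (hk : 1 ≤ k) (huv : u + v = 2 * t) :
    u.choose k * v.choose k ≤ t.choose k ^ 2 := by
  rcases le_or_gt u t with h | h
  · have H := choose_unimodal k t hk (t - u)
    have e1 : t - (t - u) = u := by omega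
    have e2 : t + (t - u) = v := by omega
    rwa [e1, e2] at H
  · have H := choose_unimodal k t hk (u - t)
    have e1 : t - (u - t) = v := by omega
    have e2 : t + (u - t) = u := by omega
    rw [e1, e2] at H
    exact le_trans (le_of_eq (Nat.mul_comm _ _)) H

private lemma key_identity (k m : ℕ) :
    (2 * m).choose m * ((2 * (k + m)).choose k * (k + 2 * m).choose k) =
      (2 * (k + m)).choose (k + m) * ((k + m).choose k) ^ 2 := by
  have hq : ((2 * m).choose m * ((2 * (k + m)).choose k * (k + 2 * m).choose k) : ℚ) =
      ((2 * (k + m)).choose (k + m) * ((k + m).choose k) ^ 2 : ℚ) := by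
    rw [Nat.cast_choose ℚ (show m ≤ 2 * m by omega),
        Nat.cast_choose ℚ (show k ≤ 2 * (k + m) by omega),
        Nat.cast_choose ℚ (show k ≤ k + 2 * m by omega),
        Nat.cast_choose ℚ (show k + m ≤ 2 * (k + m) by omega),
        Nat.cast_choose ℚ (show k ≤ k + m by omega),
        show 2 * m - m = m by omega, show 2 * (k + m) - k = k + 2 * m by omega,
        show k + 2 * m - k = 2 * m by omega, show 2 * (k + m) - (k + m) = k + m by omega,
        show k + m - k = m by omega]
    have f : ∀ n : ℕ, ((n.factorial : ℚ)) ≠ 0 := fun n => Nat.cast_ne_zero.2 (Nat.factorial_ne_zero n)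
    field_simp
  exact_mod_cast hq

private lemma exists_partition (k t : ℕ) (hk : 1 ≤ k) (hkt : k ≤ t) :
    ∃ X Y : Fin ((2 * t).choose t) → Finset (KSubset (2 * t) k),
      IsBicliqueFamily (2 * t) k ((2 * t).choose t) X Y ∧
      ∀ a b : KSubset (2 * t) k, Disjoint a.1 b.1 →
        (univ.filter (fun i => a ∈ X i ∧ b ∈ Y i)).card = (2 * t - 2 * k).choose (t - k) := by
  classical
  set 𝒮 := (univ : Finset (Fin (2 * t))).powersetCard t with h𝒮
  have hcard : (2 * t).choose t = 𝒮.card := by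
    rw [h𝒮, Finset.card_powersetCard, Finset.card_univ, Fintype.card_fin]
  set S : Fin ((2 * t).choose t) → Finset (Fin (2 * t)) :=
    fun i => (𝒮.equivFin.symm (Fin.cast hcard i)).1 with hS
  have hSmem : ∀ i, S i ∈ 𝒮 := fun i => (𝒮.equivFin.symm (Fin.cast hcard i)).2
  have hScard : ∀ i, (S i).card = t := fun i => (Finset.mem_powersetCard.1 (hSmem i)).2
  have hSinj : Function.Injective S := by
    intro i j hij
    have h1 : 𝒮.equivFin.symm (Fin.cast hcard i) = 𝒮.equivFin.symm (Fin.cast hcard j) :=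
      Subtype.ext hij
    have h2 := congrArg Fin.val (𝒮.equivFin.symm.injective h1)
    rw [Fin.coe_cast, Fin.coe_cast] at h2
    exact Fin.ext h2
  have hSsurj : ∀ T ∈ 𝒮, ∃ i, S i = T := by
    intro T hT
    refine ⟨Fin.cast hcard.symm (𝒮.equivFin ⟨T, hT⟩), ?_⟩
    show (𝒮.equivFin.symm (Fin.cast hcard (Fin.cast hcard.symm (𝒮.equivFin ⟨T, hT⟩)))).1 = T
    have e : Fin.cast hcard (Fin.cast hcard.symm (𝒮.equivFin ⟨T, hT⟩)) = 𝒮.equivFin ⟨T, hT⟩ :=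
      Fin.ext rfl
    rw [e, Equiv.symm_apply_apply]
  refine ⟨fun i => univ.filter (fun a : KSubset (2 * t) k => a.1 ⊆ S i),
          fun i => univ.filter (fun b : KSubset (2 * t) k => Disjoint (S i) b.1), ?_, ?_⟩
  · intro i a ha b hb
    simp only [mem_filter, mem_univ, true_and] at ha hb
    exact hb.mono_left ha
  · intro a b hab
    have hbsub : b.1 ⊆ univ \ a.1 := Finset.subset_sdiff.2 ⟨Finset.subset_univ _, hab.symm⟩
    have hab2 : ((univ \ a.1) \ b.1).card = 2 * t - 2 * k := by
      rw [Finset.card_sdiff_of_subset hbsub, Finset.card_sdiff_of_subset (Finset.subset_univ _),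
        Finset.card_univ, Fintype.card_fin, a.2, b.2]
      omega
    rw [← hab2, ← Finset.card_powersetCard]
    apply Finset.card_bij (fun i _ => S i \ a.1)
    · intro i hi
      simp only [mem_filter, mem_univ, true_and] at hi
      obtain ⟨hai, hbi⟩ := hi
      refine Finset.mem_powersetCard.2 ⟨?_, ?_⟩
      · intro x hx
        simp only [Finset.mem_sdiff, Finset.mem_univ, true_and] at hx ⊢
        exact ⟨hx.2, fun hxb => (Finset.disjoint_left.1 hbi) hx.1 hxb⟩
      · rw [Finset.card_sdiff_of_subset hai, hScard, a.2]
    · intro i hi j hj hij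
      simp only [mem_filter, mem_univ, true_and] at hi hj
      apply hSinj
      rw [← Finset.sdiff_union_of_subset hi.1, ← Finset.sdiff_union_of_subset hj.1, hij]
    · intro T hT
      obtain ⟨hTsub, hTcard⟩ := Finset.mem_powersetCard.1 hT
      have hTa : Disjoint T a.1 := by
        have h' : T ⊆ univ \ a.1 := hTsub.trans Finset.sdiff_subset
        exact (Finset.subset_sdiff.1 h').2
      have hTb : Disjoint T b.1 := (Finset.subset_sdiff.1 hTsub).2
      have hScard' : (T ∪ a.1).card = t := by
        rw [Finset.card_union_of_disjoint hTa, hTcard, a.2]; omega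
      have hmem : T ∪ a.1 ∈ 𝒮 :=
        Finset.mem_powersetCard.2 ⟨Finset.subset_univ _, hScard'⟩
      obtain ⟨i, hi⟩ := hSsurj _ hmem
      refine ⟨i, ?_, ?_⟩
      · simp only [mem_filter, mem_univ, true_and, hi]
        exact ⟨Finset.subset_union_right, Finset.disjoint_union_left.2 ⟨hTb, hab⟩⟩
      · rw [hi, Finset.union_sdiff_cancel_right hTa]

private lemma lower_bound (k t c : ℕ) (hk : 1 ≤ k) (hkt : k ≤ t)
    (X Y : Fin c → Finset (KSubset (2 * t) k))
    (hB : IsBicliqueFamily (2 * t) k c X Y)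
    (hcov : ∀ a b : KSubset (2 * t) k, Disjoint a.1 b.1 →
      (2 * t - 2 * k).choose (t - k) ≤ (univ.filter (fun i => a ∈ X i ∧ b ∈ Y i)).card) :
    (2 * t).choose t ≤ c := by
  classical
  set d := (2 * t - 2 * k).choose (t - k) with hd
  -- per-biclique bound
  have hbic : ∀ i, (X i).card * (Y i).card ≤ t.choose k ^ 2 := by
    intro i
    set U := (X i).sup (fun a => (a.1 : Finset (Fin (2 * t)))) with hU
    have hXsub : X i ⊆ univ.filter (fun a : KSubset (2 * t) k => a.1 ⊆ U) := by
      intro a ha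
      simp only [mem_filter, mem_univ, true_and]
      exact Finset.le_iff_subset.1 (Finset.le_sup (f := fun a : KSubset (2 * t) k => (a.1 : Finset (Fin (2 * t)))) ha)
    have hYsub : Y i ⊆ univ.filter (fun b : KSubset (2 * t) k => b.1 ⊆ univ \ U) := by
      intro b hb
      simp only [mem_filter, mem_univ, true_and]
      refine Finset.subset_sdiff.2 ⟨Finset.subset_univ _, ?_⟩
      exact Finset.disjoint_sup_right.2 (fun a ha => (hB i a ha b hb).symm)
    have hXc : (X i).card ≤ U.card.choose k := by
      rw [← card_ksubset_subset (2 * t) k U]; exact Finset.card_le_card hXsub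
    have hYc : (Y i).card ≤ (2 * t - U.card).choose k := by
      have := Finset.card_le_card hYsub
      rwa [card_ksubset_subset, Finset.card_sdiff_of_subset (Finset.subset_univ _),
        Finset.card_univ, Fintype.card_fin] at this
    calc (X i).card * (Y i).card ≤ U.card.choose k * (2 * t - U.card).choose k :=
          Nat.mul_le_mul hXc hYc
      _ ≤ t.choose k ^ 2 := by
          apply choose_mul_choose_le k t _ _ hk
          have : U.card ≤ 2 * t := by
            have := Finset.card_le_card (Finset.subset_univ U)
            rwa [Finset.card_univ, Fintype.card_fin] at this
          omega
  -- number of b's disjoint from a fixed a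
  have hM : ∀ a : KSubset (2 * t) k,
      (univ.filter (fun b : KSubset (2 * t) k => Disjoint a.1 b.1)).card =
        (2 * t - k).choose k := by
    intro a
    have he : (univ.filter (fun b : KSubset (2 * t) k => Disjoint a.1 b.1)) =
        (univ.filter (fun b : KSubset (2 * t) k => b.1 ⊆ univ \ a.1)) := by
      ext b
      simp only [mem_filter, mem_univ, true_and, Finset.subset_sdiff, Finset.subset_univ,
        true_and]
      exact ⟨fun h => h.symm, fun h => h.symm⟩
    rw [he, card_ksubset_subset, Finset.card_sdiff_of_subset (Finset.subset_univ _),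
      Finset.card_univ, Fintype.card_fin, a.2]
  have hN : Fintype.card (KSubset (2 * t) k) = (2 * t).choose k := by
    have h := card_ksubset_subset (2 * t) k Finset.univ
    rw [Finset.filter_true_of_mem (fun a _ => Finset.subset_univ _), Finset.card_univ,
      Finset.card_univ, Fintype.card_fin] at h
    exact h
  -- main counting chain
  have step1 : d * ((2 * t).choose k * (2 * t - k).choose k) ≤
      ∑ a : KSubset (2 * t) k, ∑ b : KSubset (2 * t) k,
        (if Disjoint a.1 b.1 then (univ.filter (fun i => a ∈ X i ∧ b ∈ Y i)).card else 0) := by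
    have inner : ∀ a : KSubset (2 * t) k, (2 * t - k).choose k * d ≤
        ∑ b : KSubset (2 * t) k,
          (if Disjoint a.1 b.1 then (univ.filter (fun i => a ∈ X i ∧ b ∈ Y i)).card else 0) := by
      intro a
      have h1 : ∑ b : KSubset (2 * t) k,
          (if Disjoint a.1 b.1 then d else 0) = (2 * t - k).choose k * d := by
        rw [← Finset.sum_filter, Finset.sum_const, smul_eq_mul, hM]
      rw [← h1]
      apply Finset.sum_le_sum
      intro b _
      split
      · next h => exact hcov a b h
      · exact le_rfl
    calc d * ((2 * t).choose k * (2 * t - k).choose k)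
        = ∑ _a : KSubset (2 * t) k, (2 * t - k).choose k * d := by
          rw [Finset.sum_const, Finset.card_univ, hN, smul_eq_mul]; ring
      _ ≤ _ := Finset.sum_le_sum (fun a _ => inner a)
  have step2 : ∑ a : KSubset (2 * t) k, ∑ b : KSubset (2 * t) k,
        (if Disjoint a.1 b.1 then (univ.filter (fun i => a ∈ X i ∧ b ∈ Y i)).card else 0) ≤
      ∑ a : KSubset (2 * t) k, ∑ b : KSubset (2 * t) k,
        (univ.filter (fun i => a ∈ X i ∧ b ∈ Y i)).card := by
    apply Finset.sum_le_sum; intro a _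
    apply Finset.sum_le_sum; intro b _
    split <;> simp
  have step3 : ∑ a : KSubset (2 * t) k, ∑ b : KSubset (2 * t) k,
        (univ.filter (fun i => a ∈ X i ∧ b ∈ Y i)).card =
      ∑ i : Fin c, (X i).card * (Y i).card := by
    have hsplit : ∀ (p q : Prop) (_ : Decidable p) (_ : Decidable q),
        (if p ∧ q then (1 : ℕ) else 0) = (if p then 1 else 0) * (if q then 1 else 0) := by
      intro p q hp hq
      by_cases h1 : p <;> by_cases h2 : q <;> simp [h1, h2]
    simp_rw [Finset.card_filter, hsplit]
    calc ∑ a : KSubset (2 * t) k, ∑ b : KSubset (2 * t) k, ∑ i : Fin c,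
            (if a ∈ X i then (1 : ℕ) else 0) * (if b ∈ Y i then 1 else 0)
        = ∑ a : KSubset (2 * t) k, ∑ i : Fin c, ∑ b : KSubset (2 * t) k,
            (if a ∈ X i then (1 : ℕ) else 0) * (if b ∈ Y i then 1 else 0) :=
          Finset.sum_congr rfl (fun a _ => Finset.sum_comm)
      _ = ∑ i : Fin c, ∑ a : KSubset (2 * t) k, ∑ b : KSubset (2 * t) k,
            (if a ∈ X i then (1 : ℕ) else 0) * (if b ∈ Y i then 1 else 0) :=
          Finset.sum_comm
      _ = ∑ i : Fin c, (X i).card * (Y i).card := by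
          apply Finset.sum_congr rfl
          intro i _
          rw [← Finset.sum_mul_sum]
          simp [Finset.sum_ite_mem, Finset.univ_inter]
  have chain : d * ((2 * t).choose k * (2 * t - k).choose k) ≤ c * t.choose k ^ 2 := by
    calc d * ((2 * t).choose k * (2 * t - k).choose k)
        ≤ _ := step1
      _ ≤ _ := step2
      _ = _ := step3
      _ ≤ ∑ _i : Fin c, t.choose k ^ 2 := Finset.sum_le_sum (fun i _ => hbic i)
      _ = c * t.choose k ^ 2 := by
          rw [Finset.sum_const, Finset.card_univ, Fintype.card_fin, smul_eq_mul]
  have iden : d * ((2 * t).choose k * (2 * t - k).choose k) =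
      (2 * t).choose t * t.choose k ^ 2 := by
    obtain ⟨m, rfl⟩ : ∃ m, t = k + m := ⟨t - k, by omega⟩
    rw [hd, show 2 * (k + m) - 2 * k = 2 * m by omega, show k + m - k = m by omega,
      show 2 * (k + m) - k = k + 2 * m by omega]
    exact key_identity k m
  rw [iden] at chain
  have hpos : 0 < t.choose k ^ 2 := pow_pos (Nat.choose_pos hkt) 2
  exact Nat.le_of_mul_le_mul_right chain hpos

theorem stmt_3 (k t : ℕ) (hk : 1 ≤ k) (hkt : k ≤ t) :
    bcBiIntersection (2 * t) k (Nat.choose (2 * t - 2 * k) (t - k)) =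
        Nat.choose (2 * t) t ∧
      bpBiIntersection (2 * t) k (Nat.choose (2 * t - 2 * k) (t - k)) =
        Nat.choose (2 * t) t := by
  obtain ⟨X, Y, hB, hpart⟩ := exists_partition k t hk hkt
  have hmem_bp : (2 * t).choose t ∈ {c : ℕ | ∃ X Y : Fin c → Finset (KSubset (2 * t) k),
      IsBicliqueFamily (2 * t) k c X Y ∧
      ∀ a b : KSubset (2 * t) k, Disjoint a.1 b.1 →
        (Finset.univ.filter (fun i => a ∈ X i ∧ b ∈ Y i)).card =
          Nat.choose (2 * t - 2 * k) (t - k)} := ⟨X, Y, hB, hpart⟩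
  have hmem_bc : (2 * t).choose t ∈ {c : ℕ | ∃ X Y : Fin c → Finset (KSubset (2 * t) k),
      IsBicliqueFamily (2 * t) k c X Y ∧
      ∀ a b : KSubset (2 * t) k, Disjoint a.1 b.1 →
        Nat.choose (2 * t - 2 * k) (t - k) ≤
          (Finset.univ.filter (fun i => a ∈ X i ∧ b ∈ Y i)).card} :=
    ⟨X, Y, hB, fun a b hab => le_of_eq (hpart a b hab).symm⟩
  have hlb_bc : ∀ c ∈ {c : ℕ | ∃ X Y : Fin c → Finset (KSubset (2 * t) k),
      IsBicliqueFamily (2 * t) k c X Y ∧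
      ∀ a b : KSubset (2 * t) k, Disjoint a.1 b.1 →
        Nat.choose (2 * t - 2 * k) (t - k) ≤
          (Finset.univ.filter (fun i => a ∈ X i ∧ b ∈ Y i)).card},
      (2 * t).choose t ≤ c := by
    rintro c ⟨X', Y', hB', hcov'⟩
    exact lower_bound k t c hk hkt X' Y' hB' hcov'
  constructor
  · exact le_antisymm (Nat.sInf_le hmem_bc) (le_csInf ⟨_, hmem_bc⟩ hlb_bc)
  · refine le_antisymm (Nat.sInf_le hmem_bp) (le_csInf ⟨_, hmem_bp⟩ ?_)
    rintro c ⟨X', Y', hB', hcov'⟩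
    exact hlb_bc c ⟨X', Y', hB', fun a b hab => le_of_eq (hcov' a b hab).symm⟩
end

section
/- Let 1 ≤ k ≤ t be integers and d = C(2t−2k, t−k). Then the d-biclique covering number and the d-biclique partition number of the Kneser graph KG(2t,k) both equal (1/2)·C(2t,t), i.e., bc_d(KG(2t,k)) = bp_d(KG(2t,k)) = C(2t,t)/2. -/
open Finset

/-- The vertex set of the Kneser graph `KG(n,k)`: all `k`-subsets of
`{1,…,n}`.  Two vertices are adjacent iff they are disjoint as sets. -/
abbrev KneserVert (n k : ℕ) := {A : Finset (Fin n) // A.card = k}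

/-- A family of `c` bicliques (complete bipartite subgraphs) of the Kneser
graph `KG(n,k)`: each biclique is given by two disjoint sets `X i`, `Y i` of
vertices, every vertex of `X i` being adjacent (disjoint as a set) to every
vertex of `Y i`. -/
def IsKneserBicliqueFamily (n k c : ℕ) (X Y : Fin c → Finset (KneserVert n k)) : Prop :=
  ∀ i : Fin c, Disjoint (X i) (Y i) ∧ ∀ a ∈ X i, ∀ b ∈ Y i, Disjoint a.1 b.1

/-- The edge `{a,b}` of the Kneser graph belongs to the biclique `(X,Y)`. -/
def KneserEdgeMem (n k : ℕ) (X Y : Finset (KneserVert n k))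
    (a b : KneserVert n k) : Prop :=
  (a ∈ X ∧ b ∈ Y) ∨ (b ∈ X ∧ a ∈ Y)

instance (n k : ℕ) (X Y : Finset (KneserVert n k)) (a b : KneserVert n k) :
    Decidable (KneserEdgeMem n k X Y a b) := by
  unfold KneserEdgeMem; infer_instance

/-- `bc_d(KG(n,k))`: the minimum number of bicliques of the Kneser graph
`KG(n,k)` such that every edge belongs to at least `d` of them. -/
noncomputable def bcKneser (n k d : ℕ) : ℕ :=
  sInf {c : ℕ | ∃ X Y : Fin c → Finset (KneserVert n k),
    IsKneserBicliqueFamily n k c X Y ∧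
    ∀ a b : KneserVert n k, Disjoint a.1 b.1 →
      d ≤ (Finset.univ.filter (fun i =>
        KneserEdgeMem n k (X i) (Y i) a b)).card}

/-- `bp_d(KG(n,k))`: the minimum number of bicliques of the Kneser graph
`KG(n,k)` such that every edge belongs to exactly `d` of them. -/
noncomputable def bpKneser (n k d : ℕ) : ℕ :=
  sInf {c : ℕ | ∃ X Y : Fin c → Finset (KneserVert n k),
    IsKneserBicliqueFamily n k c X Y ∧
    ∀ a b : KneserVert n k, Disjoint a.1 b.1 →
      (Finset.univ.filter (fun i =>
        KneserEdgeMem n k (X i) (Y i) a b)).card = d}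

/-!
STATEMENT 4: Let 1 ≤ k ≤ t be integers and d = C(2t−2k, t−k).  Then the
d-biclique covering number and the d-biclique partition number of the Kneser
graph KG(2t,k) both equal (1/2)·C(2t,t), i.e.
bc_d(KG(2t,k)) = bp_d(KG(2t,k)) = C(2t,t)/2.
-/

/-! ### Auxiliary arithmetic lemmas -/

lemma choose_step_s4 (k a b : ℕ) (hba : b ≤ a) :
    (a+1).choose k * b.choose k ≤ a.choose k * (b+1).choose k := by
  rcases Nat.lt_or_ge b k with h | h
  · simp [Nat.choose_eq_zero_of_lt h]
  · have hka : k ≤ a := le_trans h hba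
    have h1 := Nat.choose_mul_succ_eq a k
    have h2 := Nat.choose_mul_succ_eq b k
    have hpos : 0 < (a + 1 - k) * (b + 1) := by
      have : 0 < a + 1 - k := by omega
      positivity
    refine Nat.le_of_mul_le_mul_right ?_ hpos
    calc (a+1).choose k * b.choose k * ((a + 1 - k) * (b + 1))
        = ((a+1).choose k * (a + 1 - k)) * (b.choose k * (b + 1)) := by ring
      _ = (a.choose k * (a + 1)) * ((b+1).choose k * (b + 1 - k)) := by rw [← h1, ← h2]
      _ = (a.choose k * (b+1).choose k) * ((a + 1) * (b + 1 - k)) := by ring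
      _ ≤ (a.choose k * (b+1).choose k) * ((a + 1 - k) * (b + 1)) := by
          refine Nat.mul_le_mul_left _ ?_
          obtain ⟨u, hu⟩ : ∃ u, b + 1 = k + u := ⟨b + 1 - k, by omega⟩
          obtain ⟨v, hv⟩ : ∃ v, a + 1 = k + v := ⟨a + 1 - k, by omega⟩
          have : u ≤ v := by omega
          rw [hu, hv]
          simp only [Nat.add_sub_cancel_left]
          nlinarith

lemma choose_prod_le (t k : ℕ) : ∀ a b : ℕ, a + b ≤ 2 * t →
    a.choose k * b.choose k ≤ t.choose k * t.choose k := by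
  have key : ∀ m b : ℕ, (t + m) + b ≤ 2 * t →
      (t + m).choose k * b.choose k ≤ t.choose k * t.choose k := by
    intro m
    induction m with
    | zero =>
      intro b hb
      exact Nat.mul_le_mul_left _ (Nat.choose_le_choose k (by omega))
    | succ m ih =>
      intro b hb
      have hba : b ≤ t + m := by omega
      calc (t + (m+1)).choose k * b.choose k
          = ((t + m) + 1).choose k * b.choose k := by ring_nf
        _ ≤ (t + m).choose k * (b+1).choose k := choose_step_s4 k (t+m) b hba
        _ ≤ t.choose k * t.choose k := ih (b+1) (by omega)
  intro a b hab
  rcases le_or_gt a t with h | h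
  · rcases le_or_gt b t with h' | h'
    · exact Nat.mul_le_mul (Nat.choose_le_choose k h) (Nat.choose_le_choose k h')
    · obtain ⟨m, rfl⟩ : ∃ m, b = t + m := ⟨b - t, by omega⟩
      rw [mul_comm]
      exact key m a (by omega)
  · obtain ⟨m, rfl⟩ : ∃ m, a = t + m := ⟨a - t, by omega⟩
    exact key m b hab

lemma choose_identity (k u : ℕ) :
    (2*u).choose u * ((2*(k+u)).choose k * ((k + 2*u).choose k)) =
      (2*(k+u)).choose (k+u) * ((k+u).choose k * (k+u).choose k) := by
  have M : 0 < k.factorial * k.factorial * u.factorial * u.factorial := by positivity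
  refine Nat.eq_of_mul_eq_mul_right M ?_
  have e1 : (2*u).choose u * u.factorial * u.factorial = (2*u).factorial := by
    have := Nat.choose_mul_factorial_mul_factorial (show u ≤ 2*u by omega)
    simpa [show 2*u - u = u by omega] using this
  have e2 : (k + 2*u).choose k * k.factorial * (2*u).factorial = (k + 2*u).factorial := by
    have := Nat.choose_mul_factorial_mul_factorial (show k ≤ k + 2*u by omega)
    simpa [show k + 2*u - k = 2*u by omega] using this
  have e3 : (2*(k+u)).choose k * k.factorial * (k + 2*u).factorial = (2*(k+u)).factorial := by
    have := Nat.choose_mul_factorial_mul_factorial (show k ≤ 2*(k+u) by omega)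
    simpa [show 2*(k+u) - k = k + 2*u by omega] using this
  have e4 : (2*(k+u)).choose (k+u) * (k+u).factorial * (k+u).factorial = (2*(k+u)).factorial := by
    have := Nat.choose_mul_factorial_mul_factorial (show k+u ≤ 2*(k+u) by omega)
    simpa [show 2*(k+u) - (k+u) = k+u by omega] using this
  have e5 : (k+u).choose k * k.factorial * u.factorial = (k+u).factorial := by
    have := Nat.choose_mul_factorial_mul_factorial (show k ≤ k + u by omega)
    simpa [show k + u - k = u by omega] using this
  have E1 : (2*u).choose u * (u.factorial * u.factorial) = (2*u).factorial := by
    rw [← mul_assoc]; exact e1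
  calc (2*u).choose u * ((2*(k+u)).choose k * ((k + 2*u).choose k)) *
        (k.factorial * k.factorial * u.factorial * u.factorial)
      = ((2*(k+u)).choose k * k.factorial) * (((k + 2*u).choose k * k.factorial) *
          ((2*u).choose u * (u.factorial * u.factorial))) := by ring
    _ = ((2*(k+u)).choose k * k.factorial) * ((k + 2*u).choose k * k.factorial * (2*u).factorial) := by
        rw [E1]
    _ = (2*(k+u)).choose k * k.factorial * (k + 2*u).factorial := by rw [e2]
    _ = (2*(k+u)).factorial := e3
    _ = (2*(k+u)).choose (k+u) * (k+u).factorial * (k+u).factorial := e4.symm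
    _ = (2*(k+u)).choose (k+u) * ((k+u).choose k * k.factorial * u.factorial) *
          ((k+u).choose k * k.factorial * u.factorial) := by rw [e5]
    _ = (2*(k+u)).choose (k+u) * ((k+u).choose k * (k+u).choose k) *
        (k.factorial * k.factorial * u.factorial * u.factorial) := by ring

/-! ### Counting vertices -/

lemma card_vert_subset (n k : ℕ) (s : Finset (Fin n)) :
    (univ.filter (fun a : KneserVert n k => a.1 ⊆ s)).card = s.card.choose k := by
  rw [← Finset.card_powersetCard k s]
  apply Finset.card_nbij (i := fun a => a.1)
  · intro a ha
    simp only [mem_coe, mem_filter, mem_univ, true_and] at ha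
    exact Finset.mem_powersetCard.2 ⟨ha, a.2⟩
  · intro a _ b _ hab
    exact Subtype.ext hab
  · intro S hS
    simp only [Finset.coe_filter, Set.mem_setOf_eq, mem_coe] at hS ⊢
    rw [Finset.mem_powersetCard] at hS
    exact ⟨⟨S, hS.2⟩, by simpa using hS.1, rfl⟩

lemma card_le_of_subsets (n k : ℕ) (X : Finset (KneserVert n k)) (s : Finset (Fin n))
    (h : ∀ a ∈ X, a.1 ⊆ s) : X.card ≤ s.card.choose k := by
  rw [← card_vert_subset n k s]
  apply Finset.card_le_card
  intro a ha
  simp only [mem_filter, mem_univ, true_and]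
  exact h a ha

lemma sum_ite_mem_one {V : Type*} [Fintype V] [DecidableEq V] (X : Finset V) :
    ∑ a : V, (if a ∈ X then (1:ℕ) else 0) = X.card := by
  simp [Finset.sum_ite_mem, Finset.univ_inter]

lemma pair_sum_card {V : Type*} [Fintype V] [DecidableEq V] (X Y : Finset V) :
    ∑ a : V, ∑ b : V, (if a ∈ X ∧ b ∈ Y then (1:ℕ) else 0) = X.card * Y.card := by
  have h : ∀ a : V, ∑ b : V, (if a ∈ X ∧ b ∈ Y then (1:ℕ) else 0)
      = (if a ∈ X then Y.card else 0) := by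
    intro a
    by_cases h : a ∈ X <;> simp [h, Finset.sum_ite_mem, Finset.univ_inter]
  rw [Finset.sum_congr rfl (fun a _ => h a)]
  simp [Finset.sum_ite_mem, Finset.univ_inter, Finset.sum_const, mul_comm]

/-! ### Lower bound -/

lemma kneser_lower_bound (k t c : ℕ) (hk : 1 ≤ k) (hkt : k ≤ t)
    (X Y : Fin c → Finset (KneserVert (2*t) k))
    (hfam : IsKneserBicliqueFamily (2*t) k c X Y)
    (hcov : ∀ a b : KneserVert (2*t) k, Disjoint a.1 b.1 →
      (2*t - 2*k).choose (t-k) ≤ (Finset.univ.filter (fun i =>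
        KneserEdgeMem (2*t) k (X i) (Y i) a b)).card) :
    (2*t).choose t / 2 ≤ c := by
  obtain ⟨u, rfl⟩ : ∃ u, t = k + u := ⟨t - k, by omega⟩
  have hd : (2*(k+u) - 2*k).choose (k+u-k) = (2*u).choose u := by
    congr 1 <;> omega
  -- per index bound
  have perI : ∀ i : Fin c, (X i).card * (Y i).card ≤ (k+u).choose k * (k+u).choose k := by
    intro i
    set A := (X i).sup (fun a => a.1) with hA
    set B := (Y i).sup (fun a => a.1) with hB
    have hXA : ∀ a ∈ X i, a.1 ⊆ A := fun a ha => Finset.le_sup ha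
    have hYB : ∀ a ∈ Y i, a.1 ⊆ B := fun a ha => Finset.le_sup ha
    have hAB : Disjoint A B := by
      rw [Finset.disjoint_left]
      intro x hxA hxB
      obtain ⟨a, haX, hxa⟩ := Finset.mem_sup.1 hxA
      obtain ⟨b, hbY, hxb⟩ := Finset.mem_sup.1 hxB
      exact Finset.disjoint_left.1 ((hfam i).2 a haX b hbY) hxa hxb
    have hcards : A.card + B.card ≤ 2*(k+u) := by
      rw [← Finset.card_union_of_disjoint hAB]
      calc (A ∪ B).card ≤ Fintype.card (Fin (2*(k+u))) := Finset.card_le_univ _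
        _ = 2*(k+u) := Fintype.card_fin _
    calc (X i).card * (Y i).card
        ≤ A.card.choose k * B.card.choose k :=
          Nat.mul_le_mul (card_le_of_subsets (2*(k+u)) k (X i) A hXA)
            (card_le_of_subsets (2*(k+u)) k (Y i) B hYB)
      _ ≤ (k+u).choose k * (k+u).choose k := choose_prod_le (k+u) k _ _ hcards
  have count1 : ∀ a : KneserVert (2*(k+u)) k,
      (univ.filter (fun b : KneserVert (2*(k+u)) k => Disjoint a.1 b.1)).card
        = (k + 2*u).choose k := by
    intro a
    have heq : (univ.filter (fun b : KneserVert (2*(k+u)) k => Disjoint a.1 b.1))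
        = univ.filter (fun b : KneserVert (2*(k+u)) k => b.1 ⊆ a.1ᶜ) := by
      apply Finset.filter_congr
      intro b _
      constructor
      · intro hdisj x hx
        simp only [Finset.mem_compl]
        exact fun hxa => Finset.disjoint_left.1 hdisj hxa hx
      · intro hsub
        rw [Finset.disjoint_right]
        intro x hxb hxa
        have := hsub hxb
        simp only [Finset.mem_compl] at this
        exact this hxa
    rw [heq, card_vert_subset]
    congr 1
    rw [Finset.card_compl, a.2, Fintype.card_fin]
    omega
  have cardV : Fintype.card (KneserVert (2*(k+u)) k) = (2*(k+u)).choose k := by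
    have h0 : (univ.filter (fun a : KneserVert (2*(k+u)) k =>
        a.1 ⊆ (univ : Finset (Fin (2*(k+u)))))) = univ :=
      Finset.filter_true_of_mem (fun a _ => Finset.subset_univ _)
    have h1 := card_vert_subset (2*(k+u)) k univ
    rw [h0] at h1
    rw [← Finset.card_univ, h1, Finset.card_univ, Fintype.card_fin]
  have main : (2*u).choose u * ((2*(k+u)).choose k * ((k + 2*u).choose k)) ≤
      c * (2 * ((k+u).choose k * (k+u).choose k)) := by
    calc (2*u).choose u * ((2*(k+u)).choose k * ((k + 2*u).choose k))
        = ∑ a : KneserVert (2*(k+u)) k, ∑ b ∈ univ.filter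
            (fun b : KneserVert (2*(k+u)) k => Disjoint a.1 b.1), (2*u).choose u := by
          simp only [Finset.sum_const, smul_eq_mul, count1]
          rw [Finset.card_univ, cardV]
          ring
      _ ≤ ∑ a : KneserVert (2*(k+u)) k, ∑ b ∈ univ.filter
            (fun b : KneserVert (2*(k+u)) k => Disjoint a.1 b.1),
            (univ.filter (fun i => KneserEdgeMem (2*(k+u)) k (X i) (Y i) a b)).card := by
          apply Finset.sum_le_sum
          intro a _
          apply Finset.sum_le_sum
          intro b hb
          simp only [mem_filter, mem_univ, true_and] at hb
          have := hcov a b hb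
          rwa [hd] at this
      _ = ∑ a : KneserVert (2*(k+u)) k, ∑ b ∈ univ.filter
            (fun b : KneserVert (2*(k+u)) k => Disjoint a.1 b.1),
            ∑ i : Fin c, (if KneserEdgeMem (2*(k+u)) k (X i) (Y i) a b then 1 else 0) := by
          refine Finset.sum_congr rfl fun a _ => Finset.sum_congr rfl fun b _ => ?_
          exact Finset.card_filter _ _
      _ = ∑ i : Fin c, ∑ a : KneserVert (2*(k+u)) k, ∑ b ∈ univ.filter
            (fun b : KneserVert (2*(k+u)) k => Disjoint a.1 b.1),
            (if KneserEdgeMem (2*(k+u)) k (X i) (Y i) a b then 1 else 0) := by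
          rw [Finset.sum_comm]
          apply Finset.sum_congr rfl
          intro a _
          rw [Finset.sum_comm]
      _ ≤ ∑ i : Fin c, 2 * ((X i).card * (Y i).card) := by
          apply Finset.sum_le_sum
          intro i _
          calc ∑ a : KneserVert (2*(k+u)) k, ∑ b ∈ univ.filter
                (fun b : KneserVert (2*(k+u)) k => Disjoint a.1 b.1),
                (if KneserEdgeMem (2*(k+u)) k (X i) (Y i) a b then 1 else 0)
              ≤ ∑ a : KneserVert (2*(k+u)) k, ∑ b : KneserVert (2*(k+u)) k,
                (if KneserEdgeMem (2*(k+u)) k (X i) (Y i) a b then 1 else 0) := by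
                apply Finset.sum_le_sum
                intro a _
                exact Finset.sum_le_sum_of_subset (Finset.filter_subset _ _)
            _ ≤ ∑ a : KneserVert (2*(k+u)) k, ∑ b : KneserVert (2*(k+u)) k,
                ((if a ∈ X i ∧ b ∈ Y i then 1 else 0) +
                 (if b ∈ X i ∧ a ∈ Y i then 1 else 0)) := by
                apply Finset.sum_le_sum
                intro a _
                apply Finset.sum_le_sum
                intro b _
                unfold KneserEdgeMem
                by_cases h1 : a ∈ X i ∧ b ∈ Y i <;> by_cases h2 : b ∈ X i ∧ a ∈ Y i <;> simp [h1, h2]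
            _ = (X i).card * (Y i).card + (X i).card * (Y i).card := by
                rw [Finset.sum_congr rfl (fun a _ => Finset.sum_add_distrib),
                  Finset.sum_add_distrib, pair_sum_card]
                congr 1
                rw [Finset.sum_comm, pair_sum_card]
            _ = 2 * ((X i).card * (Y i).card) := by ring
      _ ≤ ∑ i : Fin c, 2 * ((k+u).choose k * (k+u).choose k) :=
          Finset.sum_le_sum (fun i _ => Nat.mul_le_mul_left 2 (perI i))
      _ = c * (2 * ((k+u).choose k * (k+u).choose k)) := by
          rw [Finset.sum_const, Finset.card_univ, Fintype.card_fin, smul_eq_mul]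
  have hP : 0 < (k+u).choose k * (k+u).choose k := by
    have := Nat.choose_pos (show k ≤ k + u by omega)
    positivity
  have hmain2 : (2*(k+u)).choose (k+u) * ((k+u).choose k * (k+u).choose k)
      ≤ (2 * c) * ((k+u).choose k * (k+u).choose k) := by
    rw [← choose_identity k u]
    calc (2*u).choose u * ((2*(k+u)).choose k * ((k + 2*u).choose k))
        ≤ c * (2 * ((k+u).choose k * (k+u).choose k)) := main
      _ = (2 * c) * ((k+u).choose k * (k+u).choose k) := by ring
  have := Nat.le_of_mul_le_mul_right hmain2 hP
  omega
lemma kneser_construction (k t : ℕ) (hk : 1 ≤ k) (hkt : k ≤ t) :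
    ∃ X Y : Fin ((2*t).choose t / 2) → Finset (KneserVert (2*t) k),
      IsKneserBicliqueFamily (2*t) k ((2*t).choose t / 2) X Y ∧
      ∀ a b : KneserVert (2*t) k, Disjoint a.1 b.1 →
        (univ.filter (fun i => KneserEdgeMem (2*t) k (X i) (Y i) a b)).card
          = (2*t - 2*k).choose (t-k) := by
  have ht : 1 ≤ t := hk.trans hkt
  have hn : 0 < 2*t := by omega
  set z : Fin (2*t) := ⟨0, hn⟩ with hz
  set P : Finset (Finset (Fin (2*t))) :=
    (univ.powersetCard t).filter (fun S => z ∈ S) with hP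
  have hPcard : 2 * P.card = (2*t).choose t := by
    have hsplit := Finset.card_filter_add_card_filter_not
      (s := (univ : Finset (Fin (2*t))).powersetCard t) (p := fun S : Finset (Fin (2*t)) => z ∈ S)
    have hbij : P.card = ((univ.powersetCard t).filter (fun S => ¬ z ∈ S)).card := by
      apply Finset.card_nbij (i := fun S => Sᶜ)
      · intro S hS
        simp only [mem_coe, hP, mem_filter, Finset.mem_powersetCard] at hS ⊢
        refine ⟨⟨Finset.subset_univ _, ?_⟩, ?_⟩
        · rw [Finset.card_compl, Fintype.card_fin, hS.1.2]; omega
        · simp [Finset.mem_compl, hS.2]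
      · intro S _ T _ h
        exact compl_injective h
      · intro T hT
        simp only [Finset.coe_filter, Set.mem_setOf_eq, mem_coe, Set.mem_image] at hT ⊢
        rw [Finset.mem_powersetCard] at hT
        refine ⟨Tᶜ, ?_, compl_compl T⟩
        simp only [hP, mem_coe, mem_filter, Finset.mem_powersetCard]
        refine ⟨⟨Finset.subset_univ _, ?_⟩, ?_⟩
        · rw [Finset.card_compl, Fintype.card_fin, hT.1.2]; omega
        · simp [Finset.mem_compl, hT.2]
    have hpc : ((univ : Finset (Fin (2*t))).powersetCard t).card
        = (2*t).choose t := by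
      rw [Finset.card_powersetCard, Finset.card_univ, Fintype.card_fin]
    rw [← hP, ← hbij, hpc] at hsplit
    omega
  have hPm : P.card = (2*t).choose t / 2 := by omega
  set σ : Fin ((2*t).choose t / 2) ≃ {S // S ∈ P} :=
    (finCongr hPm.symm).trans P.equivFin.symm with hσ
  have haempty : ∀ a : KneserVert (2*t) k, a.1.Nonempty := by
    intro a
    rw [← Finset.card_pos, a.2]; omega
  refine ⟨fun i => univ.filter (fun a => a.1 ⊆ (σ i).1),
          fun i => univ.filter (fun a => a.1 ⊆ ((σ i).1)ᶜ), ?_, ?_⟩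
  · intro i
    constructor
    · rw [Finset.disjoint_left]
      intro a haX haY
      simp only [mem_filter, mem_univ, true_and] at haX haY
      obtain ⟨x, hx⟩ := haempty a
      have h1 := haX hx
      have h2 := haY hx
      simp only [Finset.mem_compl] at h2
      exact h2 h1
    · intro a haX b hbY
      simp only [mem_filter, mem_univ, true_and] at haX hbY
      rw [Finset.disjoint_left]
      intro x hxa hxb
      have h1 := haX hxa
      have h2 := hbY hxb
      simp only [Finset.mem_compl] at h2
      exact h2 h1
  · intro a b hab
    have hiff : ∀ i, KneserEdgeMem (2*t) k
        (univ.filter (fun a' : KneserVert (2*t) k => a'.1 ⊆ (σ i).1))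
        (univ.filter (fun a' : KneserVert (2*t) k => a'.1 ⊆ ((σ i).1)ᶜ)) a b ↔
        ((a.1 ⊆ (σ i).1 ∧ b.1 ⊆ ((σ i).1)ᶜ) ∨ (b.1 ⊆ (σ i).1 ∧ a.1 ⊆ ((σ i).1)ᶜ)) := by
      intro i
      unfold KneserEdgeMem
      simp only [mem_filter, mem_univ, true_and]
    have step1 : (univ.filter (fun i => KneserEdgeMem (2*t) k
        (univ.filter (fun a' : KneserVert (2*t) k => a'.1 ⊆ (σ i).1))
        (univ.filter (fun a' : KneserVert (2*t) k => a'.1 ⊆ ((σ i).1)ᶜ)) a b)).card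
        = (P.filter (fun S => (a.1 ⊆ S ∧ b.1 ⊆ Sᶜ) ∨ (b.1 ⊆ S ∧ a.1 ⊆ Sᶜ))).card := by
      apply Finset.card_nbij (i := fun i => (σ i).1)
      · intro i hi
        simp only [mem_coe, mem_filter, mem_univ, true_and] at hi ⊢
        exact ⟨(σ i).2, (hiff i).1 hi⟩
      · intro i _ j _ hij
        exact σ.injective (Subtype.ext hij)
      · intro S hS
        simp only [Finset.coe_filter, Set.mem_setOf_eq, mem_coe, Set.mem_image] at hS ⊢
        obtain ⟨hSP, hSpred⟩ := hS
        refine ⟨σ.symm ⟨S, hSP⟩, ?_, by simp⟩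
        refine ⟨Finset.mem_univ _, ?_⟩
        rw [hiff]
        simpa using hSpred
    have step2 : (P.filter (fun S => (a.1 ⊆ S ∧ b.1 ⊆ Sᶜ) ∨ (b.1 ⊆ S ∧ a.1 ⊆ Sᶜ))).card
        = ((univ.powersetCard t).filter (fun S => a.1 ⊆ S ∧ b.1 ⊆ Sᶜ)).card := by
      apply Finset.card_nbij' (i := fun T => if a.1 ⊆ T then T else Tᶜ)
        (j := fun S => if z ∈ S then S else Sᶜ)
      · intro T hT
        simp only [mem_coe, hP, mem_filter, Finset.mem_powersetCard] at hT ⊢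
        obtain ⟨⟨⟨_, hTcard⟩, hzT⟩, hpred⟩ := hT
        by_cases h : a.1 ⊆ T
        · simp only [if_pos h]
          refine ⟨⟨Finset.subset_univ _, hTcard⟩, h, ?_⟩
          rcases hpred with ⟨_, hb⟩ | ⟨_, ha⟩
          · exact hb
          · exfalso
            obtain ⟨x, hx⟩ := haempty a
            have := ha hx
            simp only [Finset.mem_compl] at this
            exact this (h hx)
        · simp only [if_neg h]
          rcases hpred with ⟨ha, _⟩ | ⟨hb, ha⟩
          · exact absurd ha h
          · refine ⟨⟨Finset.subset_univ _, ?_⟩, ha, ?_⟩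
            · rw [Finset.card_compl, Fintype.card_fin, hTcard]; omega
            · rw [compl_compl]; exact hb
      · intro S hS
        simp only [mem_coe, hP, mem_filter, Finset.mem_powersetCard] at hS ⊢
        obtain ⟨⟨_, hScard⟩, haS, hbS⟩ := hS
        by_cases h : z ∈ S
        · simp only [if_pos h]
          exact ⟨⟨⟨Finset.subset_univ _, hScard⟩, h⟩, Or.inl ⟨haS, hbS⟩⟩
        · simp only [if_neg h]
          refine ⟨⟨⟨Finset.subset_univ _, ?_⟩, by simp [Finset.mem_compl, h]⟩, ?_⟩
          · rw [Finset.card_compl, Fintype.card_fin, hScard]; omega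
          · right
            rw [compl_compl]
            exact ⟨hbS, haS⟩
      · intro T hT
        simp only [mem_coe, hP, mem_filter, Finset.mem_powersetCard] at hT
        obtain ⟨⟨_, hzT⟩, _⟩ := hT
        by_cases h : a.1 ⊆ T
        · simp [h, hzT]
        · simp only [if_neg h]
          have : z ∉ Tᶜ := by simp [Finset.mem_compl, hzT]
          simp [this, compl_compl]
      · intro S hS
        simp only [mem_coe, mem_filter, Finset.mem_powersetCard] at hS
        obtain ⟨_, haS, hbS⟩ := hS
        by_cases h : z ∈ S
        · simp [h, haS]
        · simp only [if_neg h]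
          have : ¬ a.1 ⊆ Sᶜ := by
            intro hsub
            obtain ⟨x, hx⟩ := haempty a
            have := hsub hx
            simp only [Finset.mem_compl] at this
            exact this (haS hx)
          simp [this, compl_compl]
    have step3 : ((univ.powersetCard t).filter (fun S => a.1 ⊆ S ∧ b.1 ⊆ Sᶜ)).card
        = (2*t - 2*k).choose (t-k) := by
      have htarget : (((a.1 ∪ b.1)ᶜ).powersetCard (t-k)).card = (2*t - 2*k).choose (t-k) := by
        rw [Finset.card_powersetCard, Finset.card_compl,
          Finset.card_union_of_disjoint hab, a.2, b.2, Fintype.card_fin]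
        congr 1
        omega
      rw [← htarget]
      apply Finset.card_nbij' (i := fun S => S \ a.1) (j := fun R => R ∪ a.1)
      · intro S hS
        simp only [mem_coe, mem_filter, Finset.mem_powersetCard] at hS ⊢
        obtain ⟨⟨_, hScard⟩, haS, hbS⟩ := hS
        constructor
        · intro x hx
          simp only [Finset.mem_sdiff] at hx
          simp only [Finset.mem_compl, Finset.mem_union]
          push_neg
          refine ⟨hx.2, ?_⟩
          intro hxb
          have := hbS hxb
          simp only [Finset.mem_compl] at this
          exact this hx.1
        · rw [Finset.card_sdiff_of_subset haS, hScard, a.2]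
      · intro R hR
        simp only [mem_coe, mem_filter, Finset.mem_powersetCard] at hR ⊢
        obtain ⟨hRsub, hRcard⟩ := hR
        have hdisjRa : Disjoint R a.1 := by
          rw [Finset.disjoint_left]
          intro x hxR hxa
          have := hRsub hxR
          simp only [Finset.mem_compl, Finset.mem_union] at this
          exact this (Or.inl hxa)
        refine ⟨⟨Finset.subset_univ _, ?_⟩, Finset.subset_union_right, ?_⟩
        · rw [Finset.card_union_of_disjoint hdisjRa, hRcard, a.2]; omega
        · intro x hxb
          simp only [Finset.mem_compl, Finset.mem_union]
          push_neg
          constructor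
          · intro hxR
            have := hRsub hxR
            simp only [Finset.mem_compl, Finset.mem_union] at this
            exact this (Or.inr hxb)
          · intro hxa
            exact Finset.disjoint_left.1 hab hxa hxb
      · intro S hS
        simp only [mem_coe, mem_filter, Finset.mem_powersetCard] at hS
        exact Finset.sdiff_union_of_subset hS.2.1
      · intro R hR
        simp only [mem_coe, Finset.mem_powersetCard] at hR
        apply Finset.union_sdiff_cancel_right
        rw [Finset.disjoint_left]
        intro x hxR hxa
        have := hR.1 hxR
        simp only [Finset.mem_compl, Finset.mem_union] at this
        exact this (Or.inl hxa)
    rw [step1, step2, step3]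
theorem stmt_4 (k t : ℕ) (hk : 1 ≤ k) (hkt : k ≤ t) :
    bcKneser (2 * t) k (Nat.choose (2 * t - 2 * k) (t - k)) =
        Nat.choose (2 * t) t / 2 ∧
      bpKneser (2 * t) k (Nat.choose (2 * t - 2 * k) (t - k)) =
        Nat.choose (2 * t) t / 2 := by
  obtain ⟨X, Y, hfam, hexact⟩ := kneser_construction k t hk hkt
  have memb_bc : ((2*t).choose t / 2) ∈ {c : ℕ | ∃ X Y : Fin c → Finset (KneserVert (2*t) k),
      IsKneserBicliqueFamily (2*t) k c X Y ∧
      ∀ a b : KneserVert (2*t) k, Disjoint a.1 b.1 →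
        (2*t - 2*k).choose (t-k) ≤ (Finset.univ.filter (fun i =>
          KneserEdgeMem (2*t) k (X i) (Y i) a b)).card} :=
    ⟨X, Y, hfam, fun a b hab => le_of_eq (hexact a b hab).symm⟩
  have memb_bp : ((2*t).choose t / 2) ∈ {c : ℕ | ∃ X Y : Fin c → Finset (KneserVert (2*t) k),
      IsKneserBicliqueFamily (2*t) k c X Y ∧
      ∀ a b : KneserVert (2*t) k, Disjoint a.1 b.1 →
        (Finset.univ.filter (fun i =>
          KneserEdgeMem (2*t) k (X i) (Y i) a b)).card = (2*t - 2*k).choose (t-k)} :=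
    ⟨X, Y, hfam, hexact⟩
  constructor
  · unfold bcKneser
    apply le_antisymm (Nat.sInf_le memb_bc)
    apply le_csInf ⟨_, memb_bc⟩
    rintro c ⟨X', Y', hfam', hcov'⟩
    exact kneser_lower_bound k t c hk hkt X' Y' hfam' hcov'
  · unfold bpKneser
    apply le_antisymm (Nat.sInf_le memb_bp)
    apply le_csInf ⟨_, memb_bp⟩
    rintro c ⟨X', Y', hfam', hcov'⟩
    exact kneser_lower_bound k t c hk hkt X' Y' hfam'
      (fun a b hab => le_of_eq (hcov' a b hab).symm)
end

section
/- Let G be a finite graph with t vertices whose minimum degree satisfies δ(G) > w, and suppose G admits a (w,d)-covering consisting of n sets. Then there exists a (1,w;d)-CFF(n,t); consequently N((1,w;d),t) ≤ N(G,w;d). -/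
/-- `A` is a `(w,d)`-covering of the graph `G`: for every edge `{u,v}` of `G`
and every `w`-subset `W` of vertices disjoint from `{u,v}`, at least `d` of the
sets `A j` contain both `u` and `v` and are disjoint from `W`. -/
def IsCovering {V : Type*} [Fintype V] [DecidableEq V] (G : SimpleGraph V)
    (w d : ℕ) {n : ℕ} (A : Fin n → Finset V) : Prop :=
  ∀ u v : V, G.Adj u v → ∀ W : Finset V, W.card = w → u ∉ W → v ∉ W →
    d ≤ (Finset.univ.filter
      (fun j => u ∈ A j ∧ v ∈ A j ∧ Disjoint W (A j))).card

/-- `N(G,w;d)`: the minimum number of sets in a `(w,d)`-covering of `G`. -/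
noncomputable def NGraphCov {V : Type*} [Fintype V] [DecidableEq V]
    (G : SimpleGraph V) (w d : ℕ) : ℕ :=
  sInf {n : ℕ | ∃ A : Fin n → Finset V, IsCovering G w d A}

/-!
STATEMENT 7: Let G be a finite graph with t vertices whose minimum degree
satisfies δ(G) > w, and suppose G admits a (w,d)-covering consisting of n
sets.  Then there exists a (1,w;d)-CFF(n,t); consequently
N((1,w;d),t) ≤ N(G,w;d).
-/

theorem stmt_7 {V : Type*} [Fintype V] [DecidableEq V] (G : SimpleGraph V)
    [DecidableRel G.Adj] (w d n t : ℕ) (hw : 0 < w) (hd : 0 < d)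
    (ht : Fintype.card V = t) (hδ : ∀ v : V, w < G.degree v)
    (A : Fin n → Finset V) (hA : IsCovering G w d A) :
    ExistsCFF 1 w d n t ∧ NCFF 1 w d t ≤ NGraphCov G w d := by
  have key : ∀ (m : ℕ) (A' : Fin m → Finset V), IsCovering G w d A' →
      ExistsCFF 1 w d m t := by
    intro m A' hA'
    have e : V ≃ Fin t := Fintype.equivFinOfCardEq ht
    refine ⟨fun i => Finset.univ.filter (fun j => e.symm i ∈ A' j), ?_⟩
    intro L M hLM hL hM
    obtain ⟨i, rfl⟩ := Finset.card_eq_one.mp hL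
    set x : V := e.symm i with hx
    set W : Finset V := M.image e.symm with hW
    have hWcard : W.card = w := by
      rw [hW, Finset.card_image_of_injective _ e.symm.injective, hM]
    have hxW : x ∉ W := by
      intro hmem
      obtain ⟨m', hm', heq⟩ := Finset.mem_image.mp hmem
      have : m' = i := e.symm.injective heq
      subst this
      exact (Finset.disjoint_singleton_left.mp hLM) hm'
    -- find a neighbor of x not in W
    have hcard : W.card < (G.neighborFinset x).card := by
      rw [hWcard, G.card_neighborFinset_eq_degree]; exact hδ x
    obtain ⟨u, hu⟩ : ∃ u, u ∈ G.neighborFinset x \ W := by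
      have hpos : 0 < (G.neighborFinset x \ W).card :=
        lt_of_lt_of_le (Nat.sub_pos_of_lt hcard) (Finset.le_card_sdiff W _)
      exact Finset.card_pos.mp hpos
    rw [Finset.mem_sdiff, SimpleGraph.mem_neighborFinset] at hu
    obtain ⟨hadj, huW⟩ := hu
    have hxW' : x ∉ W := hxW
    have hcov := hA' x u hadj W hWcard hxW' huW
    refine le_trans hcov (Finset.card_le_card ?_)
    intro j hj
    simp only [Finset.mem_filter, Finset.mem_univ, true_and] at hj
    obtain ⟨hxA, huA, hdisj⟩ := hj
    rw [Finset.mem_sdiff]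
    constructor
    · simp [Finset.inf_singleton, Finset.mem_filter, hxA]
      exact hxA
    · intro hsup
      rw [Finset.mem_sup] at hsup
      obtain ⟨m', hm', hjm⟩ := hsup
      simp only [Finset.mem_filter, Finset.mem_univ, true_and] at hjm
      exact (Finset.disjoint_left.mp hdisj
        (Finset.mem_image_of_mem e.symm hm')) hjm
  refine ⟨key n A hA, ?_⟩
  have hne : ({m : ℕ | ∃ A' : Fin m → Finset V, IsCovering G w d A'}).Nonempty :=
    ⟨n, A, hA⟩
  have hmem := Nat.sInf_mem hne
  obtain ⟨A', hA'⟩ := hmem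
  exact Nat.sInf_le (key _ A' hA')
end

section
/- For all positive integers t₁, t₂, and d, the key pool number of the complete bipartite graph K_{t₁,t₂} satisfies N(K_{t₁,t₂},1;d) ≤ N((1,1;d),t₁) + N((1,1;d),t₂). -/
/-!
STATEMENT 9: For all positive integers t₁, t₂, and d, the key pool number of
the complete bipartite graph K_{t₁,t₂} satisfies
N(K_{t₁,t₂},1;d) ≤ N((1,1;d),t₁) + N((1,1;d),t₂).
-/

lemma exists_cff (d t : ℕ) : ExistsCFF 1 1 d (t * d) t := by
  refine ⟨fun i => Finset.univ.image (fun k : Fin d => finProdFinEquiv (i, k)), ?_⟩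
  intro L M hdis hL hM
  obtain ⟨a, rfl⟩ := Finset.card_eq_one.mp hL
  obtain ⟨a', rfl⟩ := Finset.card_eq_one.mp hM
  have hne : a ≠ a' := (by simpa using hdis)
  simp only [Finset.inf_singleton, Finset.sup_singleton]
  have hdisj : Disjoint (Finset.univ.image (fun k : Fin d => finProdFinEquiv (a, k)))
      (Finset.univ.image (fun k : Fin d => finProdFinEquiv (a', k))) := by
    rw [Finset.disjoint_left]
    rintro x hx hx'
    simp only [Finset.mem_image, Finset.mem_univ, true_and] at hx hx'
    obtain ⟨k, hk⟩ := hx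
    obtain ⟨k', hk'⟩ := hx'
    have := finProdFinEquiv.injective (hk.trans hk'.symm)
    exact hne (congrArg Prod.fst this)
  rw [Finset.sdiff_eq_self_of_disjoint hdisj]
  have hinj : Function.Injective (fun k : Fin d => finProdFinEquiv (a, k)) := by
    intro x y h
    exact congrArg Prod.snd (finProdFinEquiv.injective h)
  rw [Finset.card_image_of_injective _ hinj, Finset.card_univ, Fintype.card_fin]

theorem stmt_9 (t₁ t₂ d : ℕ) (ht₁ : 0 < t₁) (ht₂ : 0 < t₂) (hd : 0 < d) :
    NGraphCov (completeBipartiteGraph (Fin t₁) (Fin t₂)) 1 d ≤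
      NCFF 1 1 d t₁ + NCFF 1 1 d t₂ := by
  have h₁ : ExistsCFF 1 1 d (NCFF 1 1 d t₁) t₁ :=
    Nat.sInf_mem (s := {n : ℕ | ExistsCFF 1 1 d n t₁}) ⟨t₁ * d, exists_cff d t₁⟩
  have h₂ : ExistsCFF 1 1 d (NCFF 1 1 d t₂) t₂ :=
    Nat.sInf_mem (s := {n : ℕ | ExistsCFF 1 1 d n t₂}) ⟨t₂ * d, exists_cff d t₂⟩
  set n₁ := NCFF 1 1 d t₁ with hn₁
  set n₂ := NCFF 1 1 d t₂ with hn₂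
  obtain ⟨B₁, hB₁⟩ := h₁
  obtain ⟨B₂, hB₂⟩ := h₂
  -- the two families of key pools
  set A1 : Fin n₁ → Finset (Fin t₁ ⊕ Fin t₂) := fun x =>
    (Finset.univ.filter (fun i => x ∈ B₁ i)).map ⟨Sum.inl, Sum.inl_injective⟩ ∪
      Finset.univ.map ⟨Sum.inr, Sum.inr_injective⟩ with hA1
  set A2 : Fin n₂ → Finset (Fin t₁ ⊕ Fin t₂) := fun y =>
    Finset.univ.map ⟨Sum.inl, Sum.inl_injective⟩ ∪
      (Finset.univ.filter (fun k => y ∈ B₂ k)).map ⟨Sum.inr, Sum.inr_injective⟩ with hA2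
  set A : Fin (n₁ + n₂) → Finset (Fin t₁ ⊕ Fin t₂) := Fin.addCases A1 A2 with hA
  -- membership facts
  have memA1 : ∀ (x : Fin n₁) (v : Fin t₁ ⊕ Fin t₂),
      v ∈ A1 x ↔ (∀ i, v = Sum.inl i → x ∈ B₁ i) := by
    intro x v
    rcases v with i | k <;> simp [hA1]
  have memA2 : ∀ (y : Fin n₂) (v : Fin t₁ ⊕ Fin t₂),
      v ∈ A2 y ↔ (∀ k, v = Sum.inr k → y ∈ B₂ k) := by
    intro y v
    rcases v with i | k <;> simp [hA2]
  -- the key counting lemma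
  have key : ∀ (a : Fin t₁) (b : Fin t₂) (w : Fin t₁ ⊕ Fin t₂),
      w ≠ Sum.inl a → w ≠ Sum.inr b →
      d ≤ (Finset.univ.filter
        (fun j => Sum.inl a ∈ A j ∧ Sum.inr b ∈ A j ∧ Disjoint ({w} : Finset _) (A j))).card := by
    intro a b w hwa hwb
    rcases w with a' | b'
    · -- w = inl a'
      have hne : a ≠ a' := fun h => hwa (by rw [h])
      have hcff := hB₁ {a} {a'} (Finset.disjoint_singleton.mpr hne) (by simp) (by simp)
      simp only [Finset.inf_singleton, Finset.sup_singleton] at hcff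
      refine le_trans hcff (Finset.card_le_card_of_injOn (Fin.castAdd n₂) ?_ ?_)
      · intro x hx
        rw [Finset.mem_coe, Finset.mem_sdiff] at hx
        have hAx : A (Fin.castAdd n₂ x) = A1 x := Fin.addCases_left x
        simp only [Finset.mem_coe, Finset.mem_filter, Finset.mem_univ, true_and, hAx]
        refine ⟨(memA1 x _).mpr ?_, (memA1 x _).mpr ?_, ?_⟩
        · intro i h; obtain rfl := Sum.inl.inj h; exact hx.1
        · intro i h; exact absurd h (by simp)
        · rw [Finset.disjoint_singleton_left, memA1]
          push_neg
          exact ⟨a', rfl, hx.2⟩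
      · intro x _ y _ h
        have : (Fin.castAdd n₂ x).val = (Fin.castAdd n₂ y).val := congrArg Fin.val h
        simpa [Fin.ext_iff] using this
    · -- w = inr b'
      have hne : b ≠ b' := fun h => hwb (by rw [h])
      have hcff := hB₂ {b} {b'} (Finset.disjoint_singleton.mpr hne) (by simp) (by simp)
      simp only [Finset.inf_singleton, Finset.sup_singleton] at hcff
      refine le_trans hcff (Finset.card_le_card_of_injOn (Fin.natAdd n₁) ?_ ?_)
      · intro y hy
        rw [Finset.mem_coe, Finset.mem_sdiff] at hy
        have hAy : A (Fin.natAdd n₁ y) = A2 y := Fin.addCases_right y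
        simp only [Finset.mem_coe, Finset.mem_filter, Finset.mem_univ, true_and, hAy]
        refine ⟨(memA2 y _).mpr ?_, (memA2 y _).mpr ?_, ?_⟩
        · intro k h; exact absurd h (by simp)
        · intro k h; obtain rfl := Sum.inr.inj h; exact hy.1
        · rw [Finset.disjoint_singleton_left, memA2]
          push_neg
          exact ⟨b', rfl, hy.2⟩
      · intro x _ y _ h
        have : (Fin.natAdd n₁ x).val = (Fin.natAdd n₁ y).val := congrArg Fin.val h
        simp only [Fin.coe_natAdd] at this
        exact Fin.ext (Nat.add_left_cancel this)
  -- assemble the covering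
  have hcov : IsCovering (completeBipartiteGraph (Fin t₁) (Fin t₂)) 1 d A := by
    intro u v hadj W hW hu hv
    obtain ⟨w, rfl⟩ := Finset.card_eq_one.mp hW
    rcases u with a | b <;> rcases v with a' | b'
    · simp at hadj
    · -- u = inl a, v = inr b'
      have hwa : w ≠ Sum.inl a := fun h => hu (by simp [h])
      have hwb : w ≠ Sum.inr b' := fun h => hv (by simp [h])
      exact key a b' w hwa hwb
    · -- u = inr b, v = inl a'
      have hwa : w ≠ Sum.inl a' := fun h => hv (by simp [h])
      have hwb : w ≠ Sum.inr b := fun h => hu (by simp [h])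
      have := key a' b w hwa hwb
      refine le_trans this (le_of_eq ?_)
      congr 1
      apply Finset.filter_congr
      intro j _
      constructor
      · rintro ⟨h1, h2, h3⟩; exact ⟨h2, h1, h3⟩
      · rintro ⟨h1, h2, h3⟩; exact ⟨h2, h1, h3⟩
    · simp at hadj
  exact Nat.sInf_le ⟨A, hcov⟩
end

section
/- For every integer n ≥ 3, the key pool number of the cycle C_n equals the biclique covering number of the graph obtained from the complete bipartite graph K_{n,n} by removing the edges of a spanning (Hamiltonian) cycle of length 2n, i.e., N(C_n) = bc(K_{n,n} \ C_{2n}). -/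
/-- The adjacency relation of the bipartite graph `K_{n,n} \ C_{2n}`, i.e.
the complete bipartite graph with parts two copies of `Fin n` from which the
edges of the Hamiltonian cycle
`l_0 r_0 l_1 r_1 … l_{n-1} r_{n-1} l_0` (of length `2n`) have been removed:
the left vertex `i` is adjacent to the right vertex `j` iff `j ≠ i` and
`j ≠ i + 1 (mod n)`. -/
def KnnMinusCycleRel (n : ℕ) (i j : Fin n) : Prop :=
  j.val ≠ i.val ∧ j.val ≠ (i.val + 1) % n

instance (n : ℕ) (i j : Fin n) : Decidable (KnnMinusCycleRel n i j) := by
  unfold KnnMinusCycleRel; infer_instance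

/-- The biclique covering number `bc(K_{n,n} \ C_{2n})`: the smallest number
of bicliques (each given by a set `X k` of left vertices and a set `Y k` of
right vertices, all cross pairs being adjacent) covering every edge of
`K_{n,n} \ C_{2n}`. -/
noncomputable def bcKnnMinusCycle (n : ℕ) : ℕ :=
  sInf {c : ℕ | ∃ X Y : Fin c → Finset (Fin n),
    (∀ k : Fin c, ∀ a ∈ X k, ∀ b ∈ Y k, KnnMinusCycleRel n a b) ∧
    ∀ a b : Fin n, KnnMinusCycleRel n a b → ∃ k : Fin c, a ∈ X k ∧ b ∈ Y k}

/-!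
STATEMENT 12: For every integer n ≥ 3, the key pool number of the cycle C_n
equals the biclique covering number of the graph obtained from the complete
bipartite graph K_{n,n} by removing the edges of a Hamiltonian cycle of
length 2n, i.e. N(C_n) = bc(K_{n,n} \ C_{2n}).
-/

theorem stmt_12 (n : ℕ) (hn : 3 ≤ n) :
    NGraphCov (SimpleGraph.cycleGraph n) 1 1 = bcKnnMinusCycle n := by
  obtain ⟨m, rfl⟩ : ∃ m, n = m + 3 := ⟨n - 3, by omega⟩
  have hval1 : (1 : Fin (m + 3)).val = 1 := rfl
  have hvadd : ∀ a : Fin (m + 3), (a + 1).val = (a.val + 1) % (m + 3) := by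
    intro a
    rw [Fin.val_add, hval1]
  unfold NGraphCov bcKnnMinusCycle
  congr 1
  ext c
  simp only [Set.mem_setOf_eq]
  constructor
  · rintro ⟨A, hA⟩
    refine ⟨fun k => Finset.univ.filter (fun a => a ∈ A k ∧ a + 1 ∈ A k),
      fun k => (A k)ᶜ, ?_, ?_⟩
    · intro k a ha b hb
      simp only [Finset.mem_filter, Finset.mem_univ, true_and] at ha
      simp only [Finset.mem_compl] at hb
      constructor
      · intro h
        exact hb ((Fin.ext h : b = a) ▸ ha.1)
      · intro h
        have : b = a + 1 := Fin.ext (by rw [hvadd a]; exact h)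
        exact hb (this ▸ ha.2)
    · intro a b hab
      have hadj : (SimpleGraph.cycleGraph (m + 3)).Adj a (a + 1) := by
        have : (m + 3) = (m + 1) + 2 := by omega
        rw [SimpleGraph.cycleGraph_adj']
        right
        have : a + 1 - a = 1 := by abel
        rw [this, hval1]
      have hba : a ≠ b := fun h => hab.1 (h ▸ rfl)
      have hba' : a + 1 ≠ b := by
        intro h
        exact hab.2 (by rw [← h, hvadd a])
      have := hA a (a + 1) hadj {b} (Finset.card_singleton b)
        (by simp [hba]) (by simp [hba'])
      obtain ⟨j, hj⟩ := Finset.card_pos.mp (lt_of_lt_of_le Nat.zero_lt_one this)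
      simp only [Finset.mem_filter, Finset.mem_univ, true_and,
        Finset.disjoint_singleton_left] at hj
      exact ⟨j, by simp [hj.1, hj.2.1], by simp [hj.2.2]⟩
  · rintro ⟨X, Y, hXY, hcov⟩
    refine ⟨fun k => (Y k)ᶜ, ?_⟩
    intro u v hadj W hW hu hv
    obtain ⟨x, rfl⟩ := Finset.card_eq_one.mp hW
    simp only [Finset.mem_singleton] at hu hv
    have key : ∀ a : Fin (m + 3), x ≠ a → x ≠ a + 1 →
        ∃ k, a ∉ Y k ∧ a + 1 ∉ Y k ∧ x ∈ Y k := by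
      intro a hxa hxa1
      have hrel : KnnMinusCycleRel (m + 3) a x := by
        refine ⟨fun h => hxa (Fin.ext h), fun h => hxa1 (Fin.ext ?_)⟩
        rw [hvadd a]; exact h
      obtain ⟨k, hk1, hk2⟩ := hcov a x hrel
      refine ⟨k, ?_, ?_, hk2⟩
      · intro h
        exact (hXY k a hk1 a h).1 rfl
      · intro h
        exact (hXY k a hk1 (a + 1) h).2 (hvadd a)
    rw [SimpleGraph.cycleGraph_adj'] at hadj
    have main : ∃ k, u ∉ Y k ∧ v ∉ Y k ∧ x ∈ Y k := by
      rcases hadj with h | h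
      · -- (u - v).val = 1, so u = v + 1
        have huv : u = v + 1 := by
          have : u - v = 1 := Fin.ext (by rw [h, hval1])
          have := sub_eq_iff_eq_add.mp this
          rw [this]; abel
        obtain ⟨k, h1, h2, h3⟩ := key v (Ne.symm hv) (huv ▸ Ne.symm hu)
        exact ⟨k, huv ▸ h2, h1, h3⟩
      · have hvu : v = u + 1 := by
          have : v - u = 1 := Fin.ext (by rw [h, hval1])
          have := sub_eq_iff_eq_add.mp this
          rw [this]; abel
        obtain ⟨k, h1, h2, h3⟩ := key u (Ne.symm hu) (hvu ▸ Ne.symm hv)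
        exact ⟨k, h1, hvu ▸ h2, h3⟩
    obtain ⟨k, h1, h2, h3⟩ := main
    have : k ∈ Finset.univ.filter
        (fun j => u ∈ (Y j)ᶜ ∧ v ∈ (Y j)ᶜ ∧ Disjoint {x} (Y j)ᶜ) := by
      simp [h1, h2, h3]
    exact Finset.card_pos.mpr ⟨k, this⟩
end

section
/- Let G₁, G₂, …, G_k be graphs such that for each i = 2,…,k there exists an injective graph homomorphism from G_i into G₁ (i.e., G₁ contains a subgraph isomorphic to G_i). Then the key pool number of the disjoint union satisfies N(G₁ ∪ G₂ ∪ ⋯ ∪ G_k) ≤ N(G₁) + k. -/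
/-- The vertex-disjoint union of a family of graphs `G i`. -/
def disjointUnion {ι : Type*} {V : ι → Type*} (G : ∀ i, SimpleGraph (V i)) :
    SimpleGraph (Σ i, V i) where
  Adj x y := ∃ (i : ι) (u v : V i), (G i).Adj u v ∧ x = ⟨i, u⟩ ∧ y = ⟨i, v⟩
  symm := by
    constructor
    rintro x y ⟨i, u, v, h, rfl, rfl⟩
    exact ⟨i, v, u, h.symm, rfl, rfl⟩
  loopless := by
    constructor
    rintro x ⟨i, u, v, h, rfl, h2⟩
    have : u = v := eq_of_heq (Sigma.mk.inj_iff.mp h2).2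
    exact (G i).loopless.irrefl v (this ▸ h)

/-!
STATEMENT 13: Let G₁, G₂, …, G_k be graphs such that for each i = 2,…,k there
exists an injective graph homomorphism from G_i into G₁ (i.e. G₁ contains a
subgraph isomorphic to G_i).  Then the key pool number of the disjoint union
satisfies N(G₁ ∪ G₂ ∪ ⋯ ∪ G_k) ≤ N(G₁) + k.

(The graphs are indexed by `Fin k` with `k ≥ 1`; the graph `G 0` plays the
role of `G₁`.)
-/

lemma trivCover {V : Type*} [Fintype V] [DecidableEq V] (G : SimpleGraph V) (w : ℕ) :
    ∃ (n : ℕ) (A : Fin n → Finset V), IsCovering G w 1 A := by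
  refine ⟨Fintype.card (Finset V), fun j => (Fintype.equivFin (Finset V)).symm j, ?_⟩
  intro u v huv W hW hu hv
  rw [Nat.one_le_iff_ne_zero, ← Nat.pos_iff_ne_zero, Finset.card_pos]
  refine ⟨Fintype.equivFin (Finset V) {u, v}, ?_⟩
  simp only [Finset.mem_filter, Finset.mem_univ, Equiv.symm_apply_apply, true_and]
  refine ⟨by simp, by simp, ?_⟩
  rw [Finset.disjoint_right]
  intro x hx
  simp only [Finset.mem_insert, Finset.mem_singleton] at hx
  rcases hx with rfl | rfl <;> assumption

lemma unionCover (k : ℕ) (hk : 1 ≤ k) (V : Fin k → Type*)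
    [∀ i, Fintype (V i)] [∀ i, DecidableEq (V i)]
    (G : ∀ i, SimpleGraph (V i))
    (f : ∀ i, G i →g G ⟨0, hk⟩) (hf : ∀ i, Function.Injective (f i))
    (n : ℕ) (A : Fin n → Finset (V ⟨0, hk⟩)) (hA : IsCovering (G ⟨0, hk⟩) 1 1 A) :
    ∃ B : Fin (n + k) → Finset (Σ i, V i), IsCovering (disjointUnion G) 1 1 B := by
  classical
  refine ⟨fun j => if h : (j : ℕ) < n
    then Finset.univ.filter (fun x => f x.1 x.2 ∈ A ⟨j, h⟩)
    else Finset.univ.filter (fun x => (x.1 : ℕ) = (j : ℕ) - n), ?_⟩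
  rintro u v ⟨i, a, b, hab, rfl, rfl⟩ W hW hu hv
  obtain ⟨x, rfl⟩ := Finset.card_eq_one.mp hW
  simp only [Finset.mem_singleton] at hu hv
  rw [Nat.one_le_iff_ne_zero, ← Nat.pos_iff_ne_zero, Finset.card_pos]
  by_cases hx : x.1 = i
  · -- same component
    obtain ⟨ix, c⟩ := x
    subst hx
    have hca : c ≠ a := fun h => hu (by rw [h])
    have hcb : c ≠ b := fun h => hv (by rw [h])
    have h1 := hA (f ix a) (f ix b) ((f ix).map_adj hab) {f ix c} (Finset.card_singleton _)
      (by simp only [Finset.mem_singleton]; exact fun h => hca ((hf ix) h.symm))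
      (by simp only [Finset.mem_singleton]; exact fun h => hcb ((hf ix) h.symm))
    rw [Nat.one_le_iff_ne_zero, ← Nat.pos_iff_ne_zero, Finset.card_pos] at h1
    obtain ⟨j, hj⟩ := h1
    simp only [Finset.mem_filter, Finset.mem_univ, true_and, Finset.disjoint_singleton_left] at hj
    refine ⟨⟨(j : ℕ), by omega⟩, ?_⟩
    simp only [Finset.mem_filter, Finset.mem_univ, true_and]
    have hjn : ((⟨(j : ℕ), by omega⟩ : Fin (n + k)) : ℕ) < n := j.isLt
    rw [dif_pos hjn]
    have : (⟨(j : ℕ), j.isLt⟩ : Fin n) = j := rfl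
    refine ⟨by simpa [this] using hj.1, by simpa [this] using hj.2.1, ?_⟩
    rw [Finset.disjoint_singleton_left]
    simpa [this] using hj.2.2
  · -- different component
    refine ⟨⟨n + (i : ℕ), by omega⟩, ?_⟩
    simp only [Finset.mem_filter, Finset.mem_univ, true_and]
    rw [dif_neg (by omega)]
    have hni : n + (i : ℕ) - n = (i : ℕ) := by omega
    refine ⟨by simp [hni], by simp [hni], ?_⟩
    rw [Finset.disjoint_singleton_left]
    simp only [Finset.mem_filter, Finset.mem_univ, true_and, hni]
    exact fun h => hx (Fin.val_injective h)

theorem stmt_13 (k : ℕ) (hk : 1 ≤ k) (V : Fin k → Type*)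
    [∀ i, Fintype (V i)] [∀ i, DecidableEq (V i)]
    (G : ∀ i, SimpleGraph (V i))
    (hhom : ∀ i : Fin k, ∃ f : G i →g G ⟨0, hk⟩, Function.Injective f) :
    NGraphCov (disjointUnion G) 1 1 ≤ NGraphCov (G ⟨0, hk⟩) 1 1 + k := by

  classical
  set G1 := G ⟨0, hk⟩
  have hfs : ∃ f : ∀ i, G i →g G1, ∀ i, Function.Injective (f i) := by
    choose f hf using hhom
    exact ⟨f, hf⟩
  obtain ⟨f, hf⟩ := hfs
  have hne : {m : ℕ | ∃ A : Fin m → Finset (V ⟨0, hk⟩), IsCovering G1 1 1 A}.Nonempty := by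
    obtain ⟨m, A, hA⟩ := trivCover G1 1
    exact ⟨m, A, hA⟩
  have hmem := Nat.sInf_mem hne
  obtain ⟨A, hA⟩ := hmem
  obtain ⟨B, hB⟩ := unionCover k hk V G f hf _ A hA
  exact Nat.sInf_le ⟨B, hB⟩
end

section
/- If G is a star graph with t+1 vertices (one center joined to t leaves) and t ≥ w+1, then N(G,w;d) = N((1,w;d),t). -/
/-- The star graph with `t + 1` vertices: the center `none` is joined to the
`t` leaves `some i`, and there are no other edges. -/
def starGraph (t : ℕ) : SimpleGraph (Option (Fin t)) where
  Adj x y := x ≠ y ∧ (x = none ∨ y = none)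
  symm := by
    refine ⟨?_⟩
    rintro x y ⟨h, h'⟩
    exact ⟨h.symm, h'.symm⟩
  loopless := by refine ⟨?_⟩; rintro x ⟨h, -⟩; exact h rfl

/-!
STATEMENT 14: If G is a star graph with t+1 vertices (one center joined to t
leaves) and t ≥ w+1, then N(G,w;d) = N((1,w;d),t).
-/

theorem stmt_14 (t w d : ℕ) (hw : 0 < w) (hd : 0 < d) (ht : w + 1 ≤ t) :
    NGraphCov (starGraph t) w d = NCFF 1 w d t := by
  unfold NGraphCov NCFF
  congr 1
  ext n
  simp only [Set.mem_setOf_eq]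
  constructor
  · rintro ⟨A, hA⟩
    refine ⟨fun i => Finset.univ.filter (fun j => none ∈ A j ∧ some i ∈ A j), ?_⟩
    intro L M hdisj hL hM
    obtain ⟨i, rfl⟩ := Finset.card_eq_one.mp hL
    have hiM : i ∉ M := Finset.disjoint_singleton_left.mp hdisj
    have key := hA none (some i) ⟨by simp, Or.inl rfl⟩ (M.image some)
      (by rw [Finset.card_image_of_injective _ (Option.some_injective _)]; exact hM)
      (by simp) (by simpa using hiM)
    refine le_trans key (Finset.card_le_card ?_)
    intro j hj
    simp only [Finset.mem_filter, Finset.mem_univ, true_and] at hj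
    obtain ⟨h1, h2, h3⟩ := hj
    simp only [Finset.inf_singleton, Finset.mem_sdiff, Finset.mem_filter,
      Finset.mem_univ, true_and, Finset.mem_sup, not_exists]
    refine ⟨⟨h1, h2⟩, ?_⟩
    rintro m ⟨hm, -, hmem⟩
    exact (Finset.disjoint_left.mp h3 (Finset.mem_image_of_mem some hm)) hmem
  · rintro ⟨B, hB⟩
    refine ⟨fun j => insert none ((Finset.univ.filter (fun i => j ∈ B i)).image some), ?_⟩
    intro u v huv W hW huW hvW
    -- reduce to the case u = none, v = some i
    have main : ∀ i : Fin t, some i ∉ W → none ∉ W →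
        d ≤ (Finset.univ.filter (fun j => none ∈ (insert none ((Finset.univ.filter (fun i => j ∈ B i)).image some) : Finset (Option (Fin t))) ∧ some i ∈ insert none ((Finset.univ.filter (fun i' => j ∈ B i')).image some) ∧ Disjoint W (insert none ((Finset.univ.filter (fun i' => j ∈ B i')).image some)))).card := by
      intro i hiW hnW
      set M : Finset (Fin t) := W.eraseNone with hM
      have hWM : W = M.image some := by
        ext x
        cases x with
        | none => simp [hM, hnW]
        | some a => simp [hM, Finset.mem_eraseNone]
      have hMcard : M.card = w := by
        rw [hWM, Finset.card_image_of_injective _ (Option.some_injective _)] at hW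
        exact hW
      have hiM : i ∉ M := by
        intro h; exact hiW (by rw [hWM]; exact Finset.mem_image_of_mem some h)
      have hdisj : Disjoint ({i} : Finset (Fin t)) M :=
        Finset.disjoint_singleton_left.mpr hiM
      have key := hB {i} M hdisj (Finset.card_singleton i) hMcard
      rw [Finset.inf_singleton] at key
      refine le_trans key (Finset.card_le_card ?_)
      intro j hj
      rw [Finset.mem_sdiff] at hj
      obtain ⟨h1, h2⟩ := hj
      simp only [Finset.mem_filter, Finset.mem_univ, true_and]
      refine ⟨Finset.mem_insert_self _ _, ?_, ?_⟩
      · exact Finset.mem_insert_of_mem (Finset.mem_image_of_mem some (by simp [h1]))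
      · rw [hWM, Finset.disjoint_left]
        intro x hx hx2
        obtain ⟨m, hm, rfl⟩ := Finset.mem_image.mp hx
        rcases Finset.mem_insert.mp hx2 with h | h
        · exact Option.some_ne_none _ h
        · obtain ⟨m', hm', hmm⟩ := Finset.mem_image.mp h
          rw [Finset.mem_filter] at hm'
          exact h2 (Finset.mem_sup.mpr ⟨m, hm, (Option.some_injective _ hmm) ▸ hm'.2⟩)
    obtain ⟨hne, h | h⟩ := huv
    · subst h
      cases v with
      | none => exact absurd rfl hne
      | some i => exact main i hvW huW
    · subst h
      cases u with
      | none => exact absurd rfl hne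
      | some i =>
        have := main i huW hvW
        refine le_trans this (Finset.card_le_card ?_)
        intro j hj
        simp only [Finset.mem_filter] at hj ⊢
        tauto
end

section
/- Let T be a tree with m edges and maximum degree Δ, and let t be the number of vertices of T of degree at least 3. Then the key pool number of T satisfies N(T) ≤ 2⌈log₂ m⌉ + R(Δ) + t, where R(Δ) = min{c ∈ ℕ : C(c,⌊c/2⌋) ≥ Δ}. -/
set_option linter.unusedSectionVars false

namespace KeyPool


lemma bool_ne_ne : ∀ {a b c : Bool}, a ≠ b → c ≠ b → a = c := by decide

/-- The standard binary reflected Gray code. -/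
def gray (n : ℕ) : ℕ := n ^^^ (n >>> 1)

lemma testBit_gray (n j : ℕ) : (gray n).testBit j = (n.testBit j).xor (n.testBit (j+1)) := by
  simp [gray, Nat.testBit_shiftRight, Nat.testBit_xor, Nat.add_comm]

lemma gray_lt {n L : ℕ} (h : n < 2 ^ L) : gray n < 2 ^ L := by
  apply Nat.lt_pow_two_of_testBit
  intro i hi
  have h1 : n.testBit i = false := Nat.testBit_lt_two_pow (lt_of_lt_of_le h (Nat.pow_le_pow_right (by norm_num) hi))
  have h2 : n.testBit (i+1) = false := Nat.testBit_lt_two_pow (lt_of_lt_of_le h (Nat.pow_le_pow_right (by norm_num) (by omega)))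
  simp [testBit_gray, h1, h2]

lemma gray_inj : Function.Injective gray := by
  intro a b hab
  have key : ∀ d j, 2^j ≤ 2^(j+d) → a < 2^(j+d) → b < 2^(j+d) → a.testBit j = b.testBit j := by
    intro d
    induction d with
    | zero =>
      intro j _ ha hb
      rw [Nat.add_zero] at ha hb
      rw [Nat.testBit_lt_two_pow ha, Nat.testBit_lt_two_pow hb]
    | succ d ih =>
      intro j hj ha hb
      have hg : (gray a).testBit j = (gray b).testBit j := by rw [hab]
      rw [testBit_gray, testBit_gray] at hg
      have hnext : a.testBit (j+1) = b.testBit (j+1) := by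
        apply ih (j+1) (Nat.pow_le_pow_right (by norm_num) (by omega))
        · exact lt_of_lt_of_le ha (Nat.pow_le_pow_right (by norm_num) (by omega))
        · exact lt_of_lt_of_le hb (Nat.pow_le_pow_right (by norm_num) (by omega))
      rw [hnext] at hg
      rcases Bool.eq_false_or_eq_true (b.testBit (j+1)) with h | h <;>
        rcases Bool.eq_false_or_eq_true (a.testBit j) with h2 | h2 <;>
        rcases Bool.eq_false_or_eq_true (b.testBit j) with h3 | h3 <;>
        simp_all
  apply Nat.eq_of_testBit_eq
  intro j
  have ha : a < 2 ^ (j + (a+b)) := lt_of_lt_of_le (Nat.lt_two_pow_self (n := a)) (Nat.pow_le_pow_right (by norm_num) (by omega))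
  have hb : b < 2 ^ (j + (a+b)) := lt_of_lt_of_le (Nat.lt_two_pow_self (n := b)) (Nat.pow_le_pow_right (by norm_num) (by omega))
  exact key (a+b) j (Nat.pow_le_pow_right (by norm_num) (by omega)) ha hb

lemma succ_xor_self (n : ℕ) : ∃ k, (n+1) ^^^ n = 2^(k+1) - 1 := by
  induction n using Nat.strong_induction_on with
  | _ n ih =>
    rcases Nat.even_or_odd n with he | ho
    · refine ⟨0, ?_⟩
      apply Nat.eq_of_testBit_eq
      intro j
      obtain ⟨m, rfl⟩ := he
      cases j with
      | zero =>
        rw [Nat.testBit_xor, Nat.testBit_zero, Nat.testBit_zero,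
          Nat.testBit_two_pow_sub_one]
        have e1 : (m + m + 1) % 2 = 1 := by omega
        have e2 : (m + m) % 2 = 0 := by omega
        simp [e1, e2]
      | succ j =>
        have h1 : (m + m + 1) / 2 = m := by omega
        have h2 : (m + m) / 2 = m := by omega
        rw [Nat.testBit_xor, Nat.testBit_add_one, Nat.testBit_add_one, h1, h2,
          Nat.testBit_two_pow_sub_one]
        simp
    · obtain ⟨m, rfl⟩ := ho
      have hm : m < 2*m+1 := by omega
      obtain ⟨k, hk⟩ := ih m hm
      refine ⟨k+1, ?_⟩
      apply Nat.eq_of_testBit_eq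
      intro j
      cases j with
      | zero =>
        rw [Nat.testBit_xor, Nat.testBit_zero, Nat.testBit_zero,
          Nat.testBit_two_pow_sub_one]
        have e1 : (2*m+1+1) % 2 = 0 := by omega
        have e2 : (2*m+1) % 2 = 1 := by omega
        simp [e1, e2]
      | succ j =>
        have h1 : (2*m+1+1) / 2 = m + 1 := by omega
        have h2 : (2*m+1) / 2 = m := by omega
        have hthis := congrArg (fun x => x.testBit j) hk
        simp only [Nat.testBit_xor] at hthis
        rw [Nat.testBit_xor, Nat.testBit_add_one, Nat.testBit_add_one, h1, h2,
          Nat.testBit_two_pow_sub_one, hthis, Nat.testBit_two_pow_sub_one]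
        simp only [decide_eq_decide]
        omega

lemma gray_succ_xor (n : ℕ) : ∃ k, gray (n+1) ^^^ gray n = 2^k := by
  obtain ⟨k, hk⟩ := succ_xor_self n
  refine ⟨k, ?_⟩
  apply Nat.eq_of_testBit_eq
  intro j
  have hbit : ∀ i, ((n+1).testBit i).xor (n.testBit i) = decide (i < k+1) := by
    intro i
    have := congrArg (fun x => x.testBit i) hk
    simpa [Nat.testBit_xor, Nat.testBit_two_pow_sub_one] using this
  simp only [Nat.testBit_xor, testBit_gray, Nat.testBit_two_pow]
  have e1 := hbit j
  have e2 := hbit (j+1)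
  rcases Bool.eq_false_or_eq_true ((n+1).testBit j) with h1 | h1 <;>
    rcases Bool.eq_false_or_eq_true (n.testBit j) with h2 | h2 <;>
    rcases Bool.eq_false_or_eq_true ((n+1).testBit (j+1)) with h3 | h3 <;>
    rcases Bool.eq_false_or_eq_true (n.testBit (j+1)) with h4 | h4 <;>
    simp_all <;> omega

/-- consecutive gray codes differ in exactly one bit position -/
lemma gray_succ_diff (n : ℕ) : ∃ i, ((gray (n+1)).testBit i ≠ (gray n).testBit i) ∧
    ∀ j, j ≠ i → (gray (n+1)).testBit j = (gray n).testBit j := by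
  obtain ⟨k, hk⟩ := gray_succ_xor n
  refine ⟨k, ?_, ?_⟩
  · have := congrArg (fun x => x.testBit k) hk
    simp only [Nat.testBit_xor, Nat.testBit_two_pow_self] at this
    intro h
    rw [h] at this
    simp at this
  · intro j hj
    have := congrArg (fun x => x.testBit j) hk
    simp only [Nat.testBit_xor, Nat.testBit_two_pow] at this
    have : ((gray (n+1)).testBit j).xor ((gray n).testBit j) = false := by
      rw [this]; simp [hj]; omega
    rcases Bool.eq_false_or_eq_true ((gray (n+1)).testBit j) with h1 | h1 <;>
      rcases Bool.eq_false_or_eq_true ((gray n).testBit j) with h2 | h2 <;> simp_all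



open SimpleGraph

variable {V : Type*} [DecidableEq V] {G : SimpleGraph V}

lemma snd_of_edge_mem {v y u w : V} (h : G.Adj v y) {q : G.Walk y u}
    (hp : (SimpleGraph.Walk.cons h q).IsPath) (hw : s(v,w) ∈ (SimpleGraph.Walk.cons h q).edges) :
    w = y := by
  rw [SimpleGraph.Walk.edges_cons, List.mem_cons] at hw
  rcases hw with hw | hw
  · rw [Sym2.eq_iff] at hw
    rcases hw with ⟨-, rfl⟩ | ⟨h1, h2⟩
    · rfl
    · exact absurd h1 h.ne
  · exfalso
    have hv : v ∈ q.support := SimpleGraph.Walk.fst_mem_support_of_mem_edges q hw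
    rw [SimpleGraph.Walk.cons_isPath_iff] at hp
    exact hp.2 hv

lemma exists_pendant [Fintype V] (hG : G.IsAcyclic) {a b : V} (hab : G.Adj a b) :
    ∃ v w, G.Adj v w ∧ ∀ z, G.Adj v z → z = w := by
  classical
  set S : Set ℕ := {n | ∃ (u v : V) (p : G.Walk u v), p.IsPath ∧ p.length = n} with hS
  have hne : 1 ∈ S := ⟨a, b, (SimpleGraph.Path.singleton hab).1,
    (SimpleGraph.Path.singleton hab).2, rfl⟩
  have hbdd : BddAbove S := by
    refine ⟨Fintype.card V, ?_⟩
    rintro n ⟨u, v, p, hp, rfl⟩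
    exact le_of_lt hp.length_lt
  have hmem : sSup S ∈ S := Nat.sSup_mem ⟨1, hne⟩ hbdd
  have hone : 1 ≤ sSup S := le_csSup hbdd hne
  obtain ⟨u, v, p, hp, hlen⟩ := hmem
  -- consider the reverse walk, starting at v
  have hq : p.reverse.IsPath := hp.reverse
  have hqlen : p.reverse.length = sSup S := by rw [SimpleGraph.Walk.length_reverse, hlen]
  revert hq hqlen
  generalize p.reverse = q
  intro hq hqlen
  cases q with
  | nil => simp at hqlen; omega
  | @cons _ y _ h q' =>
    refine ⟨v, y, h, ?_⟩
    intro w hvw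
    by_contra hwy
    by_cases hw : w ∈ (SimpleGraph.Walk.cons h q').support
    · -- w on the path: build a cycle
      have hvwe : s(v, w) ∉ (SimpleGraph.Walk.cons h q').edges := by
        intro hmem
        exact hwy (snd_of_edge_mem h hq hmem)
      set d := (SimpleGraph.Walk.cons h q').takeUntil w hw with hd
      have hdp : d.IsPath := hq.takeUntil hw
      have hde : s(w, v) ∉ d.edges := by
        intro hmem
        apply hvwe
        rw [Sym2.eq_swap]
        exact SimpleGraph.Walk.edges_takeUntil_subset _ hw hmem
      have hcyc : (SimpleGraph.Walk.cons hvw.symm d).IsCycle := by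
        rw [SimpleGraph.Walk.cons_isCycle_iff]
        exact ⟨hdp, hde⟩
      exact hG _ hcyc
    · -- w not on the path: extend, contradicting maximality
      have hp2 : (SimpleGraph.Walk.cons hvw.symm (SimpleGraph.Walk.cons h q')).IsPath := by
        rw [SimpleGraph.Walk.cons_isPath_iff]
        exact ⟨hq, hw⟩
      have : (SimpleGraph.Walk.cons hvw.symm (SimpleGraph.Walk.cons h q')).length ∈ S :=
        ⟨w, u, _, hp2, rfl⟩
      have hle := le_csSup hbdd this
      rw [SimpleGraph.Walk.length_cons, hqlen] at hle
      omega

lemma exists_pendant_finset [Fintype V] (hG : G.IsAcyclic) {s : Finset (Sym2 V)}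
    (hs : ∀ e ∈ s, e ∈ G.edgeSet) (hsne : s.Nonempty) :
    ∃ (v w : V), s(v, w) ∈ s ∧ s.filter (fun e => v ∈ e) = {s(v, w)} := by
  classical
  set Gs : SimpleGraph V := SimpleGraph.fromEdgeSet ↑s with hGs
  have hadj : ∀ x y : V, Gs.Adj x y ↔ s(x,y) ∈ s ∧ x ≠ y := by
    intro x y
    rw [hGs, SimpleGraph.fromEdgeSet_adj]
    simp
  have hle : Gs ≤ G := by
    intro x y hxy
    rw [hadj] at hxy
    exact hs _ hxy.1
  have hGsacyc : Gs.IsAcyclic := by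
    intro x c hc
    exact hG (c.mapLe hle) ((SimpleGraph.Walk.mapLe_isCycle hle).mpr hc)
  obtain ⟨e, he⟩ := hsne
  induction e using Sym2.ind with
  | _ x y =>
    have hxy : x ≠ y := by
      intro hEq
      have h2 := G.not_isDiag_of_mem_edgeSet (hs _ he)
      rw [hEq] at h2
      simp [Sym2.mk_isDiag_iff] at h2
    have hAdj : Gs.Adj x y := by rw [hadj]; exact ⟨he, hxy⟩
    obtain ⟨v, w, hvw, huniq⟩ := exists_pendant hGsacyc hAdj
    refine ⟨v, w, ?_, ?_⟩
    · exact ((hadj v w).mp hvw).1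
    · ext f
      simp only [Finset.mem_filter, Finset.mem_singleton]
      constructor
      · rintro ⟨hf, hvf⟩
        obtain ⟨z, rfl⟩ := Sym2.mem_iff_exists.mp hvf
        have hvz : v ≠ z := by
          intro hEq
          have h2 := G.not_isDiag_of_mem_edgeSet (hs _ hf)
          rw [hEq] at h2
          simp [Sym2.mk_isDiag_iff] at h2
        have : Gs.Adj v z := by rw [hadj]; exact ⟨hf, hvz⟩
        rw [huniq z this]
      · rintro rfl
        exact ⟨((hadj v w).mp hvw).1, Sym2.mem_mk_left v w⟩


open SimpleGraph

variable {V : Type*} [DecidableEq V] {G : SimpleGraph V}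

set_option maxHeartbeats 1000000 in
lemma exists_good_ordering [Fintype V] (hG : G.IsAcyclic) :
    ∀ (n : ℕ) (s : Finset (Sym2 V)), s.card = n → (∀ e ∈ s, e ∈ G.edgeSet) →
    ∃ l : List (Sym2 V), l.Nodup ∧ (∀ e, e ∈ l ↔ e ∈ s) ∧
      ∀ x : V, (s.filter (fun e => x ∈ e)).card = 2 →
        ∃ (k : ℕ) (h1 : k + 1 < l.length),
          x ∈ l[k]'(Nat.lt_of_succ_lt h1) ∧ x ∈ l[k+1]'h1 := by
  intro n
  induction n with
  | zero =>
    intro s hcard hs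
    refine ⟨[], List.nodup_nil, ?_, ?_⟩
    · intro e; simp [Finset.card_eq_zero.mp hcard]
    · intro x hx
      rw [Finset.card_eq_zero.mp hcard] at hx; simp at hx
  | succ n ih =>
    intro s hcard hs
    classical
    have hsne : s.Nonempty := by rw [← Finset.card_pos, hcard]; omega
    obtain ⟨v, w, he0, hfilv⟩ := exists_pendant_finset hG hs hsne
    set e0 : Sym2 V := s(v,w) with he0def
    set s' := s.erase e0 with hs'def
    have hcard' : s'.card = n := by
      rw [hs'def, Finset.card_erase_of_mem he0, hcard]
      omega
    have hs' : ∀ e ∈ s', e ∈ G.edgeSet := fun e he => hs e (Finset.mem_of_mem_erase he)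
    obtain ⟨l', hnd', hmem', hcons'⟩ := ih s' hcard' hs'
    have hvmem : v ∈ e0 := Sym2.mem_mk_left v w
    have hwmem : w ∈ e0 := Sym2.mem_mk_right v w
    have he0s' : e0 ∉ s' := Finset.notMem_erase _ _
    have he0l' : e0 ∉ l' := fun h => he0s' ((hmem' e0).mp h)
    have hlmem : ∀ f ∈ l', f ∈ s' := fun f hf => (hmem' f).mp hf
    have hferase : ∀ x : V, s'.filter (fun e => x ∈ e) = (s.filter (fun e => x ∈ e)).erase e0 := by
      intro x
      ext f
      simp only [hs'def, Finset.mem_filter, Finset.mem_erase]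
      tauto
    have hfe : ∀ x : V, x ∉ e0 →
        s'.filter (fun e => x ∈ e) = s.filter (fun e => x ∈ e) := by
      intro x hx
      ext f
      simp only [hs'def, Finset.mem_filter, Finset.mem_erase]
      constructor
      · tauto
      · rintro ⟨hf, hxf⟩
        refine ⟨⟨?_, hf⟩, hxf⟩
        rintro rfl; exact hx hxf
    have hddv : (s.filter (fun e => v ∈ e)).card = 1 := by rw [hfilv]; simp
    -- `Pair k` : positions k, k+1 of l' form a constrained pair
    set Pair : ℕ → Prop := fun k => ∃ (h1 : k + 1 < l'.length) (z : V),
      (s'.filter (fun e => z ∈ e)).card = 2 ∧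
      z ∈ l'[k]'(Nat.lt_of_succ_lt h1) ∧ z ∈ l'[k+1]'h1 with hPairDef
    -- helper: three distinct list positions all containing a vertex contradict card = 2
    have hthree : ∀ (z : V) (i j j2 : ℕ) (hi : i < l'.length) (hj : j < l'.length)
        (hj2 : j2 < l'.length), i ≠ j → i ≠ j2 → j ≠ j2 →
        z ∈ l'[i]'hi → z ∈ l'[j]'hj → z ∈ l'[j2]'hj2 →
        (s'.filter (fun e => z ∈ e)).card = 2 → False := by
      intro z i j j2 hi hj hj2 hij hij2 hjj2 hzi hzj hzj2 hz2
      have hne1 : l'[i]'hi ≠ l'[j]'hj := fun h => hij (hnd'.getElem_inj_iff.mp h)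
      have hne2 : l'[i]'hi ≠ l'[j2]'hj2 := fun h => hij2 (hnd'.getElem_inj_iff.mp h)
      have hne3 : l'[j]'hj ≠ l'[j2]'hj2 := fun h => hjj2 (hnd'.getElem_inj_iff.mp h)
      have hsub : {l'[i]'hi, l'[j]'hj, l'[j2]'hj2} ⊆ s'.filter (fun e => z ∈ e) := by
        intro f hf
        simp only [Finset.mem_insert, Finset.mem_singleton] at hf
        rcases hf with rfl | rfl | rfl <;>
          exact Finset.mem_filter.mpr ⟨hlmem _ (List.getElem_mem _), by assumption⟩
      have hcard3 : ({l'[i]'hi, l'[j]'hj, l'[j2]'hj2} : Finset (Sym2 V)).card = 3 := by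
        rw [Finset.card_insert_of_notMem (by simp [hne1, hne2]),
          Finset.card_insert_of_notMem (by simp [hne3]), Finset.card_singleton]
      have hle3 := Finset.card_le_card hsub
      omega
    -- KEY: a uniform insertion lemma
    have key : ∀ p : ℕ, p ≤ l'.length → (∀ k, Pair k → p ≠ k + 1) →
        ((s.filter (fun e => w ∈ e)).card = 2 →
          ∃ (k : ℕ) (h1 : k + 1 < (l'.insertIdx p e0).length),
            w ∈ (l'.insertIdx p e0)[k]'(Nat.lt_of_succ_lt h1) ∧
            w ∈ (l'.insertIdx p e0)[k+1]'h1) →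
        ∃ l : List (Sym2 V), l.Nodup ∧ (∀ e, e ∈ l ↔ e ∈ s) ∧
        ∀ x : V, (s.filter (fun e => x ∈ e)).card = 2 →
          ∃ (k : ℕ) (h1 : k + 1 < l.length),
            x ∈ l[k]'(Nat.lt_of_succ_lt h1) ∧ x ∈ l[k+1]'h1 := by
      intro p hple hnosplit hwpair
      have hperm : List.Perm (l'.insertIdx p e0) (e0 :: l') := List.perm_insertIdx e0 l' hple
      have hlen : (l'.insertIdx p e0).length = l'.length + 1 := List.length_insertIdx_of_le_length hple e0
      refine ⟨l'.insertIdx p e0, ?_, ?_, ?_⟩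
      · exact hperm.nodup_iff.mpr (List.nodup_cons.mpr ⟨he0l', hnd'⟩)
      · intro e
        rw [hperm.mem_iff, List.mem_cons, hmem']
        simp only [hs'def, Finset.mem_erase]
        constructor
        · rintro (rfl | ⟨-, h⟩)
          · exact he0
          · exact h
        · intro h
          by_cases heq : e = e0
          · exact Or.inl heq
          · exact Or.inr ⟨heq, h⟩
      · intro x hx2
        by_cases hxw : x = w
        · subst hxw; exact hwpair hx2
        by_cases hxv : x = v
        · subst hxv; omega
        have hxe0 : x ∉ e0 := by
          rw [he0def, Sym2.mem_iff]
          tauto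
        have hdd'x : (s'.filter (fun e => x ∈ e)).card = 2 := by rw [hfe x hxe0]; exact hx2
        obtain ⟨k, h1, hxk, hxk1⟩ := hcons' x hdd'x
        have hPk : Pair k := ⟨h1, x, hdd'x, hxk, hxk1⟩
        have hpk1 : p ≠ k + 1 := hnosplit k hPk
        rcases Nat.lt_or_ge k p with hkp | hkp
        · -- k + 1 < p : pair stays at (k, k+1)
          have hkp' : k + 1 < p := by omega
          refine ⟨k, by omega, ?_, ?_⟩
          · exact (List.getElem_insertIdx_of_lt (l := l') (x := e0) (i := p) (j := k) (by omega) (by omega)).symm ▸ hxk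
          · exact (List.getElem_insertIdx_of_lt (l := l') (x := e0) (i := p) (j := k+1) (by omega) (by omega)).symm ▸ hxk1
        · -- p ≤ k : pair moves to (k+1, k+2)
          obtain ⟨d, rfl⟩ : ∃ d, k = p + d := ⟨k - p, by omega⟩
          refine ⟨p + d + 1, by omega, ?_, ?_⟩
          · exact (List.getElem_insertIdx_add_succ l' e0 p d (by omega)).symm ▸ hxk
          · exact (List.getElem_insertIdx_add_succ l' e0 p (d+1) (by omega)).symm ▸ hxk1
    -- now choose the insertion position
    by_cases hdw : (s.filter (fun e => w ∈ e)).card = 2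
    case pos =>
      -- w has a unique incident edge e' in s'
      have hddw' : (s'.filter (fun e => w ∈ e)).card = 1 := by
        rw [hferase, Finset.card_erase_of_mem (Finset.mem_filter.mpr ⟨he0, hwmem⟩), hdw]
      obtain ⟨e', he'⟩ := Finset.card_eq_one.mp hddw'
      have he's' : e' ∈ s' ∧ w ∈ e' := by
        have h3 : e' ∈ s'.filter (fun e => w ∈ e) := by rw [he']; simp
        simpa using Finset.mem_filter.mp h3
      have he'l' : e' ∈ l' := (hmem' e').mpr he's'.1
      have hk' : l'.idxOf e' < l'.length := List.idxOf_lt_length_iff.mpr he'l'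
      set k' := l'.idxOf e' with hk'def
      have hgetk' : l'[k']'hk' = e' := List.getElem_idxOf hk'
      by_cases hC : Pair k'
      case pos =>
        -- insert at p = k'  (just before e')
        refine key k' (le_of_lt hk') ?_ ?_
        · -- no split
          intro k hPk hpk
          obtain ⟨hh1, z1, hz12, hz1k, hz1k1⟩ := hPk
          obtain ⟨hh1', z, hz2, hzk', hzk'1⟩ := hC
          have hzw : z ≠ w := fun h => by rw [h, hddw'] at hz2; omega
          have hz1w : z1 ≠ w := fun h => by rw [h, hddw'] at hz12; omega
          have hkk : k + 1 = k' := hpk.symm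
          have hz1z : z1 ≠ z := by
            intro h
            subst h
            refine hthree z1 k (k+1) (k'+1) (by omega) (by omega) (by omega)
              (by omega) (by omega) (by omega) hz1k hz1k1 ?_ hz12
            exact hzk'1
          have hze' : z ∈ e' := by rw [← hgetk']; exact hzk'
          have hz1e' : z1 ∈ e' := by
            rw [← hgetk']
            have hidx : l'[k+1]'hh1 = l'[k']'hk' := getElem_congr_idx hkk
            exact hidx ▸ hz1k1
          have hwe' : w ∈ e' := he's'.2
          obtain ⟨c, rfl⟩ := Sym2.mem_iff_exists.mp hwe'
          rw [Sym2.mem_iff] at hze' hz1e'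
          rcases hze' with rfl | rfl
          · exact hzw rfl
          · rcases hz1e' with rfl | rfl
            · exact hz1w rfl
            · exact hz1z rfl
        · -- the pair for w : positions (k', k'+1) hold e0, e'
          intro _
          have hlen : (l'.insertIdx k' e0).length = l'.length + 1 :=
            List.length_insertIdx_of_le_length (le_of_lt hk') e0
          refine ⟨k', by omega, ?_, ?_⟩
          · exact (List.getElem_insertIdx_self (l := l') (x := e0) (i := k') (by omega)).symm ▸ hwmem
          · exact ((List.getElem_insertIdx_add_succ l' e0 k' 0 (by omega)).trans hgetk').symm ▸ he's'.2
      case neg =>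
        -- insert at p = k' + 1  (just after e')
        refine key (k' + 1) hk' ?_ ?_
        · intro k hPk hpk
          have : k = k' := by omega
          subst this
          exact hC hPk
        · intro _
          have hlen : (l'.insertIdx (k'+1) e0).length = l'.length + 1 :=
            List.length_insertIdx_of_le_length hk' e0
          refine ⟨k', by omega, ?_, ?_⟩
          · exact ((List.getElem_insertIdx_of_lt (l := l') (x := e0) (i := k'+1) (j := k') (by omega) (by omega)).trans hgetk').symm ▸ he's'.2
          · exact (List.getElem_insertIdx_self (l := l') (x := e0) (i := k'+1) (by omega)).symm ▸ hwmem
    case neg =>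
      refine key 0 (Nat.zero_le _) (fun k _ h => by omega) (fun h => absurd h hdw)

end KeyPool

/-- `R(t)`: the smallest nonnegative integer `c` with `C(c,⌊c/2⌋) ≥ t`. -/
noncomputable def RSperner (t : ℕ) : ℕ :=
  sInf {c : ℕ | t ≤ Nat.choose c (c / 2)}

/-!
STATEMENT 15: Let T be a tree with m edges and maximum degree Δ, and let t be
the number of vertices of T of degree at least 3.  Then the key pool number of
T satisfies N(T) ≤ 2⌈log₂ m⌉ + R(Δ) + t, where
R(Δ) = min{c ∈ ℕ : C(c,⌊c/2⌋) ≥ Δ}.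
-/

set_option maxHeartbeats 1000000 in
theorem stmt_15 {V : Type*} [Fintype V] [DecidableEq V] (T : SimpleGraph V)
    [DecidableRel T.Adj] (hT : T.IsTree) (m Δ t : ℕ)
    (hm : T.edgeFinset.card = m) (hΔ : T.maxDegree = Δ)
    (ht : (Finset.univ.filter (fun v : V => 3 ≤ T.degree v)).card = t) :
    NGraphCov T 1 1 ≤ 2 * Nat.clog 2 m + RSperner Δ + t := by
  classical
  by_cases hV : 3 ≤ Fintype.card V
  case neg =>
    -- at most 2 vertices: the covering condition is vacuous
    have h0 : 0 ∈ {n : ℕ | ∃ A : Fin n → Finset V, IsCovering T 1 1 A} := by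
      refine ⟨fun _ => ∅, ?_⟩
      intro u v huv W hW hu hv
      exfalso
      obtain ⟨x, rfl⟩ := Finset.card_eq_one.mp hW
      have hxu : x ≠ u := fun h => hu (by simp [h])
      have hxv : x ≠ v := fun h => hv (by simp [h])
      have huv' : u ≠ v := huv.ne
      have hcard3 : ({x, u, v} : Finset V).card = 3 := by
        rw [Finset.card_insert_of_notMem (by simp [hxu, hxv]),
          Finset.card_insert_of_notMem (by simp [huv']), Finset.card_singleton]
      have := Finset.card_le_univ ({x, u, v} : Finset V)
      rw [hcard3] at this
      omega
    exact le_trans (Nat.sInf_le h0) (Nat.zero_le _)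
  case pos =>
    have hm1 : m + 1 = Fintype.card V := by rw [← hm]; exact hT.card_edgeFinset
    have hm2 : 2 ≤ m := by omega
    set L := Nat.clog 2 m with hLdef
    have hL1 : 1 ≤ L := by
      rw [hLdef]
      exact Nat.clog_pos (by norm_num) hm2
    have hmL : m ≤ 2 ^ L := Nat.le_pow_clog (by norm_num) m
    -- the good ordering of the edges
    obtain ⟨l, hnd, hmeml, hcons⟩ := KeyPool.exists_good_ordering hT.2 m T.edgeFinset hm
      (fun e he => SimpleGraph.mem_edgeFinset.mp he)
    have hlen : l.length = m := by
      have htf : l.toFinset = T.edgeFinset := Finset.ext (fun e => by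
        rw [List.mem_toFinset, hmeml])
      rw [← List.toFinset_card_of_nodup hnd, htf, hm]
    have hdeg : ∀ x : V, (T.edgeFinset.filter (fun e => x ∈ e)).card = T.degree x := by
      intro x
      rw [← SimpleGraph.card_incidenceFinset_eq_degree, SimpleGraph.incidenceFinset_eq_filter]
    -- codes
    set c : Sym2 V → ℕ := fun e => KeyPool.gray (l.idxOf e) with hcdef
    have hidxlt : ∀ e ∈ l, l.idxOf e < m := by
      intro e he; rw [← hlen]; exact List.idxOf_lt_length_iff.mpr he
    have hcodelt : ∀ e ∈ l, c e < 2 ^ L := by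
      intro e he
      exact KeyPool.gray_lt (lt_of_lt_of_le (hidxlt e he) hmL)
    have hcodeinj : ∀ e ∈ l, ∀ f ∈ l, e ≠ f → c e ≠ c f := by
      intro e he f hf hne hc
      apply hne
      have hidx := KeyPool.gray_inj hc
      have h1 : l.idxOf e < l.length := List.idxOf_lt_length_iff.mpr he
      have h2 : l.idxOf f < l.length := List.idxOf_lt_length_iff.mpr hf
      rw [← List.getElem_idxOf h1, ← List.getElem_idxOf h2]
      exact getElem_congr_idx hidx
    -- branch vertices
    set B : Finset V := Finset.univ.filter (fun v : V => 3 ≤ T.degree v) with hBdef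
    have hBcard : B.card = t := ht
    set E : {x // x ∈ B} ≃ Fin t := B.equivFinOfCardEq hBcard with hEdef
    set n : ℕ := 2 * L + RSperner Δ + t with hndef
    -- the covering family
    set A : Fin n → Finset V := fun j =>
      if h : (j : ℕ) < 2 * L then
        Finset.univ.filter (fun y => ∃ f ∈ l, y ∈ f ∧
          (c f).testBit ((j : ℕ) / 2) = decide ((j : ℕ) % 2 = 1))
      else if h2 : (j : ℕ) < 2 * L + t then
        Finset.univ.erase ((E.symm ⟨(j : ℕ) - 2 * L, by omega⟩ : {x // x ∈ B}) : V)
      else ∅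
      with hAdef
    have hcov : IsCovering T 1 1 A := by
      intro u v huv W hW hu hv
      obtain ⟨x, rfl⟩ := Finset.card_eq_one.mp hW
      have hxu : x ≠ u := fun h => hu (by simp [h])
      have hxv : x ≠ v := fun h => hv (by simp [h])
      rw [Finset.one_le_card]
      suffices hj : ∃ j : Fin n, u ∈ A j ∧ v ∈ A j ∧ x ∉ A j by
        obtain ⟨j, hju, hjv, hjx⟩ := hj
        exact ⟨j, Finset.mem_filter.mpr ⟨Finset.mem_univ _, hju, hjv,
          Finset.disjoint_singleton_left.mpr hjx⟩⟩
      set e : Sym2 V := s(u, v) with hedef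
      have hel : e ∈ l := (hmeml e).mpr (SimpleGraph.mem_edgeFinset.mpr huv)
      have hue : u ∈ e := Sym2.mem_mk_left u v
      have hve : v ∈ e := Sym2.mem_mk_right u v
      have hxe : x ∉ e := by rw [hedef, Sym2.mem_iff]; push_neg; exact ⟨hxu, hxv⟩
      by_cases hx3 : 3 ≤ T.degree x
      case pos =>
        have hxB : x ∈ B := by rw [hBdef]; exact Finset.mem_filter.mpr ⟨Finset.mem_univ _, hx3⟩
        set j0 : Fin t := E ⟨x, hxB⟩ with hj0def
        refine ⟨⟨2 * L + (j0 : ℕ), by omega⟩, ?_⟩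
        have hAj : A ⟨2 * L + (j0 : ℕ), by omega⟩ = Finset.univ.erase x := by
          rw [hAdef]
          simp only
          rw [dif_neg (by omega), dif_pos (by omega)]
          have hfin : (⟨2 * L + (j0 : ℕ) - 2 * L, by omega⟩ : Fin t) = j0 := by
            apply Fin.ext; simp
          rw [hfin, hj0def, Equiv.symm_apply_apply]
        rw [hAj]
        exact ⟨Finset.mem_erase.mpr ⟨Ne.symm hxu, Finset.mem_univ _⟩,
          Finset.mem_erase.mpr ⟨Ne.symm hxv, Finset.mem_univ _⟩,
          Finset.notMem_erase _ _⟩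
      case neg =>
        -- degree of x is at most 2: find a good bit position
        have hclaim : ∃ i : ℕ, i < L ∧ ∀ f ∈ l, x ∈ f →
            (c f).testBit i ≠ (c e).testBit i := by
          have hdx : (T.edgeFinset.filter (fun f => x ∈ f)).card = T.degree x := hdeg x
          have hdiffbit : ∀ f ∈ l, f ≠ e → ∃ i, i < L ∧ (c f).testBit i ≠ (c e).testBit i := by
            intro f hf hne
            have hcne : c f ≠ c e := hcodeinj f hf e hel hne
            obtain ⟨i, hi⟩ := Nat.exists_testBit_ne_of_ne hcne
            refine ⟨i, ?_, hi⟩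
            by_contra hiL
            push_neg at hiL
            have h1 : (c f).testBit i = false := Nat.testBit_lt_two_pow
              (lt_of_lt_of_le (hcodelt f hf) (Nat.pow_le_pow_right (by norm_num) hiL))
            have h2 : (c e).testBit i = false := Nat.testBit_lt_two_pow
              (lt_of_lt_of_le (hcodelt e hel) (Nat.pow_le_pow_right (by norm_num) hiL))
            rw [h1, h2] at hi
            exact hi rfl
          have hdcases : T.degree x = 0 ∨ T.degree x = 1 ∨ T.degree x = 2 := by omega
          rcases hdcases with hdval | hdval | hdval
          · -- degree 0 : no incident edges at all
            refine ⟨0, hL1, ?_⟩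
            intro f hfl hxf
            exfalso
            have hmem : f ∈ T.edgeFinset.filter (fun g => x ∈ g) :=
              Finset.mem_filter.mpr ⟨(hmeml f).mp hfl, hxf⟩
            rw [Finset.card_eq_zero.mp (hdx.trans hdval)] at hmem
            simp at hmem
          · -- degree 1 : a unique incident edge f0
            obtain ⟨f0, hf0⟩ := Finset.card_eq_one.mp (hdx.trans hdval)
            have hf0mem : f0 ∈ T.edgeFinset ∧ x ∈ f0 := by
              have : f0 ∈ T.edgeFinset.filter (fun g => x ∈ g) := by rw [hf0]; simp
              simpa using Finset.mem_filter.mp this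
            have hf0l : f0 ∈ l := (hmeml f0).mpr hf0mem.1
            have hf0e : f0 ≠ e := fun h => hxe (h ▸ hf0mem.2)
            obtain ⟨i, hiL, hib⟩ := hdiffbit f0 hf0l hf0e
            refine ⟨i, hiL, ?_⟩
            intro f hfl hxf
            have : f ∈ T.edgeFinset.filter (fun g => x ∈ g) :=
              Finset.mem_filter.mpr ⟨(hmeml f).mp hfl, hxf⟩
            rw [hf0, Finset.mem_singleton] at this
            rw [this]
            exact hib
          · -- degree 2 : the two incident edges are consecutive in l
            obtain ⟨k, h1k, hxk, hxk1⟩ := hcons x (by rw [hdx, hdval])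
            set f1 : Sym2 V := l[k]'(Nat.lt_of_succ_lt h1k) with hf1def
            set f2 : Sym2 V := l[k+1]'h1k with hf2def
            have hf1l : f1 ∈ l := List.getElem_mem _
            have hf2l : f2 ∈ l := List.getElem_mem _
            have hidx1 : l.idxOf f1 = k := by
              have hlt : l.idxOf f1 < l.length := List.idxOf_lt_length_iff.mpr hf1l
              exact hnd.getElem_inj_iff.mp (List.getElem_idxOf hlt)
            have hidx2 : l.idxOf f2 = k + 1 := by
              have hlt : l.idxOf f2 < l.length := List.idxOf_lt_length_iff.mpr hf2l
              exact hnd.getElem_inj_iff.mp (List.getElem_idxOf hlt)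
            have hc1 : c f1 = KeyPool.gray k := by rw [hcdef]; simp only; rw [hidx1]
            have hc2 : c f2 = KeyPool.gray (k+1) := by rw [hcdef]; simp only; rw [hidx2]
            have hf1e : f1 ≠ e := fun h => hxe (h ▸ hxk)
            have hf2e : f2 ≠ e := fun h => hxe (h ▸ hxk1)
            have hce1 : c e ≠ KeyPool.gray k := by
              rw [← hc1]; exact hcodeinj e hel f1 hf1l (Ne.symm hf1e)
            have hce2 : c e ≠ KeyPool.gray (k+1) := by
              rw [← hc2]; exact hcodeinj e hel f2 hf2l (Ne.symm hf2e)
            obtain ⟨i0, hi0ne, hi0eq⟩ := KeyPool.gray_succ_diff k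
            have hex : ∃ i, i ≠ i0 ∧ (c e).testBit i ≠ (KeyPool.gray k).testBit i := by
              by_contra hno
              push_neg at hno
              apply hce2
              apply Nat.eq_of_testBit_eq
              intro j
              by_cases hj : j = i0
              · rw [hj]
                have hd0 : (c e).testBit i0 ≠ (KeyPool.gray k).testBit i0 := by
                  intro hEq
                  apply hce1
                  apply Nat.eq_of_testBit_eq
                  intro j2
                  by_cases hj2 : j2 = i0
                  · subst hj2; exact hEq
                  · exact hno j2 hj2
                exact KeyPool.bool_ne_ne hd0 hi0ne
              · rw [hno j hj, hi0eq j hj]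
            obtain ⟨i, hii0, hib⟩ := hex
            have hiL : i < L := by
              by_contra hiLn
              push_neg at hiLn
              have h1 : (c e).testBit i = false := Nat.testBit_lt_two_pow
                (lt_of_lt_of_le (hcodelt e hel) (Nat.pow_le_pow_right (by norm_num) hiLn))
              have h2 : (KeyPool.gray k).testBit i = false := by
                rw [← hc1]
                exact Nat.testBit_lt_two_pow
                  (lt_of_lt_of_le (hcodelt f1 hf1l) (Nat.pow_le_pow_right (by norm_num) hiLn))
              rw [h1, h2] at hib
              exact hib rfl
            refine ⟨i, hiL, ?_⟩
            intro f hfl hxf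
            have hf12 : f = f1 ∨ f = f2 := by
              have hone : f1 ≠ f2 := by
                intro h
                have := hnd.getElem_inj_iff.mp h
                omega
              have hsub : ({f1, f2} : Finset (Sym2 V)) ⊆
                  T.edgeFinset.filter (fun g => x ∈ g) := by
                intro g hg
                simp only [Finset.mem_insert, Finset.mem_singleton] at hg
                rcases hg with rfl | rfl
                · exact Finset.mem_filter.mpr ⟨(hmeml f1).mp hf1l, hxk⟩
                · exact Finset.mem_filter.mpr ⟨(hmeml f2).mp hf2l, hxk1⟩
              have hcard2 : ({f1, f2} : Finset (Sym2 V)).card = 2 := by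
                rw [Finset.card_insert_of_notMem (by simp [hone]), Finset.card_singleton]
              have heq := Finset.eq_of_subset_of_card_le hsub (by rw [hdx, hdval, hcard2])
              have hff : f ∈ T.edgeFinset.filter (fun g => x ∈ g) :=
                Finset.mem_filter.mpr ⟨(hmeml f).mp hfl, hxf⟩
              rw [← heq] at hff
              simpa using hff
            rcases hf12 with rfl | rfl
            · rw [hc1]
              exact fun h => hib h.symm
            · rw [hc2, hi0eq i hii0]
              exact fun h => hib h.symm
        obtain ⟨i, hiL, hibit⟩ := hclaim
        set b : Bool := (c e).testBit i with hbdef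
        refine ⟨⟨2 * i + (if b then 1 else 0), by rcases b <;> simp <;> omega⟩, ?_⟩
        have hj2L : 2 * i + (if b then 1 else 0) < 2 * L := by rcases b <;> simp <;> omega
        have hdiv : (2 * i + (if b then 1 else 0)) / 2 = i := by rcases b <;> simp <;> omega
        have hmod : decide ((2 * i + (if b then 1 else 0)) % 2 = 1) = b := by
          rcases b <;> simp <;> omega
        have hAj : A ⟨2 * i + (if b then 1 else 0), by rcases b <;> simp <;> omega⟩ =
            Finset.univ.filter (fun y => ∃ f ∈ l, y ∈ f ∧ (c f).testBit i = b) := by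
          rw [hAdef]
          simp only
          rw [dif_pos hj2L, hdiv, hmod]
        rw [hAj]
        refine ⟨Finset.mem_filter.mpr ⟨Finset.mem_univ _, e, hel, hue, rfl⟩,
          Finset.mem_filter.mpr ⟨Finset.mem_univ _, e, hel, hve, rfl⟩, ?_⟩
        intro hxA
        obtain ⟨-, f, hfl, hxf, hbit⟩ := Finset.mem_filter.mp hxA
        exact hibit f hfl hxf hbit
    calc NGraphCov T 1 1 ≤ n := Nat.sInf_le ⟨A, hcov⟩
      _ = 2 * Nat.clog 2 m + RSperner Δ + t := by rw [hndef]
end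

section
/- For every integer n ≥ 3, the key pool number of the cycle C_n satisfies R(n) ≤ N(C_n) ≤ 2⌈log₂ n⌉ + 1, where R(n) = min{c ∈ ℕ : C(c,⌊c/2⌋) ≥ n}. -/
/-!
STATEMENT 16: For every integer n ≥ 3, the key pool number of the cycle C_n
satisfies R(n) ≤ N(C_n) ≤ 2⌈log₂ n⌉ + 1, where
R(n) = min{c ∈ ℕ : C(c,⌊c/2⌋) ≥ n}.
-/


private def gray (v : ℕ) : ℕ := v ^^^ (v / 2)

private lemma xor_div_two' (a b : ℕ) : (a ^^^ b) / 2 = a / 2 ^^^ b / 2 := by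
  apply Nat.eq_of_testBit_eq
  intro j
  simp [Nat.testBit_div_two, Nat.testBit_xor]

private lemma gray_inj : Function.Injective gray := by
  intro a b h
  induction a using Nat.strong_induction_on generalizing b with
  | _ a ih =>
    rcases Nat.eq_zero_or_pos a with ha | ha
    · subst ha
      simp only [gray, Nat.zero_div, Nat.zero_xor, Nat.xor_self] at h
      have : b = b / 2 := xor_eq_zero_iff.mp h.symm
      omega
    · rcases Nat.eq_zero_or_pos b with hb | hb
      · subst hb
        simp only [gray, Nat.zero_div, Nat.xor_self] at h
        have := xor_eq_zero_iff.mp h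
        omega
      · have h2 : gray (a / 2) = gray (b / 2) := by
          have := congrArg (· / 2) h
          simpa only [gray, xor_div_two'] using this
        have hd : a / 2 = b / 2 := ih (a / 2) (by omega) h2
        have h0 := congrArg (Nat.testBit · 0) h
        simp only [gray, Nat.testBit_xor, Nat.testBit_zero, hd] at h0
        rcases Nat.mod_two_eq_zero_or_one a with h1 | h1 <;>
          rcases Nat.mod_two_eq_zero_or_one b with h3 | h3 <;>
          simp [h1, h3] at h0 ⊢ <;> omega

private lemma xor_succ (u : ℕ) : ∃ t, u ^^^ (u + 1) = 2 ^ (t + 1) - 1 := by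
  induction u using Nat.strong_induction_on with
  | _ u ih =>
    rcases Nat.mod_two_eq_zero_or_one u with hu | hu
    · refine ⟨0, ?_⟩
      apply Nat.eq_of_testBit_eq
      intro j
      cases j with
      | zero => simp [Nat.testBit_xor]; omega
      | succ j =>
        rw [Nat.testBit_xor, Nat.testBit_succ, Nat.testBit_succ]
        have : (u + 1) / 2 = u / 2 := by omega
        simp [this, Nat.testBit_two_pow_sub_one]
        exact Nat.testBit_eq_false_of_lt (by simpa using Nat.one_lt_two_pow (by omega))
    · obtain ⟨t, ht⟩ := ih (u / 2) (by omega)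
      refine ⟨t + 1, ?_⟩
      apply Nat.eq_of_testBit_eq
      intro j
      cases j with
      | zero => simp [Nat.testBit_xor]; omega
      | succ j =>
        rw [Nat.testBit_xor, Nat.testBit_succ, Nat.testBit_succ]
        have h1 : (u + 1) / 2 = u / 2 + 1 := by omega
        have h2 := congrArg (Nat.testBit · j) ht
        simp only [Nat.testBit_xor, Nat.testBit_two_pow_sub_one] at h2
        rw [h1, h2]
        simp only [Nat.testBit_two_pow_sub_one]
        rw [decide_eq_decide]
        omega

private lemma gray_succ (u : ℕ) : ∃ t, gray u ^^^ gray (u + 1) = 2 ^ t := by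
  obtain ⟨t, ht⟩ := xor_succ u
  refine ⟨t, ?_⟩
  apply Nat.eq_of_testBit_eq
  intro j
  have h1 := congrArg (Nat.testBit · j) ht
  have h2 := congrArg (Nat.testBit · (j + 1)) ht
  simp only [Nat.testBit_xor, Nat.testBit_two_pow_sub_one] at h1 h2
  simp only [gray, Nat.testBit_xor, Nat.testBit_div_two, Nat.testBit_two_pow]
  have e : ((u.testBit j ^^ u.testBit (j+1)) ^^ ((u+1).testBit j ^^ (u+1).testBit (j+1)))
      = ((u.testBit j ^^ (u+1).testBit j) ^^ (u.testBit (j+1) ^^ (u+1).testBit (j+1))) := by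
    cases u.testBit j <;> cases u.testBit (j+1) <;> cases (u+1).testBit j <;>
      cases (u+1).testBit (j+1) <;> rfl
  rw [e, h1, h2]
  rcases Nat.lt_trichotomy j t with h | h | h
  · simp [show j < t + 1 by omega, show j + 1 < t + 1 by omega, show ¬ t = j by omega]
  · simp [show j < t + 1 by omega, show ¬ j + 1 < t + 1 by omega, h]
  · simp [show ¬ j < t + 1 by omega, show ¬ j + 1 < t + 1 by omega, show ¬ t = j by omega]

private lemma gray_sep {u x : ℕ} (hxu : x ≠ u) (hxu1 : x ≠ u + 1) :
    ∃ j, (gray u).testBit j = (gray (u + 1)).testBit j ∧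
      (gray x).testBit j ≠ (gray u).testBit j := by
  obtain ⟨t, ht⟩ := gray_succ u
  have hbit : ∀ j, ((gray u).testBit j ^^ (gray (u + 1)).testBit j) = decide (t = j) := by
    intro j
    have := congrArg (Nat.testBit · j) ht
    simpa only [Nat.testBit_xor, Nat.testBit_two_pow] using this
  have hne : ∀ j, j ≠ t → (gray u).testBit j = (gray (u + 1)).testBit j := by
    intro j hj
    have := hbit j
    rw [decide_eq_false (by omega)] at this
    revert this
    cases (gray u).testBit j <;> cases (gray (u + 1)).testBit j <;> simp
  by_contra hcon
  push_neg at hcon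
  -- hcon : ∀ j, bits of gray u and gray (u+1) agree at j → gray x agrees with gray u at j
  by_cases hb : (gray x).testBit t = (gray u).testBit t
  · apply hxu
    apply gray_inj
    apply Nat.eq_of_testBit_eq
    intro j
    by_cases hj : j = t
    · rw [hj]; exact hb
    · exact hcon j (hne j hj)
  · apply hxu1
    apply gray_inj
    apply Nat.eq_of_testBit_eq
    intro j
    by_cases hj : j = t
    · subst hj
      have := hbit j
      rw [decide_eq_true rfl] at this
      revert this hb
      cases (gray x).testBit j <;> cases (gray u).testBit j <;>
        cases (gray (u + 1)).testBit j <;> simp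
    · rw [hcon j (hne j hj)]; exact hne j hj

private lemma gray_lt {k v : ℕ} (h : v < 2 ^ k) : gray v < 2 ^ k :=
  Nat.xor_lt_two_pow h (lt_of_le_of_lt (Nat.div_le_self _ _) h)

private def coverFam (n k : ℕ) : Fin (2 * k + 1) → Finset (Fin n) := fun i =>
  if (i : ℕ) < 2 * k then
    Finset.univ.filter (fun v : Fin n =>
      (gray v.val).testBit ((i : ℕ) / 2) = decide ((i : ℕ) % 2 = 1))
  else Finset.univ.filter (fun v : Fin n => v.val = 0 ∨ v.val = n - 1)

private lemma coverFam_key {n k : ℕ} (hn : 3 ≤ n) (hnk : n ≤ 2 ^ k)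
    {u v x : Fin n} (hv : (v : ℕ) = ((u : ℕ) + 1) % n) (hxu : x ≠ u) (hxv : x ≠ v) :
    ∃ i : Fin (2 * k + 1),
      u ∈ coverFam n k i ∧ v ∈ coverFam n k i ∧ x ∉ coverFam n k i := by
  rcases Nat.lt_or_ge ((u : ℕ) + 1) n with hlt | hge
  · -- non-wrap edge
    have hv' : (v : ℕ) = (u : ℕ) + 1 := by rw [hv, Nat.mod_eq_of_lt hlt]
    obtain ⟨j, hj1, hj2⟩ := gray_sep (u := (u : ℕ)) (x := (x : ℕ))
      (fun h => hxu (Fin.ext h)) (fun h => hxv (Fin.ext (by rw [hv']; exact h)))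
    have hjk : j < k := by
      by_contra hjk
      push_neg at hjk
      have hpow : (2 : ℕ) ^ k ≤ 2 ^ j := Nat.pow_le_pow_right (by norm_num) hjk
      have b1 : (gray (u : ℕ)).testBit j = false :=
        Nat.testBit_eq_false_of_lt (lt_of_lt_of_le (gray_lt (lt_of_lt_of_le u.isLt hnk)) hpow)
      have b2 : (gray (x : ℕ)).testBit j = false :=
        Nat.testBit_eq_false_of_lt (lt_of_lt_of_le (gray_lt (lt_of_lt_of_le x.isLt hnk)) hpow)
      rw [b1, b2] at hj2
      exact hj2 rfl
    set b := (gray (u : ℕ)).testBit j with hb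
    have hcond : (2 * j + (if b then 1 else 0)) < 2 * k := by split <;> omega
    have hlt' : (2 * j + (if b then 1 else 0)) < 2 * k + 1 := by omega
    have hdiv : (2 * j + (if b then 1 else 0)) / 2 = j := by split <;> omega
    have hmod : decide ((2 * j + (if b then 1 else 0)) % 2 = 1) = b := by
      cases b <;> simp <;> omega
    have hset : coverFam n k ⟨2 * j + (if b then 1 else 0), hlt'⟩ =
        Finset.univ.filter (fun w : Fin n => (gray w.val).testBit j = b) := by
      simp only [coverFam]
      rw [if_pos hcond, hdiv, hmod]
    refine ⟨⟨2 * j + (if b then 1 else 0), hlt'⟩, ?_, ?_, ?_⟩ <;>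
      rw [hset] <;> simp only [Finset.mem_filter, Finset.mem_univ, true_and]
    · exact hb.symm
    · rw [hv', ← hj1]
    · exact hj2
  · -- wrap edge
    have hu' : (u : ℕ) = n - 1 := by have := u.isLt; omega
    have hun : (u : ℕ) + 1 = n := by have := u.isLt; omega
    have hv' : (v : ℕ) = 0 := by rw [hv, hun, Nat.mod_self]
    have hset : coverFam n k ⟨2 * k, by omega⟩ =
        Finset.univ.filter (fun w : Fin n => w.val = 0 ∨ w.val = n - 1) := by
      simp only [coverFam]
      rw [if_neg (lt_irrefl _)]
    refine ⟨⟨2 * k, by omega⟩, ?_, ?_, ?_⟩ <;>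
      rw [hset] <;> simp only [Finset.mem_filter, Finset.mem_univ, true_and]
    · exact Or.inr hu'
    · exact Or.inl hv'
    · rintro (h | h)
      · exact hxv (Fin.ext (by rw [h, hv']))
      · exact hxu (Fin.ext (by rw [h, hu']))

private lemma covering_exists (n : ℕ) (hn : 3 ≤ n) :
    ∃ A : Fin (2 * Nat.clog 2 n + 1) → Finset (Fin n),
      IsCovering (SimpleGraph.cycleGraph n) 1 1 A := by
  have hnk : n ≤ 2 ^ Nat.clog 2 n := Nat.le_pow_clog one_lt_two n
  haveI : NeZero n := ⟨by omega⟩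
  refine ⟨coverFam n (Nat.clog 2 n), ?_⟩
  intro u v hadj W hW huW hvW
  obtain ⟨x, rfl⟩ := Finset.card_eq_one.mp hW
  rw [Finset.mem_singleton] at huW hvW
  rw [Finset.one_le_card]
  rw [SimpleGraph.cycleGraph_adj'] at hadj
  have hone : ((1 : Fin n) : ℕ) = 1 := by
    rw [Fin.val_one']; exact Nat.mod_eq_of_lt (by omega)
  rcases hadj with h | h
  · -- u = v + 1
    have h1 : u - v = 1 := Fin.ext (by rw [hone]; exact h)
    have h2 : u = v + 1 := by rw [eq_add_of_sub_eq h1, add_comm]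
    have hval : (u : ℕ) = ((v : ℕ) + 1) % n := by rw [h2, Fin.val_add, hone]
    obtain ⟨i, hvi, hui, hxi⟩ := coverFam_key hn hnk hval
      (fun hh => hvW (hh.symm)) (fun hh => huW (hh.symm))
    exact ⟨i, Finset.mem_filter.mpr ⟨Finset.mem_univ i,
      hui, hvi, Finset.disjoint_singleton_left.mpr hxi⟩⟩
  · -- v = u + 1
    have h1 : v - u = 1 := Fin.ext (by rw [hone]; exact h)
    have h2 : v = u + 1 := by rw [eq_add_of_sub_eq h1, add_comm]
    have hval : (v : ℕ) = ((u : ℕ) + 1) % n := by rw [h2, Fin.val_add, hone]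
    obtain ⟨i, hui, hvi, hxi⟩ := coverFam_key hn hnk hval
      (fun hh => huW (hh.symm)) (fun hh => hvW (hh.symm))
    exact ⟨i, Finset.mem_filter.mpr ⟨Finset.mem_univ i,
      hui, hvi, Finset.disjoint_singleton_left.mpr hxi⟩⟩

theorem stmt_16 (n : ℕ) (hn : 3 ≤ n) :
    RSperner n ≤ NGraphCov (SimpleGraph.cycleGraph n) 1 1 ∧
      NGraphCov (SimpleGraph.cycleGraph n) 1 1 ≤ 2 * Nat.clog 2 n + 1 := by
  have hex := covering_exists n hn
  constructor
  · have hne : {m : ℕ | ∃ A : Fin m → Finset (Fin n),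
        IsCovering (SimpleGraph.cycleGraph n) 1 1 A}.Nonempty := ⟨_, hex⟩
    set m := NGraphCov (SimpleGraph.cycleGraph n) 1 1 with hm
    have hmem : ∃ A : Fin m → Finset (Fin n),
        IsCovering (SimpleGraph.cycleGraph n) 1 1 A := Nat.sInf_mem hne
    obtain ⟨A, hA⟩ := hmem
    apply Nat.sInf_le
    show n ≤ Nat.choose m (m / 2)
    haveI : NeZero n := ⟨by omega⟩
    have hone : ((1 : Fin n) : ℕ) = 1 := by
      rw [Fin.val_one']; exact Nat.mod_eq_of_lt (by omega)
    set S : Fin n → Finset (Fin m) := fun x => Finset.univ.filter (fun j => x ∈ A j) with hS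
    have hstrict : ∀ x y : Fin n, x ≠ y → ¬ S x ⊆ S y := by
      intro x y hxy hsub
      have hp1 : (x + 1 : Fin n) ≠ x := by
        intro h
        have := congrArg Fin.val h
        rw [Fin.val_add, hone] at this
        have hx := x.isLt
        rcases Nat.lt_or_ge ((x : ℕ) + 1) n with hl | hl
        · rw [Nat.mod_eq_of_lt hl] at this; omega
        · have hxn : (x : ℕ) + 1 = n := by omega
          rw [hxn, Nat.mod_self] at this; omega
      have hm1 : (x - 1 : Fin n) ≠ x := by
        intro h
        have h' : (x + 1 : Fin n) = x := by
          conv_lhs => rw [← h]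
          rw [sub_add_cancel]
        exact hp1 h'
      have hpm : (x + 1 : Fin n) ≠ x - 1 := by
        intro h
        have h1 : (1 : Fin n) = -1 := by
          have := h
          rw [sub_eq_add_neg] at this
          exact add_left_cancel this
        have h2 : (1 : Fin n) + 1 = 0 := by
          nth_rewrite 2 [h1]
          exact add_neg_cancel 1
        have := congrArg Fin.val h2
        rw [Fin.val_add, hone, Nat.mod_eq_of_lt (by omega)] at this
        simp at this
      set v : Fin n := if y = x + 1 then x - 1 else x + 1 with hv
      have hvy : v ≠ y := by
        rw [hv]; split
        · rename_i hyy; rw [hyy]; exact fun hh => hpm hh.symm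
        · rename_i hyy; exact fun hh => hyy hh.symm
      have hadj : (SimpleGraph.cycleGraph n).Adj x v := by
        rw [SimpleGraph.cycleGraph_adj']
        rw [hv]; split
        · left
          have : x - (x - 1) = 1 := sub_sub_cancel x 1
          rw [this, hone]
        · right
          have : x + 1 - x = 1 := add_sub_cancel_left x 1
          rw [this, hone]
      have hvx : v ≠ x := by rw [hv]; split; exacts [hm1, hp1]
      have hcard := hA x v hadj {y} (Finset.card_singleton y)
        (by rw [Finset.mem_singleton]; exact hxy)
        (by rw [Finset.mem_singleton]; exact hvy)
      obtain ⟨j, hj⟩ := Finset.card_pos.mp (lt_of_lt_of_le Nat.zero_lt_one hcard)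
      rw [Finset.mem_filter] at hj
      obtain ⟨-, hxj, hvj, hdisj⟩ := hj
      have hyj : y ∉ A j := Finset.disjoint_singleton_left.mp hdisj
      have hjx : j ∈ S x := by rw [hS]; simp [hxj]
      have hjy := hsub hjx
      rw [hS] at hjy
      simp only [Finset.mem_filter, Finset.mem_univ, true_and] at hjy
      exact hyj hjy
    have hinj : Function.Injective S := by
      intro x y h
      by_contra hxy
      exact hstrict x y hxy (h ▸ subset_rfl)
    have hanti : IsAntichain (· ⊆ ·)
        ((Finset.univ.image S : Finset (Finset (Fin m))) : Set (Finset (Fin m))) := by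
      rintro a ha b hb hab hsub
      simp only [Finset.coe_image, Finset.coe_univ, Set.image_univ, Set.mem_range] at ha hb
      obtain ⟨x, rfl⟩ := ha
      obtain ⟨y, rfl⟩ := hb
      exact hstrict x y (fun h => hab (by rw [h])) hsub
    have hcard := IsAntichain.sperner hanti
    rwa [Finset.card_image_of_injective _ hinj, Finset.card_univ, Fintype.card_fin,
      Fintype.card_fin] at hcard
  · exact Nat.sInf_le hex
end

section
/- If G and H are finite graphs with minimum degree δ(G) ≥ 2 and δ(H) ≥ 2, then the key pool number of their Cartesian product satisfies N(G □ H) ≤ N(G) + N(H). -/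
lemma covering_exists_s17 {V : Type*} [Fintype V] [DecidableEq V] (G : SimpleGraph V) :
    ∃ A : Fin (Fintype.card (Finset V)) → Finset V, IsCovering G 1 1 A := by
  refine ⟨fun j => (Fintype.equivFin (Finset V)).symm j, ?_⟩
  intro u v _ W hW hu hv
  rw [Finset.one_le_card]
  refine ⟨Fintype.equivFin (Finset V) {u, v}, ?_⟩
  simp only [Finset.mem_filter, Finset.mem_univ, true_and, Equiv.symm_apply_apply]
  refine ⟨by simp, by simp, ?_⟩
  rw [Finset.disjoint_left]
  intro x hx hx'
  rcases Finset.mem_insert.mp hx' with h | h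
  · exact hu (h ▸ hx)
  · exact hv ((Finset.mem_singleton.mp h) ▸ hx)

lemma covering_set_nonempty {V : Type*} [Fintype V] [DecidableEq V] (G : SimpleGraph V) :
    {n : ℕ | ∃ A : Fin n → Finset V, IsCovering G 1 1 A}.Nonempty :=
  ⟨_, covering_exists_s17 G⟩

lemma exists_mem_not_mem {V : Type*} [Fintype V] [DecidableEq V] {G : SimpleGraph V}
    [DecidableRel G.Adj] {n : ℕ} {A : Fin n → Finset V} (hA : IsCovering G 1 1 A)
    {b : V} (hdeg : 2 ≤ G.degree b) (x : V) (hx : x ≠ b) :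
    ∃ j, b ∈ A j ∧ x ∉ A j := by
  have h2 : 1 < (G.neighborFinset b).card := by
    rwa [SimpleGraph.card_neighborFinset_eq_degree]
  obtain ⟨c, hc, hcx⟩ := Finset.exists_mem_ne h2 x
  have hadj : G.Adj b c := (SimpleGraph.mem_neighborFinset _ _ _).mp hc
  have := hA b c hadj {x} (Finset.card_singleton x)
    (by simpa using (Ne.symm hx)) (by simpa using hcx)
  rw [Finset.one_le_card] at this
  obtain ⟨j, hj⟩ := this
  simp only [Finset.mem_filter, Finset.disjoint_singleton_left] at hj
  exact ⟨j, hj.2.1, hj.2.2.2⟩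

theorem stmt_17 {α β : Type*} [Fintype α] [DecidableEq α] [Fintype β]
    [DecidableEq β] (G : SimpleGraph α) (H : SimpleGraph β)
    [DecidableRel G.Adj] [DecidableRel H.Adj]
    (hG : ∀ a : α, 2 ≤ G.degree a) (hH : ∀ b : β, 2 ≤ H.degree b) :
    NGraphCov (G.boxProd H) 1 1 ≤ NGraphCov G 1 1 + NGraphCov H 1 1 := by
  obtain ⟨A, hA⟩ : NGraphCov G 1 1 ∈ {n : ℕ | ∃ A : Fin n → Finset α, IsCovering G 1 1 A} :=
    Nat.sInf_mem (covering_set_nonempty G)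
  obtain ⟨B, hB⟩ : NGraphCov H 1 1 ∈ {n : ℕ | ∃ A : Fin n → Finset β, IsCovering H 1 1 A} :=
    Nat.sInf_mem (covering_set_nonempty H)
  apply Nat.sInf_le
  refine ⟨Fin.addCases (fun i => A i ×ˢ Finset.univ) (fun i => Finset.univ ×ˢ B i), ?_⟩
  rintro ⟨u, b⟩ ⟨v, c⟩ hadj W hW huW hvW
  obtain ⟨x, hWx⟩ := Finset.card_eq_one.mp hW
  subst hWx
  obtain ⟨x1, x2⟩ := x
  rw [Finset.one_le_card]
  rw [Finset.mem_singleton] at huW hvW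
  rw [SimpleGraph.boxProd_adj] at hadj
  rcases hadj with ⟨hGuv, hbc⟩ | ⟨hHbc, huv⟩
  · -- edge in G direction
    dsimp at hGuv hbc
    by_cases hx1 : x1 ≠ u ∧ x1 ≠ v
    · have := hA u v hGuv {x1} (Finset.card_singleton x1)
        (by simpa using hx1.1.symm) (by simpa using hx1.2.symm)
      rw [Finset.one_le_card] at this
      obtain ⟨j, hj⟩ := this
      simp only [Finset.mem_filter, Finset.disjoint_singleton_left] at hj
      refine ⟨Fin.castAdd _ j, ?_⟩
      simp only [Finset.mem_filter, Finset.mem_univ, true_and, Fin.addCases_left,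
        Finset.mem_product, Finset.disjoint_singleton_left]
      exact ⟨⟨hj.2.1, trivial⟩, ⟨hj.2.2.1, trivial⟩, fun hm => hj.2.2.2 hm.1⟩
    · push_neg at hx1
      have hx2 : x2 ≠ b := by
        by_cases h : x1 = u
        · intro h2; exact huW (by rw [h, h2])
        · intro h2; exact hvW (by rw [hx1 h, h2, hbc])
      obtain ⟨j, hbj, hxj⟩ := exists_mem_not_mem hB (hH b) x2 hx2
      refine ⟨Fin.natAdd _ j, ?_⟩
      simp only [Finset.mem_filter, Finset.mem_univ, true_and, Fin.addCases_right,
        Finset.mem_product, Finset.disjoint_singleton_left]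
      exact ⟨hbj, hbc ▸ hbj, hxj⟩
  · -- edge in H direction
    dsimp at hHbc huv
    by_cases hx2 : x2 ≠ b ∧ x2 ≠ c
    · have := hB b c hHbc {x2} (Finset.card_singleton x2)
        (by simpa using hx2.1.symm) (by simpa using hx2.2.symm)
      rw [Finset.one_le_card] at this
      obtain ⟨j, hj⟩ := this
      simp only [Finset.mem_filter, Finset.disjoint_singleton_left] at hj
      refine ⟨Fin.natAdd _ j, ?_⟩
      simp only [Finset.mem_filter, Finset.mem_univ, true_and, Fin.addCases_right,
        Finset.mem_product, Finset.disjoint_singleton_left]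
      exact ⟨hj.2.1, hj.2.2.1, hj.2.2.2⟩
    · push_neg at hx2
      have hx1 : x1 ≠ u := by
        by_cases h : x2 = b
        · intro h2; exact huW (by rw [h, h2])
        · intro h2; exact hvW (by rw [hx2 h, h2, huv])
      obtain ⟨j, huj, hxj⟩ := exists_mem_not_mem hA (hG u) x1 hx1
      refine ⟨Fin.castAdd _ j, ?_⟩
      simp only [Finset.mem_filter, Finset.mem_univ, true_and, Fin.addCases_left,
        Finset.mem_product, Finset.disjoint_singleton_left]
      exact ⟨⟨huj, trivial⟩, ⟨huv ▸ huj, trivial⟩, fun hm => hxj hm.1⟩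
end
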